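/- arXiv:2007.04804 — 4 statements merged into one kernel-verified Lean document; each statement's English description precedes it below -/
import Mathlib

section
/- Let T₁, T₂ ∈ B_A(H) and set P = T₁^{#_A}T₁ + T₂T₂^{#_A}. Then w_𝔸([[O, T₁],[T₂, O]])⁴ ≤ (1/16)‖P‖_A² + (1/4)w_A(T₂T₁)² + (1/8)w_A(P T₂T₁ + T₂T₁ P). -/
noncomputable section

open ContinuousLinearMap

/-- The semi-inner product induced by a positive operator `A`: `⟪x, y⟫_A = ⟪A x, y⟫`. -/
def sInnerA {E : Type*} [NormedAddCommGroup E] [InnerProductSpace ℂ E]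
    (A : E →L[ℂ] E) (x y : E) : ℂ :=
  inner ℂ (A x) y

/-- The seminorm induced by `A`: `‖x‖_A = √(re ⟪A x, x⟫)`. -/
def sNormA {E : Type*} [NormedAddCommGroup E] [InnerProductSpace ℂ E]
    (A : E →L[ℂ] E) (x : E) : ℝ :=
  Real.sqrt (sInnerA A x x).re

/-- The `A`-operator seminorm: `sup {‖T x‖_A : x ∈ closure (range A), ‖x‖_A = 1}`. -/
def opNormA {E : Type*} [NormedAddCommGroup E] [InnerProductSpace ℂ E]
    (A T : E →L[ℂ] E) : ℝ :=
  sSup {r | ∃ x ∈ closure (Set.range A), sNormA A x = 1 ∧ r = sNormA A (T x)}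

/-- The `A`-numerical radius: `sup {|⟪T x, x⟫_A| : ‖x‖_A = 1}`. -/
def wA {E : Type*} [NormedAddCommGroup E] [InnerProductSpace ℂ E]
    (A T : E →L[ℂ] E) : ℝ :=
  sSup {r | ∃ x, sNormA A x = 1 ∧ r = ‖sInnerA A (T x) x‖}

/-- The `A`-Crawford number: `inf {|⟪T x, x⟫_A| : ‖x‖_A = 1}`. -/
def cA {E : Type*} [NormedAddCommGroup E] [InnerProductSpace ℂ E]
    (A T : E →L[ℂ] E) : ℝ :=
  sInf {r | ∃ x, sNormA A x = 1 ∧ r = ‖sInnerA A (T x) x‖}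

/-- `T ∈ B_A(H)`, i.e. the range of `T* A` is contained in the range of `A`. -/
def memBA {E : Type*} [NormedAddCommGroup E] [InnerProductSpace ℂ E] [CompleteSpace E]
    (A T : E →L[ℂ] E) : Prop :=
  Set.range ((adjoint T) ∘L A) ⊆ Set.range A

/-- `S` is the distinguished `A`-adjoint `T^{#_A}` of `T`:
`A ∘ S = T* ∘ A` and `R(S) ⊆ closure (R(A))`. -/
def IsSharpA {E : Type*} [NormedAddCommGroup E] [InnerProductSpace ℂ E] [CompleteSpace E]
    (A T S : E →L[ℂ] E) : Prop :=
  A ∘L S = (adjoint T) ∘L A ∧ Set.range S ⊆ closure (Set.range A)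

/-- The `2 × 2` operator matrix `[[X, Y], [Z, W]]` acting blockwise on
the Hilbert space direct sum `H ⊕ H`. -/
def blk2 {H : Type*} [NormedAddCommGroup H] [InnerProductSpace ℂ H]
    (X Y Z W : H →L[ℂ] H) : WithLp 2 (H × H) →L[ℂ] WithLp 2 (H × H) :=
  ((WithLp.prodContinuousLinearEquiv 2 ℂ H H).symm : (H × H) →L[ℂ] WithLp 2 (H × H)) ∘L
    ((X ∘L ContinuousLinearMap.fst ℂ H H + Y ∘L ContinuousLinearMap.snd ℂ H H).prod
      (Z ∘L ContinuousLinearMap.fst ℂ H H + W ∘L ContinuousLinearMap.snd ℂ H H)) ∘L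
    ((WithLp.prodContinuousLinearEquiv 2 ℂ H H) : WithLp 2 (H × H) →L[ℂ] H × H)


set_option linter.unusedSectionVars false
set_option maxHeartbeats 1000000

namespace StmtAux

lemma exists_unimodular (z : ℂ) : ∃ u : ℂ, ‖u‖ = 1 ∧ u * z = (‖z‖ : ℂ) := by
  rcases eq_or_ne z 0 with h | h
  · exact ⟨1, by simp [h]⟩
  · have hr : (‖z‖ : ℂ) ≠ 0 := by
      simpa using (norm_ne_zero_iff.mpr h)
    refine ⟨(starRingEnd ℂ) z / (‖z‖ : ℂ), ?_, ?_⟩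
    · simp [map_div₀, h]
    · calc (starRingEnd ℂ) z / (‖z‖ : ℂ) * z
          = z * (starRingEnd ℂ) z / (‖z‖ : ℂ) := by ring
        _ = ((Complex.normSq z : ℝ) : ℂ) / (‖z‖ : ℂ) := by rw [Complex.mul_conj]
        _ = (‖z‖ : ℂ)^2 / (‖z‖ : ℂ) := by
            rw [Complex.normSq_eq_norm_sq]; push_cast; ring
        _ = (‖z‖ : ℂ) := by rw [sq, mul_div_assoc, div_self hr, mul_one]

variable {H : Type*} [NormedAddCommGroup H] [InnerProductSpace ℂ H] [CompleteSpace H]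
variable {A : H →L[ℂ] H}

lemma sInnerA_comm (hsa : IsSelfAdjoint A) (x y : H) : sInnerA A x y = inner ℂ x (A y) := by
  rw [sInnerA, ← ContinuousLinearMap.adjoint_inner_left, hsa.adjoint_eq]

lemma sInnerA_conj (hsa : IsSelfAdjoint A) (x y : H) :
    sInnerA A y x = (starRingEnd ℂ) (sInnerA A x y) := by
  rw [sInnerA_comm hsa, sInnerA, ← inner_conj_symm]

lemma sInnerA_add_left (x y z : H) :
    sInnerA A (x + y) z = sInnerA A x z + sInnerA A y z := by
  simp [sInnerA, inner_add_left]

lemma sInnerA_add_right (x y z : H) :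
    sInnerA A x (y + z) = sInnerA A x y + sInnerA A x z := by
  simp [sInnerA, inner_add_right]

lemma sInnerA_smul_left (c : ℂ) (x z : H) :
    sInnerA A (c • x) z = (starRingEnd ℂ) c * sInnerA A x z := by
  simp [sInnerA, inner_smul_left, mul_comm]

lemma sInnerA_smul_right (c : ℂ) (x z : H) :
    sInnerA A x (c • z) = c * sInnerA A x z := by
  simp [sInnerA, inner_smul_right]

lemma sInnerA_self_re_nonneg (hA : A.IsPositive) (x : H) : 0 ≤ (sInnerA A x x).re := hA.2 x

lemma sInnerA_self_eq_re (hA : A.IsPositive) (x : H) :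
    sInnerA A x x = ((sInnerA A x x).re : ℂ) :=
  (Complex.conj_eq_iff_re.mp (sInnerA_conj hA.isSelfAdjoint x x).symm).symm

lemma sNormA_nonneg (x : H) : 0 ≤ sNormA A x := Real.sqrt_nonneg _

lemma sq_sNormA (hA : A.IsPositive) (x : H) : sNormA A x ^ 2 = (sInnerA A x x).re :=
  Real.sq_sqrt (hA.2 x)

lemma sNormA_smul (hA : A.IsPositive) (c : ℂ) (x : H) :
    sNormA A (c • x) = ‖c‖ * sNormA A x := by
  have h : sInnerA A (c • x) (c • x) = ((‖c‖ ^ 2 : ℝ) : ℂ) * sInnerA A x x := by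
    rw [sInnerA_smul_left, sInnerA_smul_right, ← mul_assoc, Complex.conj_mul']
    norm_cast
  rw [sNormA, sNormA, h, Complex.re_ofReal_mul, Real.sqrt_mul (by positivity)]
  congr 1
  rw [Real.sqrt_sq (norm_nonneg c)]


/-- Cauchy–Schwarz for the semi-inner product. -/
lemma abs_sInnerA_le (hA : A.IsPositive) (x y : H) :
    ‖sInnerA A x y‖ ≤ sNormA A x * sNormA A y := by
  set z := sInnerA A x y with hz
  obtain ⟨u, hu1, huz⟩ := exists_unimodular z
  obtain ⟨x', hx'⟩ : ∃ w, w = (starRingEnd ℂ) u • x := ⟨_, rfl⟩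
  have hax' : sInnerA A x' y = (‖z‖ : ℂ) := by
    rw [hx', sInnerA_smul_left, Complex.conj_conj, ← hz, huz]
  set a := (sInnerA A x x).re with ha
  set b := (sInnerA A y y).re with hb
  have hxx' : sInnerA A x' x' = (a : ℂ) := by
    rw [hx', sInnerA_smul_left, sInnerA_smul_right, ← mul_assoc, Complex.conj_conj,
      Complex.mul_conj, Complex.normSq_eq_norm_sq, hu1]
    norm_num
    exact sInnerA_self_eq_re hA x
  have hyy : sInnerA A y y = (b : ℂ) := sInnerA_self_eq_re hA y
  have hyx' : sInnerA A y x' = (‖z‖ : ℂ) := by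
    rw [sInnerA_conj hA.isSelfAdjoint x' y, hax', Complex.conj_ofReal]
  have ha0 : 0 ≤ a := hA.2 x
  have hb0 : 0 ≤ b := hA.2 y
  have key : ∀ t : ℝ, 0 ≤ a * t^2 + 2 * ‖z‖ * t + b := by
    intro t
    have h0 : 0 ≤ (sInnerA A ((t:ℂ) • x' + y) ((t:ℂ) • x' + y)).re := hA.2 _
    have e1 : sInnerA A ((t:ℂ) • x' + y) ((t:ℂ) • x' + y)
        = ((a * t^2 + 2 * ‖z‖ * t + b : ℝ) : ℂ) := by
      simp only [sInnerA_add_left, sInnerA_add_right, sInnerA_smul_left, sInnerA_smul_right]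
      rw [hax', hyx', hxx', hyy, Complex.conj_ofReal]
      push_cast
      ring
    rw [e1, Complex.ofReal_re] at h0
    exact h0
  have habz : ‖z‖ ^ 2 ≤ a * b := by
    rcases eq_or_lt_of_le ha0 with haz | hap
    · have hz0 : ‖z‖ = 0 := by
        by_contra hne
        have hpos : 0 < ‖z‖ := lt_of_le_of_ne (norm_nonneg z) (Ne.symm hne)
        have hk := key (-(b + 1) / (2 * ‖z‖))
        rw [← haz] at hk
        field_simp at hk
        nlinarith
      rw [hz0]
      exact le_trans (by norm_num) (mul_nonneg ha0 hb0)
    · have ha' : a ≠ 0 := ne_of_gt hap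
      have hk := key (-(‖z‖) / a)
      have h2 : a * (-(‖z‖) / a)^2 = ‖z‖ ^ 2 / a := by
        field_simp [ha']
      have h3 : 2 * ‖z‖ * (-(‖z‖) / a) = -(2 * (‖z‖ ^ 2 / a)) := by
        field_simp
      have h4 : ‖z‖ ^ 2 / a ≤ b := by rw [h2, h3] at hk; linarith
      calc ‖z‖ ^ 2 = (‖z‖ ^2 / a) * a := by field_simp
        _ ≤ b * a := mul_le_mul_of_nonneg_right h4 hap.le
        _ = a * b := mul_comm _ _
  calc ‖z‖ = Real.sqrt (‖z‖ ^ 2) := by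
        rw [Real.sqrt_sq (norm_nonneg z)]
    _ ≤ Real.sqrt (a * b) := Real.sqrt_le_sqrt habz
    _ = sNormA A x * sNormA A y := by rw [Real.sqrt_mul ha0, sNormA, sNormA, ← ha, ← hb]

lemma abs_sInnerA_le' (hA : A.IsPositive) (x y : H) :
    |(sInnerA A x y).re| ≤ sNormA A x * sNormA A y :=
  le_trans (Complex.abs_re_le_norm _) (abs_sInnerA_le hA x y)

lemma sNormA_add_le (hA : A.IsPositive) (x y : H) :
    sNormA A (x + y) ≤ sNormA A x + sNormA A y := by
  have hexp : (sInnerA A (x+y) (x+y)).re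
      = (sInnerA A x x).re + 2 * (sInnerA A x y).re + (sInnerA A y y).re := by
    rw [sInnerA_add_left, sInnerA_add_right, sInnerA_add_right,
      sInnerA_conj hA.isSelfAdjoint x y]
    simp [Complex.add_re, Complex.conj_re]
    ring
  have h1 : (sInnerA A (x+y) (x+y)).re ≤ (sNormA A x + sNormA A y)^2 := by
    rw [hexp]
    have := abs_sInnerA_le' hA x y
    have hx2 := sq_sNormA hA x
    have hy2 := sq_sNormA hA y
    nlinarith [abs_le.mp this]
  rw [sNormA]
  calc Real.sqrt (sInnerA A (x+y) (x+y)).re ≤ Real.sqrt ((sNormA A x + sNormA A y)^2) :=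
        Real.sqrt_le_sqrt h1
    _ = sNormA A x + sNormA A y := Real.sqrt_sq (add_nonneg (sNormA_nonneg _) (sNormA_nonneg _))

lemma sNormA_eq_zero_imp (hA : A.IsPositive) {x : H} (hx : sNormA A x = 0) : A x = 0 := by
  have h : ‖sInnerA A x (A x)‖ ≤ 0 := by
    have := abs_sInnerA_le hA x (A x)
    rw [hx] at this; simpa using this
  have h2 : (inner ℂ (A x) (A x) : ℂ) = 0 := by
    have := le_antisymm h (norm_nonneg _)
    rwa [norm_eq_zero] at this
  exact inner_self_eq_zero.mp h2

lemma sNormA_comp_zero (hA : A.IsPositive) {x : H} (hx : sNormA A x = 0) (R : H →L[ℂ] H)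
    (C : ℝ) (hb : ∀ z, sNormA A (R z) ≤ C * sNormA A z) : sNormA A (R x) = 0 :=
  le_antisymm (by simpa [hx] using hb x) (sNormA_nonneg _)


/-- `R'` is an `A`-adjoint of `R`. -/
def AdjPair (A R R' : H →L[ℂ] H) : Prop := A ∘L R' = adjoint R ∘L A

lemma AdjPair.flip (hsa : IsSelfAdjoint A) {R R' : H →L[ℂ] H} (h : AdjPair A R R') :
    AdjPair A R' R := by
  have h2 := congrArg adjoint h
  rw [adjoint_comp, adjoint_comp, adjoint_adjoint, hsa.adjoint_eq] at h2
  exact h2.symm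

lemma AdjPair.sInner_left {R R' : H →L[ℂ] H} (h : AdjPair A R R') (x y : H) :
    sInnerA A (R' x) y = sInnerA A x (R y) := by
  have : A (R' x) = (adjoint R) (A x) := by
    have := congrArg (fun (T : H →L[ℂ] H) => T x) h
    simpa using this
  rw [sInnerA, this, ContinuousLinearMap.adjoint_inner_left, sInnerA]

lemma AdjPair.sInner_right (hsa : IsSelfAdjoint A) {R R' : H →L[ℂ] H}
    (h : AdjPair A R R') (x y : H) :
    sInnerA A (R x) y = sInnerA A x (R' y) :=
  (h.flip hsa).sInner_left x y

lemma AdjPair.comp {R R' Q Q' : H →L[ℂ] H} (hR : AdjPair A R R') (hQ : AdjPair A Q Q') :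
    AdjPair A (R ∘L Q) (Q' ∘L R') := by
  rw [AdjPair, ← ContinuousLinearMap.comp_assoc, hQ, ContinuousLinearMap.comp_assoc, hR,
    ← ContinuousLinearMap.comp_assoc, ← adjoint_comp]

lemma AdjPair.add {R R' Q Q' : H →L[ℂ] H} (hR : AdjPair A R R') (hQ : AdjPair A Q Q') :
    AdjPair A (R + Q) (R' + Q') := by
  rw [AdjPair, ContinuousLinearMap.comp_add, hR, hQ, map_add, ContinuousLinearMap.add_comp]

lemma AdjPair.smul (c : ℂ) {R R' : H →L[ℂ] H} (hR : AdjPair A R R') :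
    AdjPair A (c • R) ((starRingEnd ℂ) c • R') := by
  have hadj : adjoint (c • R) = (starRingEnd ℂ) c • adjoint R := by
    rw [← ContinuousLinearMap.star_eq_adjoint, ← ContinuousLinearMap.star_eq_adjoint, star_smul]
    rfl
  rw [AdjPair, ContinuousLinearMap.comp_smul, hR, hadj, ContinuousLinearMap.smul_comp]

lemma AdjPair.pow {S : H →L[ℂ] H} (h : AdjPair A S S) (m : ℕ) : AdjPair A (S^m) (S^m) := by
  induction m with
  | zero =>
      rw [AdjPair, pow_zero, ContinuousLinearMap.one_def, adjoint_id]
      simp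
  | succ k ih =>
      have h2 := ih.comp h
      rwa [← ContinuousLinearMap.mul_def, ← ContinuousLinearMap.mul_def, ← pow_succ,
        ← pow_succ'] at h2

lemma sNormA_le_norm (hA : A.IsPositive) (x : H) :
    sNormA A x ≤ Real.sqrt ‖A‖ * ‖x‖ := by
  have h1 : (sInnerA A x x).re ≤ ‖A‖ * ‖x‖^2 := by
    calc (sInnerA A x x).re ≤ |(sInnerA A x x).re| := le_abs_self _
      _ ≤ ‖sInnerA A x x‖ := Complex.abs_re_le_norm _
      _ ≤ ‖A x‖ * ‖x‖ := by
          rw [sInnerA]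
          simpa using norm_inner_le_norm (𝕜 := ℂ) (A x) x
      _ ≤ ‖A‖ * ‖x‖ * ‖x‖ := by
          have := A.le_opNorm x
          nlinarith [norm_nonneg x]
      _ = ‖A‖ * ‖x‖^2 := by ring
  rw [sNormA]
  calc Real.sqrt (sInnerA A x x).re ≤ Real.sqrt (‖A‖ * ‖x‖^2) := Real.sqrt_le_sqrt h1
    _ = Real.sqrt ‖A‖ * ‖x‖ := by
        rw [Real.sqrt_mul (norm_nonneg A), Real.sqrt_sq (norm_nonneg x)]

/-- Key boundedness lemma, self-adjoint case. -/
lemma selfadj_bound (hA : A.IsPositive) {S : H →L[ℂ] H} (h : AdjPair A S S) (x : H) :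
    sNormA A (S x) ≤ ‖S‖ * sNormA A x := by
  -- iterate claim
  have claim : ∀ k : ℕ, sNormA A (S x) ^ (2^k) ≤ sNormA A ((S^(2^k)) x) * sNormA A x ^ (2^k - 1) := by
    intro k
    induction k with
    | zero => simp [pow_one]
    | succ k ih =>
        set m := 2^k with hm
        have hm1 : 1 ≤ m := Nat.one_le_two_pow
        have step : sNormA A ((S^m) x)^2 ≤ sNormA A x * sNormA A ((S^(2*m)) x) := by
          have hpair := h.pow m
          have e1 : sNormA A ((S^m) x)^2 = (sInnerA A ((S^m) x) ((S^m) x)).re :=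
            sq_sNormA hA _
          have e2 : sInnerA A ((S^m) x) ((S^m) x) = sInnerA A x ((S^(2*m)) x) := by
            rw [hpair.sInner_right hA.isSelfAdjoint]
            congr 1
            rw [← ContinuousLinearMap.comp_apply, ← mul_def, ← pow_add]
            congr 1
            ring
          rw [e1, e2]
          calc (sInnerA A x ((S^(2*m)) x)).re ≤ |(sInnerA A x ((S^(2*m)) x)).re| := le_abs_self _
            _ ≤ sNormA A x * sNormA A ((S^(2*m)) x) := abs_sInnerA_le' hA _ _
        calc sNormA A (S x) ^ (2^(k+1)) = (sNormA A (S x) ^ m)^2 := by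
              rw [← pow_mul]; congr 1
          _ ≤ (sNormA A ((S^m) x) * sNormA A x ^ (m - 1))^2 := by
              exact pow_le_pow_left₀ (pow_nonneg (sNormA_nonneg _) m) ih 2
          _ = sNormA A ((S^m) x)^2 * (sNormA A x ^ (m-1))^2 := by ring
          _ ≤ (sNormA A x * sNormA A ((S^(2*m)) x)) * (sNormA A x ^ (m-1))^2 := by
              apply mul_le_mul_of_nonneg_right step (sq_nonneg _)
          _ = sNormA A ((S^(2*m)) x) * (sNormA A x * (sNormA A x^(m-1))^2) := by ring
          _ = sNormA A ((S^(2^(k+1))) x) * sNormA A x ^ (2^(k+1) - 1) := by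
              have h2m : 2 * m = 2^(k+1) := by rw [hm, pow_succ]; ring
              rw [h2m]
              congr 1
              rw [← pow_mul, ← pow_succ']
              congr 1
              omega
  -- edge cases
  rcases eq_or_ne (sNormA A x) 0 with hx0 | hx0
  · have h1 := claim 1
    rw [hx0] at h1
    norm_num at h1
    have h2 : sNormA A (S x) = 0 := by nlinarith [sNormA_nonneg (A := A) (S x), h1]
    rw [h2, hx0]; norm_num
  · have hxpos : 0 < sNormA A x := lt_of_le_of_ne (sNormA_nonneg x) (Ne.symm hx0)
    rcases eq_or_ne S 0 with hS0 | hS0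
    · rw [hS0]
      simp only [ContinuousLinearMap.zero_apply, norm_zero, zero_mul]
      have : sNormA A (0 : H) = 0 := by
        rw [sNormA]
        simp [sInnerA]
      rw [this]
    · have hSpos : 0 < ‖S‖ := norm_pos_iff.mpr hS0
      by_contra hcon
      push_neg at hcon
      set B := ‖S‖ * sNormA A x with hB
      have hBpos : 0 < B := mul_pos hSpos hxpos
      set ρ := sNormA A (S x) / B with hρ
      have hρ1 : 1 < ρ := (one_lt_div hBpos).mpr hcon
      set K := Real.sqrt ‖A‖ * ‖x‖ / sNormA A x with hK
      have bound : ∀ k : ℕ, ρ ^ (2^k) ≤ K := by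
        intro k
        set m := 2^k with hm
        have hm1 : 1 ≤ m := Nat.one_le_two_pow
        have h1 := claim k
        have h2 : sNormA A ((S^m) x) ≤ Real.sqrt ‖A‖ * (‖S‖^m * ‖x‖) := by
          calc sNormA A ((S^m) x) ≤ Real.sqrt ‖A‖ * ‖(S^m) x‖ := sNormA_le_norm hA _
            _ ≤ Real.sqrt ‖A‖ * (‖S^m‖ * ‖x‖) := by
                apply mul_le_mul_of_nonneg_left ((S^m).le_opNorm x) (Real.sqrt_nonneg _)
            _ ≤ Real.sqrt ‖A‖ * (‖S‖^m * ‖x‖) := by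
                apply mul_le_mul_of_nonneg_left _ (Real.sqrt_nonneg _)
                apply mul_le_mul_of_nonneg_right (norm_pow_le' S (by omega)) (norm_nonneg x)
        have h3 : sNormA A (S x) ^ m ≤ Real.sqrt ‖A‖ * (‖S‖^m * ‖x‖) * sNormA A x ^ (m-1) := by
          calc sNormA A (S x) ^ m ≤ sNormA A ((S^m) x) * sNormA A x ^ (m - 1) := h1
            _ ≤ Real.sqrt ‖A‖ * (‖S‖^m * ‖x‖) * sNormA A x ^ (m-1) := by
                apply mul_le_mul_of_nonneg_right h2 (pow_nonneg (sNormA_nonneg _) _)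
        -- divide by B^m
        have hBm : B^m = ‖S‖^m * sNormA A x^m := by rw [hB, mul_pow]
        have hxm : sNormA A x ^ m = sNormA A x ^ (m-1) * sNormA A x := by
          rw [← pow_succ]
          congr 1
          omega
        have h4 : (ρ * B)^m ≤ K * B^m := by
          have hρB : ρ * B = sNormA A (S x) := by
            rw [hρ]; field_simp
          rw [hρB, hBm, hK, hxm]
          calc sNormA A (S x)^m ≤ Real.sqrt ‖A‖ * (‖S‖^m * ‖x‖) * sNormA A x ^ (m-1) := h3
            _ = Real.sqrt ‖A‖ * ‖x‖ / sNormA A x * (‖S‖ ^ m * (sNormA A x ^ (m - 1) * sNormA A x)) := by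
                field_simp
        have h5 : ρ^m * B^m ≤ K * B^m := by rw [← mul_pow]; exact h4
        have hBmpos : 0 < B^m := by positivity
        exact le_of_mul_le_mul_right h5 hBmpos
      obtain ⟨n, hn⟩ := pow_unbounded_of_one_lt K hρ1
      have : ρ ^ n ≤ ρ ^ (2^n) := pow_le_pow_right₀ (le_of_lt hρ1) (le_of_lt (Nat.lt_two_pow_self (n := n)))
      exact absurd (le_trans this (bound n)) (not_le.mpr hn)


def wASet (A T : H →L[ℂ] H) : Set ℝ :=
  {r | ∃ x, sNormA A x = 1 ∧ r = ‖sInnerA A (T x) x‖}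

lemma wA_eq (A T : H →L[ℂ] H) : wA A T = sSup (wASet A T) := rfl

lemma wA_nonneg (A T : H →L[ℂ] H) : 0 ≤ wA A T := by
  apply Real.sSup_nonneg
  rintro r ⟨x, -, rfl⟩
  exact norm_nonneg _

lemma wASet_bddAbove (hA : A.IsPositive) {T : H →L[ℂ] H} {C : ℝ}
    (hb : ∀ z, sNormA A (T z) ≤ C * sNormA A z) : BddAbove (wASet A T) := by
  refine ⟨C, ?_⟩
  rintro r ⟨x, hx1, rfl⟩
  calc ‖sInnerA A (T x) x‖ ≤ sNormA A (T x) * sNormA A x := abs_sInnerA_le hA _ _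
    _ ≤ (C * sNormA A x) * sNormA A x := mul_le_mul_of_nonneg_right (hb x) (sNormA_nonneg _)
    _ = C := by rw [hx1]; ring

lemma le_wA (hA : A.IsPositive) {T : H →L[ℂ] H} {C : ℝ}
    (hb : ∀ z, sNormA A (T z) ≤ C * sNormA A z) (y : H) :
    ‖sInnerA A (T y) y‖ ≤ wA A T * sNormA A y ^ 2 := by
  rcases eq_or_ne (sNormA A y) 0 with hy0 | hy0
  · have h1 : ‖sInnerA A (T y) y‖ ≤ 0 := by
      calc ‖sInnerA A (T y) y‖ ≤ sNormA A (T y) * sNormA A y := abs_sInnerA_le hA _ _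
        _ = 0 := by rw [hy0, mul_zero]
    rw [hy0]
    calc ‖sInnerA A (T y) y‖ ≤ 0 := h1
      _ ≤ wA A T * 0^2 := by norm_num
  · have hpos : 0 < sNormA A y := lt_of_le_of_ne (sNormA_nonneg _) (Ne.symm hy0)
    set t := sNormA A y with ht
    set y' := ((t⁻¹ : ℝ) : ℂ) • y with hy'
    have hn1 : sNormA A y' = 1 := by
      rw [hy', sNormA_smul hA]
      rw [Complex.norm_real, Real.norm_eq_abs, abs_inv, abs_of_pos hpos, ← ht]
      field_simp
    have hmem : ‖sInnerA A (T y') y'‖ ∈ wASet A T := ⟨y', hn1, rfl⟩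
    have hval : ‖sInnerA A (T y') y'‖ = t⁻¹^2 * ‖sInnerA A (T y) y‖ := by
      rw [hy', map_smul, sInnerA_smul_left, sInnerA_smul_right, ← mul_assoc]
      rw [norm_mul, norm_mul]
      rw [Complex.norm_conj, Complex.norm_real, Real.norm_eq_abs, abs_inv, abs_of_pos hpos]
      ring
    have hle := le_csSup (wASet_bddAbove hA hb) hmem
    rw [hval] at hle
    rw [← wA_eq] at hle
    have h2 : ‖sInnerA A (T y) y‖ = t^2 * (t⁻¹^2 * ‖sInnerA A (T y) y‖) := by
      field_simp
    rw [h2]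
    calc t^2 * (t⁻¹^2 * ‖sInnerA A (T y) y‖) ≤ t^2 * wA A T := by
          apply mul_le_mul_of_nonneg_left hle (by positivity)
      _ = wA A T * t^2 := by ring

def opASet (A T : H →L[ℂ] H) : Set ℝ :=
  {r | ∃ x ∈ closure (Set.range A), sNormA A x = 1 ∧ r = sNormA A (T x)}

lemma opNormA_eq (A T : H →L[ℂ] H) : opNormA A T = sSup (opASet A T) := rfl

lemma opNormA_nonneg (A T : H →L[ℂ] H) : 0 ≤ opNormA A T := by
  apply Real.sSup_nonneg
  rintro r ⟨x, -, -, rfl⟩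
  exact sNormA_nonneg _

lemma opASet_bddAbove (hA : A.IsPositive) {T : H →L[ℂ] H} {C : ℝ}
    (hb : ∀ z, sNormA A (T z) ≤ C * sNormA A z) : BddAbove (opASet A T) := by
  refine ⟨C, ?_⟩
  rintro r ⟨x, -, hx1, rfl⟩
  calc sNormA A (T x) ≤ C * sNormA A x := hb x
    _ = C := by rw [hx1, mul_one]

lemma le_opNormA (hA : A.IsPositive) {P : H →L[ℂ] H} {C : ℝ}
    (hb : ∀ z, sNormA A (P z) ≤ C * sNormA A z) (x : H) :
    sNormA A (P x) ≤ opNormA A P * sNormA A x := by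
  set K : Submodule ℂ H := (LinearMap.range (A : H →ₗ[ℂ] H)).topologicalClosure with hK
  haveI : CompleteSpace K := (LinearMap.range (A : H →ₗ[ℂ] H)).isClosed_topologicalClosure.completeSpace_coe
  set x₀ : H := (K.orthogonalProjection x : H) with hx₀
  have hmem : x₀ ∈ K := (K.orthogonalProjection x).2
  have hperp : x - x₀ ∈ Kᗮ := K.sub_starProjection_mem_orthogonal x
  have hAperp : A (x - x₀) = 0 := by
    have h3 : (inner ℂ (A (A (x-x₀))) (x - x₀) : ℂ) = 0 := by
      apply (Submodule.mem_orthogonal K (x - x₀)).mp hperp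
      apply Submodule.le_topologicalClosure
      exact LinearMap.mem_range_self _ _
    have h1 : (inner ℂ (A (x - x₀)) (A (x - x₀)) : ℂ) = 0 := by
      have h2 := (ContinuousLinearMap.adjoint_inner_right A (x-x₀) (A (x-x₀))).symm
      rw [hA.isSelfAdjoint.adjoint_eq] at h2
      have h4 : (inner ℂ (x - x₀) (A (A (x-x₀))) : ℂ)
          = (starRingEnd ℂ) (inner ℂ (A (A (x-x₀))) (x - x₀) : ℂ) :=
        (inner_conj_symm _ _).symm
      rw [h2, h4, h3, map_zero]
    exact inner_self_eq_zero.mp h1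
  have hnzero : sNormA A (x - x₀) = 0 := by
    rw [sNormA, sInnerA, hAperp]
    simp
  have hnx : sNormA A x = sNormA A x₀ := by
    have e1 : sNormA A x ≤ sNormA A x₀ + sNormA A (x - x₀) := by
      have : x = x₀ + (x - x₀) := by abel
      nth_rewrite 1 [this]
      exact sNormA_add_le hA _ _
    have e2 : sNormA A x₀ ≤ sNormA A x + sNormA A (x₀ - x) := by
      have : x₀ = x + (x₀ - x) := by abel
      nth_rewrite 1 [this]
      exact sNormA_add_le hA _ _
    have e3 : sNormA A (x₀ - x) = 0 := by
      have : x₀ - x = (-1 : ℂ) • (x - x₀) := by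
        rw [neg_smul, one_smul, neg_sub]
      rw [this, sNormA_smul hA, hnzero, mul_zero]
    rw [hnzero] at e1
    rw [e3] at e2
    linarith
  have hPx : sNormA A (P x) ≤ sNormA A (P x₀) := by
    have hsplit : P x = P x₀ + P (x - x₀) := by
      rw [← map_add]
      congr 1
      abel
    have hz : sNormA A (P (x - x₀)) = 0 := by
      have := hb (x - x₀)
      rw [hnzero, mul_zero] at this
      exact le_antisymm this (sNormA_nonneg _)
    calc sNormA A (P x) = sNormA A (P x₀ + P (x - x₀)) := by rw [← hsplit]
      _ ≤ sNormA A (P x₀) + sNormA A (P (x - x₀)) := sNormA_add_le hA _ _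
      _ = sNormA A (P x₀) := by rw [hz, add_zero]
  rcases eq_or_ne (sNormA A x₀) 0 with h0 | h0
  · have : sNormA A (P x₀) = 0 := by
      have := hb x₀
      rw [h0, mul_zero] at this
      exact le_antisymm this (sNormA_nonneg _)
    rw [hnx, h0, mul_zero]
    rw [this] at hPx
    exact hPx
  · have hpos : 0 < sNormA A x₀ := lt_of_le_of_ne (sNormA_nonneg _) (Ne.symm h0)
    set t := sNormA A x₀ with ht
    set y' := ((t⁻¹ : ℝ) : ℂ) • x₀ with hy'
    have hy'K : y' ∈ K := K.smul_mem _ hmem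
    have hy'cl : y' ∈ closure (Set.range A) := by
      have : (K : Set H) = closure (Set.range A) := by
        rw [hK, Submodule.topologicalClosure_coe, LinearMap.coe_range, ContinuousLinearMap.coe_coe]
      rw [← this]
      exact hy'K
    have hn1 : sNormA A y' = 1 := by
      rw [hy', sNormA_smul hA, Complex.norm_real, Real.norm_eq_abs, abs_inv, abs_of_pos hpos, ← ht]
      field_simp
    have hmem2 : sNormA A (P y') ∈ opASet A P := ⟨y', hy'cl, hn1, rfl⟩
    have hle := le_csSup (opASet_bddAbove hA hb) hmem2
    rw [← opNormA_eq] at hle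
    have hval : sNormA A (P y') = t⁻¹ * sNormA A (P x₀) := by
      rw [hy', map_smul, sNormA_smul hA, Complex.norm_real, Real.norm_eq_abs, abs_inv, abs_of_pos hpos]
    rw [hval] at hle
    have : sNormA A (P x₀) ≤ opNormA A P * t := by
      rw [← mul_le_mul_iff_of_pos_left (inv_pos.mpr hpos)]
      calc t⁻¹ * sNormA A (P x₀) ≤ opNormA A P := hle
        _ = t⁻¹ * (opNormA A P * t) := by field_simp
    rw [hnx]
    exact le_trans hPx this


lemma sInnerA_sub_left (x y z : H) :
    sInnerA A (x - y) z = sInnerA A x z - sInnerA A y z := by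
  simp [sInnerA, inner_sub_left]

lemma sInnerA_sub_right (x y z : H) :
    sInnerA A x (y - z) = sInnerA A x y - sInnerA A x z := by
  simp [sInnerA, inner_sub_right]

/-- General boundedness from an A-adjoint. -/
lemma adj_bound (hA : A.IsPositive) {R R' : H →L[ℂ] H} (h : AdjPair A R R') (x : H) :
    sNormA A (R x) ≤ Real.sqrt ‖R' ∘L R‖ * sNormA A x := by
  have hS : AdjPair A (R' ∘L R) (R' ∘L R) := (h.flip hA.isSelfAdjoint).comp h
  have h1 : sNormA A (R x)^2 ≤ ‖R' ∘L R‖ * sNormA A x^2 := by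
    have e1 : sNormA A (R x)^2 = (sInnerA A (R x) (R x)).re := sq_sNormA hA _
    have e2 : sInnerA A (R x) (R x) = sInnerA A x ((R' ∘L R) x) := by
      rw [h.sInner_right hA.isSelfAdjoint]
      rfl
    rw [e1, e2]
    calc (sInnerA A x ((R' ∘L R) x)).re ≤ |(sInnerA A x ((R' ∘L R) x)).re| := le_abs_self _
      _ ≤ sNormA A x * sNormA A ((R' ∘L R) x) := abs_sInnerA_le' hA _ _
      _ ≤ sNormA A x * (‖R' ∘L R‖ * sNormA A x) :=
          mul_le_mul_of_nonneg_left (selfadj_bound hA hS x) (sNormA_nonneg _)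
      _ = ‖R' ∘L R‖ * sNormA A x^2 := by ring
  calc sNormA A (R x) = Real.sqrt (sNormA A (R x)^2) := (Real.sqrt_sq (sNormA_nonneg _)).symm
    _ ≤ Real.sqrt (‖R' ∘L R‖ * sNormA A x^2) := Real.sqrt_le_sqrt h1
    _ = Real.sqrt ‖R' ∘L R‖ * sNormA A x := by
        rw [Real.sqrt_mul (norm_nonneg _), Real.sqrt_sq (sNormA_nonneg _)]

/-- Polarization: an A-self-adjoint operator is seminorm-bounded by its numerical bound. -/
lemma selfadj_w_bound (hA : A.IsPositive) {R : H →L[ℂ] H} (hR : AdjPair A R R)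
    {M : ℝ} (hM : 0 ≤ M) (hw : ∀ z, |(sInnerA A (R z) z).re| ≤ M * sNormA A z^2) (y : H) :
    sNormA A (R y) ≤ M * sNormA A y := by
  rcases eq_or_ne (sNormA A y) 0 with hy0 | hy0
  · have h1 := adj_bound hA hR y
    rw [hy0, mul_zero] at h1
    rw [hy0, mul_zero]
    exact h1
  · rcases eq_or_ne (sNormA A (R y)) 0 with hR0 | hR0
    · rw [hR0]
      exact mul_nonneg hM (sNormA_nonneg _)
    · have hypos : 0 < sNormA A y := lt_of_le_of_ne (sNormA_nonneg _) (Ne.symm hy0)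
      have hRpos : 0 < sNormA A (R y) := lt_of_le_of_ne (sNormA_nonneg _) (Ne.symm hR0)
      set c : ℝ := sNormA A y / sNormA A (R y) with hc
      have hcpos : 0 < c := div_pos hypos hRpos
      set z : H := ((c : ℝ) : ℂ) • (R y) with hz
      have hnz : sNormA A z = sNormA A y := by
        rw [hz, sNormA_smul hA, Complex.norm_real, Real.norm_eq_abs, abs_of_pos hcpos, hc]
        field_simp
      have hid : 4 * (sInnerA A (R y) z).re
          = (sInnerA A (R (y+z)) (y+z)).re - (sInnerA A (R (y-z)) (y-z)).re := by
        have hconj : sInnerA A (R z) y = (starRingEnd ℂ) (sInnerA A (R y) z) := by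
          rw [hR.sInner_left, sInnerA_conj hA.isSelfAdjoint]
        have e1 : sInnerA A (R (y+z)) (y+z)
            = sInnerA A (R y) y + sInnerA A (R y) z + sInnerA A (R z) y + sInnerA A (R z) z := by
          rw [map_add, sInnerA_add_left, sInnerA_add_right, sInnerA_add_right]
          ring
        have e2 : sInnerA A (R (y-z)) (y-z)
            = sInnerA A (R y) y - sInnerA A (R y) z - sInnerA A (R z) y + sInnerA A (R z) z := by
          rw [map_sub, sInnerA_sub_left, sInnerA_sub_right, sInnerA_sub_right]
          ring
        rw [e1, e2, hconj]
        simp only [Complex.add_re, Complex.sub_re, Complex.conj_re]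
        ring
      have hpar : sNormA A (y+z)^2 + sNormA A (y-z)^2 = 2*sNormA A y^2 + 2*sNormA A z^2 := by
        rw [sq_sNormA hA, sq_sNormA hA, sq_sNormA hA, sq_sNormA hA]
        have e1 : sInnerA A (y+z) (y+z) + sInnerA A (y-z) (y-z)
            = (sInnerA A y y + sInnerA A y y) + (sInnerA A z z + sInnerA A z z) := by
          rw [sInnerA_add_left, sInnerA_add_right, sInnerA_add_right,
            sInnerA_sub_left, sInnerA_sub_right, sInnerA_sub_right]
          ring
        have h5 := congrArg Complex.re e1
        simp only [Complex.add_re] at h5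
        linarith
      have hlhs : (sInnerA A (R y) z).re = sNormA A y * sNormA A (R y) := by
        rw [hz, sInnerA_smul_right]
        have h6 : ((c : ℝ) : ℂ) * sInnerA A (R y) (R y)
            = ((c * (sInnerA A (R y) (R y)).re : ℝ) : ℂ) := by
          nth_rewrite 1 [sInnerA_self_eq_re hA]
          norm_cast
        rw [h6, Complex.ofReal_re, ← sq_sNormA hA, hc, sq]
        field_simp
      have hbound : 4 * (sInnerA A (R y) z).re ≤ 4 * M * sNormA A y^2 := by
        rw [hid]
        have b1 : (sInnerA A (R (y+z)) (y+z)).re ≤ M * sNormA A (y+z)^2 :=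
          le_trans (le_abs_self _) (hw _)
        have b2 : -(M * sNormA A (y-z)^2) ≤ (sInnerA A (R (y-z)) (y-z)).re := by
          have := hw (y-z)
          rw [abs_le] at this
          exact this.1
        have : (sInnerA A (R (y+z)) (y+z)).re - (sInnerA A (R (y-z)) (y-z)).re
            ≤ M * (sNormA A (y+z)^2 + sNormA A (y-z)^2) := by nlinarith
        rw [hpar, hnz] at this
        linarith
      rw [hlhs] at hbound
      by_contra hcon
      push_neg at hcon
      nlinarith [mul_pos hypos (sub_pos.mpr hcon), hbound]

lemma hp_decomp (hA : A.IsPositive) {T₁ T₂ T₁s T₂s : H →L[ℂ] H}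
    (h1 : AdjPair A T₁ T₁s) (h2 : AdjPair A T₂ T₂s) (z : H) :
    (sInnerA A ((T₁s ∘L T₁ + T₂ ∘L T₂s) z) z).re
      = sNormA A (T₁ z)^2 + sNormA A (T₂s z)^2 := by
  have e1 : sInnerA A ((T₁s ∘L T₁ + T₂ ∘L T₂s) z) z
      = sInnerA A (T₁ z) (T₁ z) + sInnerA A (T₂s z) (T₂s z) := by
    have ha : (T₁s ∘L T₁ + T₂ ∘L T₂s) z = T₁s (T₁ z) + T₂ (T₂s z) := rfl
    rw [ha, sInnerA_add_left, h1.sInner_left, h2.sInner_right hA.isSelfAdjoint]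
  rw [e1, Complex.add_re, sq_sNormA hA, sq_sNormA hA]

lemma core_lemma (hA : A.IsPositive) {T₁ T₂ T₁s T₂s P W G : H →L[ℂ] H}
    (h1 : AdjPair A T₁ T₁s) (h2 : AdjPair A T₂ T₂s)
    (hPdef : P = T₁s ∘L T₁ + T₂ ∘L T₂s) (hWdef : W = T₂ ∘L T₁)
    (hGdef : G = P ∘L W + W ∘L P) (y : H) (hy : sNormA A y = 1) :
    ((sInnerA A (P y) y).re + 2 * ‖sInnerA A (W y) y‖)^2
      ≤ opNormA A P^2 + 4 * wA A W^2 + 2 * wA A G := by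
  have hsa := hA.isSelfAdjoint
  set W' : H →L[ℂ] H := T₁s ∘L T₂s with hW'
  set G' : H →L[ℂ] H := W' ∘L P + P ∘L W' with hG'
  have hPP : AdjPair A P P := by
    rw [hPdef]
    exact ((h1.flip hsa).comp h1).add (h2.comp (h2.flip hsa))
  have hWW' : AdjPair A W W' := by
    rw [hWdef, hW']
    exact h2.comp h1
  have hGG' : AdjPair A G G' := by
    rw [hGdef, hG']
    exact (hPP.comp hWW').add (hWW'.comp hPP)
  -- choose unimodular u
  obtain ⟨u₀, hu₀abs, hu₀⟩ := exists_unimodular (sInnerA A (W y) y)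
  set u : ℂ := (starRingEnd ℂ) u₀ with hu
  have huabs : ‖u‖ = 1 := by rw [hu, Complex.norm_conj]; exact hu₀abs
  set D : H →L[ℂ] H := u • W + (starRingEnd ℂ) u • W' with hD
  have hDD : AdjPair A D D := by
    have hD1 : AdjPair A (u • W) ((starRingEnd ℂ) u • W') := hWW'.smul u
    have hD2 : AdjPair A ((starRingEnd ℂ) u • W') (u • W) := by
      rw [hu, Complex.conj_conj]
      exact (hWW'.flip hsa).smul u₀
    have h := hD1.add hD2
    rw [hD]
    rwa [add_comm ((starRingEnd ℂ) u • W') (u • W)] at h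
  set X : H →L[ℂ] H := P + D with hX
  have hXX : AdjPair A X X := hPP.add hDD
  set E : H →L[ℂ] H := P ∘L D + D ∘L P with hE
  have hEE : AdjPair A E E := by
    have h := (hPP.comp hDD).add (hDD.comp hPP)
    rw [hE]
    rwa [add_comm (D ∘L P) (P ∘L D)] at h
  have hEeq : E = u • G + (starRingEnd ℂ) u • G' := by
    rw [hE, hD, hGdef, hG']
    simp only [ContinuousLinearMap.comp_add, ContinuousLinearMap.add_comp,
      ContinuousLinearMap.comp_smul, ContinuousLinearMap.smul_comp, smul_add]
    abel
  -- boundedness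
  have hbW := fun z => adj_bound hA hWW' z
  have hbG := fun z => adj_bound hA hGG' z
  have hbD := fun z => adj_bound hA hDD z
  have hbP := fun z => adj_bound hA hPP z
  -- numerical bounds for D and E
  have wD : ∀ z, |(sInnerA A (D z) z).re| ≤ (2 * wA A W) * sNormA A z^2 := by
    intro z
    have happ : D z = u • (W z) + (starRingEnd ℂ) u • (W' z) := rfl
    have hWz : sInnerA A (W' z) z = (starRingEnd ℂ) (sInnerA A (W z) z) := by
      rw [hWW'.sInner_left, sInnerA_conj hsa]
    have e1 : sInnerA A (D z) z
        = (starRingEnd ℂ) u * sInnerA A (W z) z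
          + (starRingEnd ℂ) ((starRingEnd ℂ) u * sInnerA A (W z) z) := by
      rw [happ, sInnerA_add_left, sInnerA_smul_left, sInnerA_smul_left, Complex.conj_conj, hWz]
      rw [map_mul]
    have e2 : (sInnerA A (D z) z).re = 2 * ((starRingEnd ℂ) u * sInnerA A (W z) z).re := by
      rw [e1, Complex.add_re, Complex.conj_re]
      ring
    rw [e2, abs_mul]
    have e3 : |((starRingEnd ℂ) u * sInnerA A (W z) z).re| ≤ ‖sInnerA A (W z) z‖ := by
      calc |((starRingEnd ℂ) u * sInnerA A (W z) z).re|
          ≤ ‖(starRingEnd ℂ) u * sInnerA A (W z) z‖ := Complex.abs_re_le_norm _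
        _ = ‖sInnerA A (W z) z‖ := by
            rw [norm_mul, Complex.norm_conj, huabs, one_mul]
    have e4 := le_wA hA hbW z
    calc |(2:ℝ)| * |((starRingEnd ℂ) u * sInnerA A (W z) z).re|
        ≤ 2 * ‖sInnerA A (W z) z‖ := by
          rw [abs_of_pos (by norm_num : (0:ℝ) < 2)]
          linarith
      _ ≤ 2 * (wA A W * sNormA A z^2) := by linarith
      _ = (2 * wA A W) * sNormA A z^2 := by ring
  have wE : ∀ z, |(sInnerA A (E z) z).re| ≤ (2 * wA A G) * sNormA A z^2 := by
    intro z
    have happ : E z = u • (G z) + (starRingEnd ℂ) u • (G' z) := by rw [hEeq]; rfl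
    have hGz : sInnerA A (G' z) z = (starRingEnd ℂ) (sInnerA A (G z) z) := by
      rw [hGG'.sInner_left, sInnerA_conj hsa]
    have e1 : sInnerA A (E z) z
        = (starRingEnd ℂ) u * sInnerA A (G z) z
          + (starRingEnd ℂ) ((starRingEnd ℂ) u * sInnerA A (G z) z) := by
      rw [happ, sInnerA_add_left, sInnerA_smul_left, sInnerA_smul_left, Complex.conj_conj, hGz]
      rw [map_mul]
    have e2 : (sInnerA A (E z) z).re = 2 * ((starRingEnd ℂ) u * sInnerA A (G z) z).re := by
      rw [e1, Complex.add_re, Complex.conj_re]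
      ring
    rw [e2, abs_mul]
    have e3 : |((starRingEnd ℂ) u * sInnerA A (G z) z).re| ≤ ‖sInnerA A (G z) z‖ := by
      calc |((starRingEnd ℂ) u * sInnerA A (G z) z).re|
          ≤ ‖(starRingEnd ℂ) u * sInnerA A (G z) z‖ := Complex.abs_re_le_norm _
        _ = ‖sInnerA A (G z) z‖ := by
            rw [norm_mul, Complex.norm_conj, huabs, one_mul]
    have e4 := le_wA hA hbG z
    calc |(2:ℝ)| * |((starRingEnd ℂ) u * sInnerA A (G z) z).re|
        ≤ 2 * ‖sInnerA A (G z) z‖ := by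
          rw [abs_of_pos (by norm_num : (0:ℝ) < 2)]
          linarith
      _ ≤ 2 * (wA A G * sNormA A z^2) := by linarith
      _ = (2 * wA A G) * sNormA A z^2 := by ring
  have nD : ∀ z, sNormA A (D z) ≤ (2 * wA A W) * sNormA A z :=
    selfadj_w_bound hA hDD (mul_nonneg (by norm_num) (wA_nonneg A W)) wD
  have nE : ∀ z, sNormA A (E z) ≤ (2 * wA A G) * sNormA A z :=
    selfadj_w_bound hA hEE (mul_nonneg (by norm_num) (wA_nonneg A G)) wE
  have nP : ∀ z, sNormA A (P z) ≤ opNormA A P * sNormA A z := le_opNormA hA hbP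
  -- main chain
  set p : ℝ := (sInnerA A (P y) y).re with hp
  set q : ℝ := ‖sInnerA A (W y) y‖ with hq
  have hXy : (sInnerA A (X y) y).re = p + 2 * q := by
    have happ : X y = P y + D y := rfl
    have hD2 : sInnerA A (D y) y
        = (starRingEnd ℂ) u * sInnerA A (W y) y
          + (starRingEnd ℂ) ((starRingEnd ℂ) u * sInnerA A (W y) y) := by
      have happ2 : D y = u • (W y) + (starRingEnd ℂ) u • (W' y) := rfl
      have hWy : sInnerA A (W' y) y = (starRingEnd ℂ) (sInnerA A (W y) y) := by
        rw [hWW'.sInner_left, sInnerA_conj hsa]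
      rw [happ2, sInnerA_add_left, sInnerA_smul_left, sInnerA_smul_left, Complex.conj_conj, hWy]
      rw [map_mul]
    have hval : (starRingEnd ℂ) u * sInnerA A (W y) y = ((q : ℝ) : ℂ) := by
      rw [hu, Complex.conj_conj, hu₀, hq]
    rw [happ, sInnerA_add_left, Complex.add_re, hD2, hval]
    rw [Complex.conj_ofReal]
    simp only [Complex.add_re, Complex.ofReal_re]
    rw [hp]
    ring
  have hq0 : 0 ≤ q := norm_nonneg _
  have c1 : (p + 2*q)^2 ≤ sNormA A (X y)^2 := by
    have habs : |(sInnerA A (X y) y).re| ≤ sNormA A (X y) := by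
      calc |(sInnerA A (X y) y).re| ≤ sNormA A (X y) * sNormA A y := abs_sInnerA_le' hA _ _
        _ = sNormA A (X y) := by rw [hy, mul_one]
    calc (p + 2*q)^2 = ((sInnerA A (X y) y).re)^2 := by rw [hXy]
      _ = |(sInnerA A (X y) y).re|^2 := (sq_abs _).symm
      _ ≤ sNormA A (X y)^2 := pow_le_pow_left₀ (abs_nonneg _) habs 2
  have c2 : sNormA A (X y)^2 ≤ sNormA A (X (X y)) := by
    have e1 : sNormA A (X y)^2 = (sInnerA A (X y) (X y)).re := sq_sNormA hA _
    have e2 : sInnerA A (X y) (X y) = sInnerA A y (X (X y)) := hXX.sInner_right hsa _ _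
    rw [e1, e2]
    calc (sInnerA A y (X (X y))).re ≤ |(sInnerA A y (X (X y))).re| := le_abs_self _
      _ ≤ sNormA A y * sNormA A (X (X y)) := abs_sInnerA_le' hA _ _
      _ = sNormA A (X (X y)) := by rw [hy, one_mul]
  have c3 : X (X y) = (P (P y) + D (D y)) + E y := by
    have e1 : X (X y) = P (X y) + D (X y) := rfl
    have e2 : P (X y) = P (P y) + P (D y) := by
      rw [hX]
      simp [map_add]
    have e3 : D (X y) = D (P y) + D (D y) := by
      rw [hX]
      simp [map_add]
    have e4 : E y = P (D y) + D (P y) := rfl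
    rw [e1, e2, e3, e4]
    abel
  have c4 : sNormA A (X (X y)) ≤ opNormA A P^2 + 4 * wA A W^2 + 2 * wA A G := by
    have t1 : sNormA A (P (P y)) ≤ opNormA A P^2 := by
      calc sNormA A (P (P y)) ≤ opNormA A P * sNormA A (P y) := nP _
        _ ≤ opNormA A P * (opNormA A P * sNormA A y) :=
            mul_le_mul_of_nonneg_left (nP y) (opNormA_nonneg A P)
        _ = opNormA A P^2 := by rw [hy]; ring
    have t2 : sNormA A (D (D y)) ≤ 4 * wA A W^2 := by
      calc sNormA A (D (D y)) ≤ (2 * wA A W) * sNormA A (D y) := nD _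
        _ ≤ (2 * wA A W) * ((2 * wA A W) * sNormA A y) :=
            mul_le_mul_of_nonneg_left (nD y) (mul_nonneg (by norm_num) (wA_nonneg A W))
        _ = 4 * wA A W^2 := by rw [hy]; ring
    have t3 : sNormA A (E y) ≤ 2 * wA A G := by
      calc sNormA A (E y) ≤ (2 * wA A G) * sNormA A y := nE _
        _ = 2 * wA A G := by rw [hy, mul_one]
    calc sNormA A (X (X y)) = sNormA A ((P (P y) + D (D y)) + E y) := by rw [c3]
      _ ≤ sNormA A (P (P y) + D (D y)) + sNormA A (E y) := sNormA_add_le hA _ _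
      _ ≤ (sNormA A (P (P y)) + sNormA A (D (D y))) + sNormA A (E y) := by
          have := sNormA_add_le hA (P (P y)) (D (D y))
          linarith
      _ ≤ opNormA A P^2 + 4 * wA A W^2 + 2 * wA A G := by linarith
  calc ((sInnerA A (P y) y).re + 2 * ‖sInnerA A (W y) y‖)^2
      = (p + 2*q)^2 := by rw [hp, hq]
    _ ≤ sNormA A (X y)^2 := c1
    _ ≤ sNormA A (X (X y)) := c2
    _ ≤ opNormA A P^2 + 4 * wA A W^2 + 2 * wA A G := c4


lemma blk2_fst {H : Type*} [NormedAddCommGroup H] [InnerProductSpace ℂ H]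
    (X Y Z W : H →L[ℂ] H) (v : WithLp 2 (H × H)) :
    (blk2 X Y Z W v).fst = X v.fst + Y v.snd := by
  simp [blk2]

lemma blk2_snd {H : Type*} [NormedAddCommGroup H] [InnerProductSpace ℂ H]
    (X Y Z W : H →L[ℂ] H) (v : WithLp 2 (H × H)) :
    (blk2 X Y Z W v).snd = Z v.fst + W v.snd := by
  simp [blk2]

end StmtAux

open StmtAux in
theorem stmt12 {H : Type*} [NormedAddCommGroup H] [InnerProductSpace ℂ H] [CompleteSpace H]
    (A : H →L[ℂ] H) (hA : A.IsPositive)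
    (T₁ T₂ T₁s T₂s : H →L[ℂ] H) (hT₁ : memBA A T₁) (hT₂ : memBA A T₂)
    (hT₁s : IsSharpA A T₁ T₁s) (hT₂s : IsSharpA A T₂ T₂s) :
    wA (blk2 A 0 0 A) (blk2 0 T₁ T₂ 0) ^ 4 ≤
      (1 / 16) * opNormA A (T₁s ∘L T₁ + T₂ ∘L T₂s) ^ 2 +
        (1 / 4) * wA A (T₂ ∘L T₁) ^ 2 +
        (1 / 8) * wA A ((T₁s ∘L T₁ + T₂ ∘L T₂s) ∘L (T₂ ∘L T₁) +
          (T₂ ∘L T₁) ∘L (T₁s ∘L T₁ + T₂ ∘L T₂s)) := by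
  have hsa := hA.isSelfAdjoint
  have h1 : AdjPair A T₁ T₁s := hT₁s.1
  have h2 : AdjPair A T₂ T₂s := hT₂s.1
  set P : H →L[ℂ] H := T₁s ∘L T₁ + T₂ ∘L T₂s with hPdef
  set W : H →L[ℂ] H := T₂ ∘L T₁ with hWdef
  set G : H →L[ℂ] H := P ∘L W + W ∘L P with hGdef
  set β : ℝ := (1/16) * opNormA A P^2 + (1/4) * wA A W^2 + (1/8) * wA A G with hβdef
  have hβ0 : 0 ≤ β := by
    rw [hβdef]
    have := wA_nonneg A G
    have := sq_nonneg (opNormA A P)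
    have := sq_nonneg (wA A W)
    linarith
  show wA (blk2 A 0 0 A) (blk2 0 T₁ T₂ 0) ^ 4 ≤ β
  have key : ∀ r ∈ wASet (blk2 A 0 0 A) (blk2 0 T₁ T₂ 0), r^4 ≤ β := by
    rintro r ⟨x, hx1, rfl⟩
    set x₁ : H := x.fst with hx₁
    set x₂ : H := x.snd with hx₂
    -- decompose the A-norm condition
    have hAx : sInnerA (blk2 A 0 0 A) x x = sInnerA A x₁ x₁ + sInnerA A x₂ x₂ := by
      simp [sInnerA, WithLp.prod_inner_apply, blk2_fst, blk2_snd, hx₁, hx₂]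
    have hsum : sNormA A x₁^2 + sNormA A x₂^2 = 1 := by
      have h3 : (sInnerA (blk2 A 0 0 A) x x).re = 1 := by
        have := hx1
        rw [sNormA] at this
        have h4 := Real.sqrt_eq_one.mp this
        exact h4
      rw [hAx, Complex.add_re] at h3
      rw [sq_sNormA hA, sq_sNormA hA]
      exact h3
    have hc : sInnerA (blk2 A 0 0 A) (blk2 0 T₁ T₂ 0 x) x
        = sInnerA A (T₁ x₂) x₁ + sInnerA A (T₂ x₁) x₂ := by
      simp [sInnerA, WithLp.prod_inner_apply, blk2_fst, blk2_snd, hx₁, hx₂]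
    set a : ℝ := sNormA A x₁ with ha
    set b : ℝ := sNormA A x₂ with hb
    set α : ℂ := sInnerA A (T₁ x₂) x₁ with hα
    set βc : ℂ := sInnerA A (T₂ x₁) x₂ with hβc
    set z₂ : ℂ := sInnerA A (T₂s x₂) x₁ with hz₂
    have hβz : ‖βc‖ = ‖z₂‖ := by
      rw [hβc, h2.sInner_right hsa, sInnerA_conj hsa, hz₂, Complex.norm_conj]
    set p₂ : ℝ := (sInnerA A (P x₂) x₂).re with hp₂
    set q₂ : ℝ := ‖sInnerA A (W x₂) x₂‖ with hq₂
    have hp₂eq : p₂ = sNormA A (T₁ x₂)^2 + sNormA A (T₂s x₂)^2 := by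
      rw [hp₂, hPdef]
      exact hp_decomp hA h1 h2 x₂
    have hp₂0 : 0 ≤ p₂ := by
      rw [hp₂eq]
      positivity
    have hq₂0 : 0 ≤ q₂ := norm_nonneg _
    -- Claim A: |c|² ≤ a² (p₂ + 2 q₂)
    have claimA : ‖sInnerA (blk2 A 0 0 A) (blk2 0 T₁ T₂ 0 x) x‖^2
        ≤ a^2 * (p₂ + 2*q₂) := by
      obtain ⟨μ, hμabs, hμ⟩ := exists_unimodular α
      obtain ⟨ν, hνabs, hν⟩ := exists_unimodular z₂
      set v : H := (starRingEnd ℂ) μ • (T₁ x₂) + (starRingEnd ℂ) ν • (T₂s x₂) with hv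
      have hv1 : sInnerA A v x₁ = ((‖α‖ + ‖z₂‖ : ℝ) : ℂ) := by
        rw [hv, sInnerA_add_left, sInnerA_smul_left, sInnerA_smul_left,
          Complex.conj_conj, Complex.conj_conj, ← hα, ← hz₂, hμ, hν]
        push_cast
        ring
      have step1 : ‖sInnerA (blk2 A 0 0 A) (blk2 0 T₁ T₂ 0 x) x‖
          ≤ ‖α‖ + ‖z₂‖ := by
        rw [hc]
        calc ‖α + βc‖ ≤ ‖α‖ + ‖βc‖ := norm_add_le _ _
          _ = ‖α‖ + ‖z₂‖ := by rw [hβz]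
      have step2 : ‖α‖ + ‖z₂‖ ≤ sNormA A v * a := by
        have h5 : ‖α‖ + ‖z₂‖ = ‖sInnerA A v x₁‖ := by
          rw [hv1, Complex.norm_real, Real.norm_eq_abs]
          rw [abs_of_nonneg (add_nonneg (norm_nonneg _) (norm_nonneg _))]
        rw [h5, ha]
        exact abs_sInnerA_le hA v x₁
      have step3 : sNormA A v^2 ≤ p₂ + 2*q₂ := by
        have hgq : ‖sInnerA A (T₁ x₂) (T₂s x₂)‖ = q₂ := by
          have e1 : sInnerA A (T₂s x₂) (T₁ x₂) = sInnerA A x₂ (W x₂) := by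
            rw [h2.sInner_left]
            rfl
          have e2 : sInnerA A (T₁ x₂) (T₂s x₂) = (starRingEnd ℂ) (sInnerA A x₂ (W x₂)) := by
            rw [← e1, ← sInnerA_conj hsa]
          rw [e2, Complex.norm_conj, hq₂, sInnerA_conj hsa, Complex.norm_conj]
        have hμ1 : μ * (starRingEnd ℂ) μ = 1 := by
          rw [Complex.mul_conj, Complex.normSq_eq_norm_sq, hμabs]
          norm_num
        have hν1 : ν * (starRingEnd ℂ) ν = 1 := by
          rw [Complex.mul_conj, Complex.normSq_eq_norm_sq, hνabs]
          norm_num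
        set w₀ : ℂ := sInnerA A (T₁ x₂) (T₂s x₂) with hw₀
        set w₁ : ℂ := μ * ((starRingEnd ℂ) ν * w₀) with hw₁
        set r₁ : ℝ := (sInnerA A (T₁ x₂) (T₁ x₂)).re with hr₁
        set r₂ : ℝ := (sInnerA A (T₂s x₂) (T₂s x₂)).re with hr₂
        have hcross : sInnerA A (T₂s x₂) (T₁ x₂) = (starRingEnd ℂ) w₀ := by
          rw [hw₀, ← sInnerA_conj hsa]
        have hvv : sInnerA A v v
            = ((r₁ : ℝ) : ℂ) + ((r₂ : ℝ) : ℂ)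
              + (w₁ + ((starRingEnd ℂ) μ * (ν * (starRingEnd ℂ) w₀))) := by
          rw [hv]
          simp only [sInnerA_add_left, sInnerA_add_right, sInnerA_smul_left,
            sInnerA_smul_right, Complex.conj_conj]
          rw [hcross, ← hw₀, sInnerA_self_eq_re hA (T₁ x₂), sInnerA_self_eq_re hA (T₂s x₂),
            ← hr₁, ← hr₂, hw₁]
          linear_combination ((r₁ : ℂ)) * hμ1 + ((r₂ : ℂ)) * hν1
        have hconjterm : (starRingEnd ℂ) μ * (ν * (starRingEnd ℂ) w₀)
            = (starRingEnd ℂ) w₁ := by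
          rw [hw₁, map_mul, map_mul, Complex.conj_conj]
        have hre : sNormA A v^2 = r₁ + r₂ + 2 * w₁.re := by
          rw [sq_sNormA hA, hvv, hconjterm]
          simp only [Complex.add_re, Complex.ofReal_re, Complex.conj_re]
          ring
        have hw₁le : w₁.re ≤ q₂ := by
          calc w₁.re ≤ |w₁.re| := le_abs_self _
            _ ≤ ‖w₁‖ := Complex.abs_re_le_norm _
            _ = ‖w₀‖ := by
                rw [hw₁, norm_mul, norm_mul, hμabs, Complex.norm_conj, hνabs]
                ring
            _ = q₂ := hgq
        have hsum2 : r₁ + r₂ = p₂ := by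
          rw [hp₂eq, hr₁, hr₂, sq_sNormA hA, sq_sNormA hA]
        rw [hre, hsum2]
        linarith
      have hstep12 : ‖sInnerA (blk2 A 0 0 A) (blk2 0 T₁ T₂ 0 x) x‖
          ≤ sNormA A v * a := le_trans step1 step2
      calc ‖sInnerA (blk2 A 0 0 A) (blk2 0 T₁ T₂ 0 x) x‖^2
          ≤ (sNormA A v * a)^2 := by
            apply pow_le_pow_left₀ (norm_nonneg _) hstep12
        _ = sNormA A v^2 * a^2 := by ring
        _ ≤ (p₂ + 2*q₂) * a^2 := by
            apply mul_le_mul_of_nonneg_right step3 (sq_nonneg a)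
        _ = a^2 * (p₂ + 2*q₂) := by ring
    -- two cases on b
    rcases eq_or_ne b 0 with hb0 | hb0
    · -- degenerate case
      have hT₁z : sNormA A (T₁ x₂) = 0 := by
        have := adj_bound hA h1 x₂
        rw [← hb, hb0, mul_zero] at this
        exact le_antisymm this (sNormA_nonneg _)
      have hT₂sz : sNormA A (T₂s x₂) = 0 := by
        have := adj_bound hA (h2.flip hsa) x₂
        rw [← hb, hb0, mul_zero] at this
        exact le_antisymm this (sNormA_nonneg _)
      have hp₂z : p₂ = 0 := by rw [hp₂eq, hT₁z, hT₂sz]; norm_num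
      have hq₂z : q₂ = 0 := by
        have h5 : ‖sInnerA A (W x₂) x₂‖ ≤ sNormA A (W x₂) * sNormA A x₂ :=
          abs_sInnerA_le hA _ _
        rw [← hb, hb0, mul_zero] at h5
        exact le_antisymm h5 (norm_nonneg _)
      have hcz : ‖sInnerA (blk2 A 0 0 A) (blk2 0 T₁ T₂ 0 x) x‖ = 0 := by
        have h6 := claimA
        rw [hp₂z, hq₂z] at h6
        norm_num at h6
        have h7 : ‖sInnerA (blk2 A 0 0 A) (blk2 0 T₁ T₂ 0 x) x‖^2 = 0 :=
          by rw [h6, norm_zero]; norm_num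
        exact pow_eq_zero_iff (by norm_num) |>.mp h7
      rw [hcz]
      simpa using hβ0
    · -- main case
      have hbpos : 0 < b := lt_of_le_of_ne (sNormA_nonneg _) (Ne.symm hb0)
      set y : H := ((b⁻¹ : ℝ) : ℂ) • x₂ with hy
      have hny : sNormA A y = 1 := by
        rw [hy, sNormA_smul hA, Complex.norm_real, Real.norm_eq_abs, abs_inv, abs_of_pos hbpos, ← hb]
        field_simp
      set p : ℝ := (sInnerA A (P y) y).re with hp
      set q : ℝ := ‖sInnerA A (W y) y‖ with hq
      have hpval : p = b⁻¹^2 * p₂ := by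
        rw [hp, hy, map_smul, sInnerA_smul_left, sInnerA_smul_right, ← mul_assoc,
          Complex.conj_ofReal]
        have : ((b⁻¹:ℝ):ℂ) * ((b⁻¹:ℝ):ℂ) = ((b⁻¹^2 : ℝ) : ℂ) := by push_cast; ring
        rw [this, Complex.re_ofReal_mul, hp₂]
      have hqval : q = b⁻¹^2 * q₂ := by
        rw [hq, hy, map_smul, sInnerA_smul_left, sInnerA_smul_right, ← mul_assoc,
          Complex.conj_ofReal]
        have : ((b⁻¹:ℝ):ℂ) * ((b⁻¹:ℝ):ℂ) = ((b⁻¹^2 : ℝ) : ℂ) := by push_cast; ring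
        rw [this, norm_mul, Complex.norm_real, Real.norm_eq_abs, hq₂, abs_of_nonneg (by positivity)]
      have hcore := core_lemma hA h1 h2 hPdef hWdef hGdef y hny
      rw [← hp, ← hq] at hcore
      have hpq2 : p₂ + 2*q₂ = b^2 * (p + 2*q) := by
        rw [hpval, hqval]
        field_simp
      have hab14 : a^2 * b^2 ≤ 1/4 := by nlinarith [sq_nonneg (a^2 - b^2), hsum]
      have hpq0 : 0 ≤ p + 2*q := by
        have : 0 ≤ p := by rw [hpval]; positivity
        have : 0 ≤ q := norm_nonneg _
        linarith [hpval ▸ (by positivity : (0:ℝ) ≤ b⁻¹^2 * p₂)]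
      have habs2 : ‖sInnerA (blk2 A 0 0 A) (blk2 0 T₁ T₂ 0 x) x‖^2
          ≤ (a^2*b^2) * (p + 2*q) := by
        calc ‖sInnerA (blk2 A 0 0 A) (blk2 0 T₁ T₂ 0 x) x‖^2
            ≤ a^2 * (p₂ + 2*q₂) := claimA
          _ = (a^2*b^2) * (p + 2*q) := by rw [hpq2]; ring
      calc ‖sInnerA (blk2 A 0 0 A) (blk2 0 T₁ T₂ 0 x) x‖^4
          = (‖sInnerA (blk2 A 0 0 A) (blk2 0 T₁ T₂ 0 x) x‖^2)^2 := by ring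
        _ ≤ ((a^2*b^2) * (p + 2*q))^2 := by
            apply pow_le_pow_left₀ (sq_nonneg _) habs2
        _ = (a^2*b^2)^2 * (p + 2*q)^2 := by ring
        _ ≤ (1/16) * (p+2*q)^2 := by
            apply mul_le_mul_of_nonneg_right _ (sq_nonneg _)
            nlinarith [sq_nonneg (a*b), hab14, mul_nonneg (sq_nonneg a) (sq_nonneg b)]
        _ ≤ (1/16) * (opNormA A P^2 + 4 * wA A W^2 + 2 * wA A G) := by
            apply mul_le_mul_of_nonneg_left hcore (by norm_num)
        _ = β := by rw [hβdef]; ring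
  -- conclude
  have hsup : wA (blk2 A 0 0 A) (blk2 0 T₁ T₂ 0) ≤ β ^ ((1:ℝ)/4) := by
    apply Real.sSup_le _ (Real.rpow_nonneg hβ0 _)
    rintro r hr
    have hr0 : 0 ≤ r := by
      obtain ⟨x, -, rfl⟩ := hr
      exact norm_nonneg _
    have hr4 : r^4 ≤ β := key r hr
    have h5 : (r^(4:ℕ) : ℝ) ^ ((1:ℝ)/4) ≤ β ^ ((1:ℝ)/4) :=
      Real.rpow_le_rpow (by positivity) hr4 (by norm_num)
    calc r = (r ^ (4:ℕ)) ^ ((1:ℝ)/4) := by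
          rw [← Real.rpow_natCast r 4, ← Real.rpow_mul hr0]
          norm_num
      _ ≤ β ^ ((1:ℝ)/4) := h5
  have hfin : wA (blk2 A 0 0 A) (blk2 0 T₁ T₂ 0) ^ 4 ≤ (β ^ ((1:ℝ)/4))^4 := by
    apply pow_le_pow_left₀ _ hsup
    apply Real.sSup_nonneg
    rintro r ⟨x, -, rfl⟩
    exact norm_nonneg _
  calc wA (blk2 A 0 0 A) (blk2 0 T₁ T₂ 0) ^ 4 ≤ (β ^ ((1:ℝ)/4))^4 := hfin
    _ = β := by
        rw [← Real.rpow_natCast (β ^ ((1:ℝ)/4)) 4, ← Real.rpow_mul hβ0]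
        norm_num
end
end

section
/- Let T₁, T₂ ∈ B_A(H) and set P = T₁^{#_A}T₁ + T₂T₂^{#_A}. Then w_A(T₁T₂) ≤ (1/4)·√( ‖P‖_A² + 4·w_A(T₂T₁)² + 2·w_A(T₂T₁ P + P T₂T₁) ). -/
noncomputable section

open ContinuousLinearMap

set_option linter.unusedSectionVars false
namespace Stmt13P

variable {H : Type*} [NormedAddCommGroup H] [InnerProductSpace ℂ H] [CompleteSpace H]
variable {A : H →L[ℂ] H}

lemma isSym (hA : A.IsPositive) (x y : H) : (inner ℂ (A x) y : ℂ) = inner ℂ x (A y) :=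
  hA.1 x y

lemma re_nonneg_pos {R : H →L[ℂ] H} (hR : R.IsPositive) (x : H) :
    0 ≤ (inner ℂ (R x) x : ℂ).re := by
  have := hR.2 x
  simpa [ContinuousLinearMap.reApplyInnerSelf_apply, RCLike.re_to_complex] using this

lemma re_nonneg (hA : A.IsPositive) (x : H) : 0 ≤ (sInnerA A x x).re :=
  re_nonneg_pos hA x

lemma sNormA_nonneg (A : H →L[ℂ] H) (x : H) : 0 ≤ sNormA A x := Real.sqrt_nonneg _

lemma sq_sNormA (hA : A.IsPositive) (x : H) : sNormA A x ^ 2 = (sInnerA A x x).re :=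
  Real.sq_sqrt (re_nonneg hA x)

lemma sInner_conj (hA : A.IsPositive) (x y : H) :
    (starRingEnd ℂ) (sInnerA A x y) = sInnerA A y x := by
  unfold sInnerA
  rw [inner_conj_symm]
  exact (isSym hA y x).symm

/-- Cauchy–Schwarz for the semidefinite form of a positive operator. -/
lemma cs_pos {R : H →L[ℂ] H} (hR : R.IsPositive) (x y : H) :
    ‖inner ℂ (R x) y‖ ≤
      Real.sqrt (inner ℂ (R x) x : ℂ).re * Real.sqrt (inner ℂ (R y) y : ℂ).re := by
  have hsym : ∀ u v : H, (inner ℂ (R u) v : ℂ) = inner ℂ u (R v) :=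
    hR.1
  by_cases h0 : (inner ℂ (R x) y : ℂ) = 0
  · rw [h0]
    simp only [norm_zero]
    positivity
  · set c : ℂ := inner ℂ (R x) y with hc
    set φ : ℂ := (‖c‖ : ℂ) / c with hφ
    have hcabs : (‖c‖ : ℝ) ≠ 0 := by
      simpa using h0
    have hφc : φ * c = (‖c‖ : ℂ) := div_mul_cancel₀ _ h0
    have hφabs : ‖φ‖ = 1 := by
      rw [hφ, norm_div, Complex.norm_real, Real.norm_eq_abs, abs_of_nonneg (norm_nonneg c)]
      field_simp
    set p : ℝ := (inner ℂ (R x) x : ℂ).re with hp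
    set q : ℝ := (inner ℂ (R y) y : ℂ).re with hq
    have key : ∀ t : ℝ, 0 ≤ q * (t * t) + (2 * ‖c‖) * t + p := by
      intro t
      set z : H := φ • y with hz
      have h := re_nonneg_pos hR (x + (t : ℂ) • z)
      have hxz : (inner ℂ (R x) z : ℂ) = (‖c‖ : ℂ) := by
        rw [hz, inner_smul_right, ← hc, hφc]
      have hzx : (inner ℂ (R z) x : ℂ) = (‖c‖ : ℂ) := by
        rw [← inner_conj_symm, ← hsym, hxz, Complex.conj_ofReal]
      have hzz : (inner ℂ (R z) z : ℂ) = (inner ℂ (R y) y : ℂ) := by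
        rw [hz, map_smul, inner_smul_left, inner_smul_right, ← mul_assoc,
          mul_comm ((starRingEnd ℂ) φ) φ, Complex.mul_conj, Complex.normSq_eq_norm_sq, hφabs]
        norm_num
      have hexpC : (inner ℂ (R (x + (t : ℂ) • z)) (x + (t : ℂ) • z) : ℂ)
          = inner ℂ (R x) x + (t:ℂ) * inner ℂ (R x) z + (t:ℂ) * inner ℂ (R z) x
            + (t:ℂ) * ((t:ℂ) * inner ℂ (R z) z) := by
        simp only [map_add, map_smul, inner_add_left, inner_add_right,
          inner_smul_left, inner_smul_right, Complex.conj_ofReal]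
        ring
      rw [hexpC, hxz, hzx, hzz] at h
      simp only [Complex.add_re, Complex.re_ofReal_mul, Complex.ofReal_re] at h
      calc (0:ℝ) ≤ _ := h
        _ = q * (t * t) + (2 * ‖c‖) * t + p := by rw [hp, hq]; ring
    have hdisc := discrim_le_zero key
    rw [discrim] at hdisc
    have hq0 : 0 ≤ q := re_nonneg_pos hR y
    have hp0 : 0 ≤ p := re_nonneg_pos hR x
    have habs2 : ‖c‖ ^ 2 ≤ p * q := by nlinarith
    calc ‖c‖ = Real.sqrt (‖c‖ ^ 2) :=
          (Real.sqrt_sq (norm_nonneg c)).symm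
      _ ≤ Real.sqrt (p * q) := Real.sqrt_le_sqrt habs2
      _ = Real.sqrt p * Real.sqrt q := Real.sqrt_mul hp0 _



lemma cs (hA : A.IsPositive) (x y : H) :
    ‖sInnerA A x y‖ ≤ sNormA A x * sNormA A y :=
  cs_pos hA x y

lemma sInner_add_left (A : H →L[ℂ] H) (u v w : H) :
    sInnerA A (u + v) w = sInnerA A u w + sInnerA A v w := by
  unfold sInnerA; rw [map_add, inner_add_left]

lemma sInner_add_right (A : H →L[ℂ] H) (u v w : H) :
    sInnerA A u (v + w) = sInnerA A u v + sInnerA A u w := by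
  unfold sInnerA; rw [inner_add_right]

lemma sInner_smul_left (A : H →L[ℂ] H) (b : ℂ) (u v : H) :
    sInnerA A (b • u) v = (starRingEnd ℂ) b * sInnerA A u v := by
  unfold sInnerA; rw [map_smul, inner_smul_left]

lemma sInner_smul_right (A : H →L[ℂ] H) (b : ℂ) (u v : H) :
    sInnerA A u (b • v) = b * sInnerA A u v := by
  unfold sInnerA; rw [inner_smul_right]

lemma normsq_add (hA : A.IsPositive) (u v : H) :
    sNormA A (u + v) ^ 2 = sNormA A u ^ 2 + 2 * (sInnerA A u v).re + sNormA A v ^ 2 := by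
  rw [sq_sNormA hA, sq_sNormA hA, sq_sNormA hA, sInner_add_left, sInner_add_right,
    sInner_add_right]
  have hvu : (sInnerA A v u).re = (sInnerA A u v).re := by
    rw [← sInner_conj hA u v, Complex.conj_re]
  simp only [Complex.add_re]
  rw [hvu]; ring

lemma sNormA_smul (hA : A.IsPositive) (b : ℂ) (x : H) :
    sNormA A (b • x) = ‖b‖ * sNormA A x := by
  unfold sNormA
  rw [sInner_smul_left, sInner_smul_right, ← mul_assoc, mul_comm ((starRingEnd ℂ) b) b,
    Complex.mul_conj, Complex.re_ofReal_mul, Real.sqrt_mul (Complex.normSq_nonneg b),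
    show Real.sqrt (Complex.normSq b) = ‖b‖ from (Complex.norm_def b).symm]

lemma sNormA_add_le (hA : A.IsPositive) (u v : H) :
    sNormA A (u + v) ≤ sNormA A u + sNormA A v := by
  have h := normsq_add hA u v
  have hre : (sInnerA A u v).re ≤ sNormA A u * sNormA A v :=
    le_trans (Complex.re_le_norm _) (cs hA u v)
  have h2 : sNormA A (u + v) ^ 2 ≤ (sNormA A u + sNormA A v) ^ 2 := by nlinarith
  have h3 := Real.sqrt_le_sqrt h2
  rwa [Real.sqrt_sq (sNormA_nonneg A _),
    Real.sqrt_sq (add_nonneg (sNormA_nonneg A u) (sNormA_nonneg A v))] at h3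

lemma normsq_add_smul (hA : A.IsPositive) (u v : H) (b : ℂ) (hb : ‖b‖ = 1) :
    sNormA A (u + b • v) ^ 2
      = sNormA A u ^ 2 + sNormA A v ^ 2 + 2 * (b * sInnerA A u v).re := by
  rw [normsq_add hA, sInner_smul_right, sNormA_smul hA, hb, one_mul]
  ring

lemma sNormA_le_norm (hA : A.IsPositive) (z : H) :
    sNormA A z ≤ Real.sqrt ‖A‖ * ‖z‖ := by
  have h1 : (sInnerA A z z).re ≤ ‖A‖ * ‖z‖ ^ 2 := by
    have h2 : (sInnerA A z z).re ≤ ‖sInnerA A z z‖ := Complex.re_le_norm _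
    have h3 : ‖sInnerA A z z‖ ≤ ‖A z‖ * ‖z‖ := by
      exact norm_inner_le_norm _ _
    have h4 : ‖A z‖ ≤ ‖A‖ * ‖z‖ := A.le_opNorm z
    nlinarith [norm_nonneg z, norm_nonneg (A z)]
  calc sNormA A z = Real.sqrt ((sInnerA A z z).re) := rfl
    _ ≤ Real.sqrt (‖A‖ * ‖z‖ ^ 2) := Real.sqrt_le_sqrt h1
    _ = Real.sqrt ‖A‖ * ‖z‖ := by
        rw [Real.sqrt_mul (norm_nonneg A), Real.sqrt_sq (norm_nonneg z)]

/-- `S` is an `A`-adjoint partner of `T`. -/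
def AdjPair (A T S : H →L[ℂ] H) : Prop := A ∘L S = adjoint T ∘L A

lemma AdjPair.symm {T S : H →L[ℂ] H} (hA : A.IsPositive) (hp : AdjPair A T S) :
    AdjPair A S T := by
  unfold AdjPair at *
  have hadj : adjoint A = A := by rw [← star_eq_adjoint]; exact hA.isSelfAdjoint
  have h := congrArg adjoint hp
  rw [adjoint_comp, adjoint_comp, adjoint_adjoint, hadj] at h
  exact h.symm

lemma AdjPair.comp {T S T' S' : H →L[ℂ] H} (hp : AdjPair A T S) (hq : AdjPair A T' S') :
    AdjPair A (T ∘L T') (S' ∘L S) := by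
  unfold AdjPair at *
  rw [adjoint_comp]
  calc A ∘L (S' ∘L S) = (A ∘L S') ∘L S := (ContinuousLinearMap.comp_assoc _ _ _).symm
    _ = (adjoint T' ∘L A) ∘L S := by rw [hq]
    _ = adjoint T' ∘L (A ∘L S) := ContinuousLinearMap.comp_assoc _ _ _
    _ = adjoint T' ∘L (adjoint T ∘L A) := by rw [hp]
    _ = (adjoint T' ∘L adjoint T) ∘L A := (ContinuousLinearMap.comp_assoc _ _ _).symm

lemma AdjPair.add {T S T' S' : H →L[ℂ] H} (hp : AdjPair A T S) (hq : AdjPair A T' S') :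
    AdjPair A (T + T') (S + S') := by
  unfold AdjPair at *
  have hadj : adjoint (T + T') = adjoint T + adjoint T' := by
    rw [← star_eq_adjoint, star_add, star_eq_adjoint, star_eq_adjoint]
  rw [hadj, ContinuousLinearMap.comp_add, ContinuousLinearMap.add_comp, hp, hq]

lemma AdjPair.smulp {T S : H →L[ℂ] H} (hp : AdjPair A T S) (b : ℂ) :
    AdjPair A (b • T) ((starRingEnd ℂ) b • S) := by
  unfold AdjPair at *
  have hadj : adjoint (b • T) = (starRingEnd ℂ) b • adjoint T := by
    rw [← star_eq_adjoint, star_smul, star_eq_adjoint]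
    rfl
  rw [hadj, ContinuousLinearMap.comp_smul, ContinuousLinearMap.smul_comp, hp]

lemma AdjPair.sInner {T S : H →L[ℂ] H} (hA : A.IsPositive) (hp : AdjPair A T S) (u v : H) :
    sInnerA A (T u) v = sInnerA A u (S v) := by
  unfold sInnerA
  calc (inner ℂ (A (T u)) v : ℂ) = inner ℂ (T u) (A v) := isSym hA (T u) v
    _ = inner ℂ u (adjoint T (A v)) := (adjoint_inner_right T u (A v)).symm
    _ = inner ℂ u ((adjoint T ∘L A) v) := rfl
    _ = inner ℂ u ((A ∘L S) v) := by rw [hp]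
    _ = inner ℂ u (A (S v)) := rfl
    _ = inner ℂ (A u) (S v) := (isSym hA u (S v)).symm

lemma abs_partner {T S : H →L[ℂ] H} (hA : A.IsPositive) (hp : AdjPair A T S) (x : H) :
    ‖sInnerA A (S x) x‖ = ‖sInnerA A (T x) x‖ := by
  have h1 : sInnerA A (S x) x = sInnerA A x (T x) := (hp.symm hA).sInner hA x x
  have h2 : sInnerA A x (T x) = (starRingEnd ℂ) (sInnerA A (T x) x) := (sInner_conj hA _ _).symm
  rw [h1, h2, Complex.norm_conj]

/-- If `A ∘ G` is positive then `G` is `A`-bounded with constant `‖G‖`. -/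
lemma logconvex_bound (hA : A.IsPositive) {G : H →L[ℂ] H}
    (hAG : (A ∘L G).IsPositive) (x : H) :
    sNormA A (G x) ≤ ‖G‖ * sNormA A x := by
  -- generic two-step Cauchy-Schwarz
  have key : ∀ y : H, sNormA A (G y) ^ 2 ≤ sNormA A y * sNormA A (G (G y)) := by
    intro y
    set s := sNormA A (G y) with hs
    set u := sNormA A y with hu
    set v := sNormA A (G (G y)) with hv
    have h1 : s ^ 2 ≤ Real.sqrt (s * u) * Real.sqrt (v * s) := by
      have e1 : s ^ 2 = (inner ℂ ((A ∘L G) y) (G y) : ℂ).re := by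
        rw [hs, sq_sNormA hA]; rfl
      have e2 : (inner ℂ ((A ∘L G) y) (G y) : ℂ).re ≤ ‖(inner ℂ ((A ∘L G) y) (G y) : ℂ)‖ :=
        Complex.re_le_norm _
      have e3 := cs_pos hAG y (G y)
      have e4 : Real.sqrt ((inner ℂ ((A ∘L G) y) y : ℂ)).re ≤ Real.sqrt (s * u) := by
        apply Real.sqrt_le_sqrt
        have : (inner ℂ ((A ∘L G) y) y : ℂ) = sInnerA A (G y) y := rfl
        rw [this]
        calc (sInnerA A (G y) y).re ≤ ‖sInnerA A (G y) y‖ := Complex.re_le_norm _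
          _ ≤ sNormA A (G y) * sNormA A y := cs hA _ _
      have e5 : Real.sqrt ((inner ℂ ((A ∘L G) (G y)) (G y) : ℂ)).re ≤ Real.sqrt (v * s) := by
        apply Real.sqrt_le_sqrt
        have : (inner ℂ ((A ∘L G) (G y)) (G y) : ℂ) = sInnerA A (G (G y)) (G y) := rfl
        rw [this]
        calc (sInnerA A (G (G y)) (G y)).re ≤ ‖sInnerA A (G (G y)) (G y)‖ :=
              Complex.re_le_norm _
          _ ≤ sNormA A (G (G y)) * sNormA A (G y) := cs hA _ _
      calc s ^ 2 = (inner ℂ ((A ∘L G) y) (G y) : ℂ).re := e1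
        _ ≤ ‖(inner ℂ ((A ∘L G) y) (G y) : ℂ)‖ := e2
        _ ≤ Real.sqrt ((inner ℂ ((A ∘L G) y) y : ℂ)).re
            * Real.sqrt ((inner ℂ ((A ∘L G) (G y)) (G y) : ℂ)).re := e3
        _ ≤ Real.sqrt (s * u) * Real.sqrt (v * s) := by
            apply mul_le_mul e4 e5 (Real.sqrt_nonneg _) (Real.sqrt_nonneg _)
    have hs0 : 0 ≤ s := sNormA_nonneg A _
    have hu0 : 0 ≤ u := sNormA_nonneg A _
    have hv0 : 0 ≤ v := sNormA_nonneg A _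
    have h2 : Real.sqrt (s * u) * Real.sqrt (v * s) = s * Real.sqrt (u * v) := by
      rw [← Real.sqrt_mul (by positivity)]
      have : s * u * (v * s) = s ^ 2 * (u * v) := by ring
      rw [this, Real.sqrt_mul (sq_nonneg s), Real.sqrt_sq hs0]
    rw [h2] at h1
    by_cases hs' : s = 0
    · rw [hs']
      norm_num
      exact mul_nonneg hu0 hv0
    · have hspos : 0 < s := lt_of_le_of_ne hs0 (Ne.symm hs')
      have h3 : s ≤ Real.sqrt (u * v) := by
        have h4 : s * s ≤ s * Real.sqrt (u * v) := by nlinarith [h1]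
        exact le_of_mul_le_mul_left h4 hspos
      calc s ^ 2 ≤ Real.sqrt (u * v) ^ 2 := by
            apply pow_le_pow_left₀ hs0 h3
        _ = u * v := Real.sq_sqrt (by positivity)
  -- sequence
  set a : ℕ → ℝ := fun k => sNormA A ((G ^ k) x) with ha
  have hpow : ∀ k : ℕ, (G ^ (k + 1)) x = G ((G ^ k) x) := by
    intro k
    rw [pow_succ']
    rfl
  have ha0 : ∀ k, 0 ≤ a k := fun k => sNormA_nonneg A _
  have hlog : ∀ k : ℕ, a (k + 1) ^ 2 ≤ a k * a (k + 2) := by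
    intro k
    have e1 : a (k + 1) = sNormA A (G ((G ^ k) x)) := by
      simp only [ha]; rw [hpow]
    have e2 : a (k + 2) = sNormA A (G (G ((G ^ k) x))) := by
      simp only [ha]; rw [hpow (k + 1), hpow k]
    rw [e1, e2]
    exact key _
  have hgrow : ∀ k : ℕ, a k ≤ Real.sqrt ‖A‖ * (‖G‖ ^ k * ‖x‖) := by
    intro k
    have h1 : ‖(G ^ k) x‖ ≤ ‖G‖ ^ k * ‖x‖ := by
      induction k with
      | zero => simp
      | succ n ih =>
          rw [hpow n]
          calc ‖G ((G ^ n) x)‖ ≤ ‖G‖ * ‖(G ^ n) x‖ := G.le_opNorm _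
            _ ≤ ‖G‖ * (‖G‖ ^ n * ‖x‖) := by
                exact mul_le_mul_of_nonneg_left ih (norm_nonneg G)
            _ = ‖G‖ ^ (n + 1) * ‖x‖ := by ring
    calc a k ≤ Real.sqrt ‖A‖ * ‖(G ^ k) x‖ := sNormA_le_norm hA _
      _ ≤ Real.sqrt ‖A‖ * (‖G‖ ^ k * ‖x‖) := by
          exact mul_le_mul_of_nonneg_left h1 (Real.sqrt_nonneg _)
  -- goal : a 1 ≤ ‖G‖ * a 0
  show a 1 ≤ ‖G‖ * a 0
  by_cases h1 : a 1 = 0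
  · rw [h1]
    exact mul_nonneg (norm_nonneg G) (ha0 0)
  have ha1 : 0 < a 1 := lt_of_le_of_ne (ha0 1) (Ne.symm h1)
  have ha0pos : 0 < a 0 := by
    by_contra h
    push_neg at h
    have h0 : a 0 = 0 := le_antisymm h (ha0 0)
    have h2 := hlog 0
    rw [h0, zero_mul] at h2
    nlinarith [ha1]
  have hG : 0 < ‖G‖ := by
    rcases (norm_nonneg G).lt_or_eq with h | h
    · exact h
    · exfalso
      have hG0 : G = 0 := by
        have := norm_eq_zero.mp h.symm
        exact this
      have : a 1 = 0 := by
        simp only [ha, pow_one, hG0]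
        simp [sNormA, sInnerA]
      exact h1 this
  have hpos : ∀ k, 0 < a k := by
    have hstep : ∀ k, 0 < a k → 0 < a (k + 1) → 0 < a (k + 2) := by
      intro k hk hk1
      by_contra hcon
      push_neg at hcon
      have h2 : a (k + 2) = 0 := le_antisymm hcon (ha0 _)
      have h3 := hlog k
      rw [h2, mul_zero] at h3
      nlinarith [hk1]
    intro k
    induction k using Nat.strong_induction_on with
    | _ k ih =>
      match k with
      | 0 => exact ha0pos
      | 1 => exact ha1
      | (n + 2) => exact hstep n (ih n (by omega)) (ih (n+1) (by omega))
  have hratio : ∀ k, a 1 * a k ≤ a 0 * a (k + 1) := by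
    intro k
    induction k with
    | zero => rw [mul_comm]
    | succ n ih =>
        have h := hlog n
        have hn1 : 0 < a (n + 1) := hpos (n + 1)
        have : (a 1 * a (n + 1)) * a (n + 1) ≤ (a 0 * a (n + 2)) * a (n + 1) := by
          calc (a 1 * a (n + 1)) * a (n + 1) = a 1 * a (n + 1) ^ 2 := by ring
            _ ≤ a 1 * (a n * a (n + 2)) := by
                exact mul_le_mul_of_nonneg_left h (le_of_lt ha1)
            _ = (a 1 * a n) * a (n + 2) := by ring
            _ ≤ (a 0 * a (n + 1)) * a (n + 2) := by
                exact mul_le_mul_of_nonneg_right ih (ha0 _)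
            _ = (a 0 * a (n + 2)) * a (n + 1) := by ring
        exact le_of_mul_le_mul_right this hn1
  have hpowle : ∀ n : ℕ, a 1 ^ n * a 0 ≤ a 0 ^ n * a n := by
    intro n
    induction n with
    | zero => simp
    | succ n ih =>
        calc a 1 ^ (n + 1) * a 0 = a 1 * (a 1 ^ n * a 0) := by ring
          _ ≤ a 1 * (a 0 ^ n * a n) := by
              exact mul_le_mul_of_nonneg_left ih (le_of_lt ha1)
          _ = a 0 ^ n * (a 1 * a n) := by ring
          _ ≤ a 0 ^ n * (a 0 * a (n + 1)) := by
              exact mul_le_mul_of_nonneg_left (hratio n) (by positivity)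
          _ = a 0 ^ (n + 1) * a (n + 1) := by ring
  -- conclude
  by_contra hcon
  push_neg at hcon
  -- hcon : ‖G‖ * a 0 < a 1
  have ht : 1 < a 1 / (a 0 * ‖G‖) := by
    rw [lt_div_iff₀ (by positivity)]
    nlinarith [hcon]
  obtain ⟨n, hn⟩ := pow_unbounded_of_one_lt (Real.sqrt ‖A‖ * ‖x‖ / a 0) ht
  have hK : (a 1 / (a 0 * ‖G‖)) ^ n ≤ Real.sqrt ‖A‖ * ‖x‖ / a 0 := by
    rw [div_pow, div_le_div_iff₀ (by positivity) ha0pos]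
    calc a 1 ^ n * a 0 ≤ a 0 ^ n * a n := hpowle n
      _ ≤ a 0 ^ n * (Real.sqrt ‖A‖ * (‖G‖ ^ n * ‖x‖)) := by
          exact mul_le_mul_of_nonneg_left (hgrow n) (by positivity)
      _ = Real.sqrt ‖A‖ * ‖x‖ * (a 0 * ‖G‖) ^ n := by ring
  exact absurd (lt_of_lt_of_le hn hK) (lt_irrefl _)

/-- `A`-boundedness. -/
def ABnd (A T : H →L[ℂ] H) : Prop := ∃ c : ℝ, 0 ≤ c ∧ ∀ x : H, sNormA A (T x) ≤ c * sNormA A x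

lemma AdjPair.sq_bound {T S : H →L[ℂ] H} (hA : A.IsPositive) (hp : AdjPair A T S) (x : H) :
    sNormA A (T x) ^ 2 ≤ ‖S ∘L T‖ * sNormA A x ^ 2 := by
  have hpos : (A ∘L (S ∘L T)).IsPositive := by
    have h1 : A ∘L (S ∘L T) = adjoint T ∘L (A ∘L T) := by
      rw [← ContinuousLinearMap.comp_assoc, hp, ContinuousLinearMap.comp_assoc]
    rw [h1]
    exact hA.adjoint_conj T
  have h1 : sNormA A (T x) ^ 2 = (sInnerA A x ((S ∘L T) x)).re := by
    rw [sq_sNormA hA]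
    have := hp.sInner hA x (T x)
    rw [this]
    rfl
  have h2 : (sInnerA A x ((S ∘L T) x)).re ≤ ‖sInnerA A x ((S ∘L T) x)‖ :=
    Complex.re_le_norm _
  have h3 : ‖sInnerA A x ((S ∘L T) x)‖ ≤ sNormA A x * sNormA A ((S ∘L T) x) :=
    cs hA _ _
  have h4 : sNormA A ((S ∘L T) x) ≤ ‖S ∘L T‖ * sNormA A x :=
    logconvex_bound hA hpos x
  nlinarith [sNormA_nonneg A x, sNormA_nonneg A ((S ∘L T) x)]

lemma AdjPair.bound {T S : H →L[ℂ] H} (hA : A.IsPositive) (hp : AdjPair A T S) (x : H) :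
    sNormA A (T x) ≤ Real.sqrt ‖S ∘L T‖ * sNormA A x := by
  have h := hp.sq_bound hA x
  have h2 := Real.sqrt_le_sqrt h
  rwa [Real.sqrt_sq (sNormA_nonneg A _), Real.sqrt_mul (norm_nonneg _),
    Real.sqrt_sq (sNormA_nonneg A _)] at h2

lemma AdjPair.abnd {T S : H →L[ℂ] H} (hA : A.IsPositive) (hp : AdjPair A T S) : ABnd A T :=
  ⟨Real.sqrt ‖S ∘L T‖, Real.sqrt_nonneg _, hp.bound hA⟩

-- opNormA facts
lemma opNormA_nonneg (A T : H →L[ℂ] H) : 0 ≤ opNormA A T := by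
  apply Real.sSup_nonneg
  rintro r ⟨x, hx, h1, rfl⟩
  exact sNormA_nonneg A _

lemma opNormA_bddAbove {T : H →L[ℂ] H} (hb : ABnd A T) :
    BddAbove {r | ∃ x ∈ closure (Set.range A), sNormA A x = 1 ∧ r = sNormA A (T x)} := by
  obtain ⟨c, hc, hcb⟩ := hb
  refine ⟨c, ?_⟩
  rintro r ⟨x, hx, h1, rfl⟩
  have := hcb x
  rwa [h1, mul_one] at this

lemma le_opNormA {T : H →L[ℂ] H} (hb : ABnd A T) {x : H}
    (hx : x ∈ closure (Set.range A)) (h1 : sNormA A x = 1) :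
    sNormA A (T x) ≤ opNormA A T :=
  le_csSup (opNormA_bddAbove hb) ⟨x, hx, h1, rfl⟩

lemma opNormA_le {T : H →L[ℂ] H} {c : ℝ} (hc : 0 ≤ c)
    (h : ∀ x, x ∈ closure (Set.range A) → sNormA A x = 1 → sNormA A (T x) ≤ c) :
    opNormA A T ≤ c := by
  apply Real.sSup_le _ hc
  rintro r ⟨x, hx, h1, rfl⟩
  exact h x hx h1

/-- The key global bound `‖T x‖_A ≤ ‖T‖_A ‖x‖_A`. -/
lemma apply_le_opNormA (hA : A.IsPositive) {T : H →L[ℂ] H} (hb : ABnd A T) (x : H) :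
    sNormA A (T x) ≤ opNormA A T * sNormA A x := by
  classical
  set K : Submodule ℂ H := (LinearMap.range (A : H →ₗ[ℂ] H)).topologicalClosure with hK
  haveI : CompleteSpace K := (Submodule.isClosed_topologicalClosure _).completeSpace_coe
  set p : H := ((K.orthogonalProjection x : K) : H) with hpdef
  have hpK : p ∈ K := (K.orthogonalProjection x).2
  set k : H := x - p with hkdef
  have hkperp : k ∈ Kᗮ := K.sub_starProjection_mem_orthogonal x
  have hxpk : x = p + k := by rw [hkdef]; abel
  have hmemK : ∀ z : H, A z ∈ K := by
    intro z
    apply Submodule.le_topologicalClosure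
    exact LinearMap.mem_range_self (A : H →ₗ[ℂ] H) z
  have hinner0 : ∀ u : H, sInnerA A u k = 0 := fun u =>
    Submodule.inner_right_of_mem_orthogonal (hmemK u) hkperp
  have hclos : ∀ z : H, z ∈ K → z ∈ closure (Set.range A) := by
    intro z hz
    have : (K : Set H) = closure (Set.range A) := by
      rw [hK, Submodule.topologicalClosure_coe, LinearMap.coe_range, ContinuousLinearMap.coe_coe]
    rw [← this]
    exact hz
  have hnk : sNormA A k = 0 := by
    unfold sNormA
    rw [hinner0 k]
    simp
  have hnx : sNormA A x = sNormA A p := by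
    have h2 : sNormA A x ^ 2 = sNormA A p ^ 2 := by
      rw [hxpk, normsq_add hA, hinner0 p]
      rw [sq_sNormA hA k]
      have : sInnerA A k k = 0 := hinner0 k
      rw [this]
      simp
    have h3 := congrArg Real.sqrt h2
    rwa [Real.sqrt_sq (sNormA_nonneg A _), Real.sqrt_sq (sNormA_nonneg A _)] at h3
  obtain ⟨cb, hcb0, hcb⟩ := hb
  have hTk : sNormA A (T k) = 0 := by
    have := hcb k
    rw [hnk, mul_zero] at this
    exact le_antisymm this (sNormA_nonneg A _)
  have hTx : sNormA A (T x) ≤ sNormA A (T p) := by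
    have h4 : T x = T p + T k := by rw [hxpk, map_add]
    calc sNormA A (T x) = sNormA A (T p + T k) := by rw [h4]
      _ ≤ sNormA A (T p) + sNormA A (T k) := sNormA_add_le hA _ _
      _ = sNormA A (T p) := by rw [hTk, add_zero]
  by_cases hp0 : sNormA A p = 0
  · have hTp : sNormA A (T p) = 0 := by
      have := hcb p
      rw [hp0, mul_zero] at this
      exact le_antisymm this (sNormA_nonneg A _)
    calc sNormA A (T x) ≤ sNormA A (T p) := hTx
      _ = 0 := hTp
      _ ≤ opNormA A T * sNormA A x :=
          mul_nonneg (opNormA_nonneg A T) (sNormA_nonneg A x)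
  · have hppos : 0 < sNormA A p := lt_of_le_of_ne (sNormA_nonneg A p) (Ne.symm hp0)
    set q : H := (((sNormA A p)⁻¹ : ℝ) : ℂ) • p with hq
    have hqK : q ∈ K := K.smul_mem _ hpK
    have hq1 : sNormA A q = 1 := by
      rw [hq, sNormA_smul hA, Complex.norm_real, Real.norm_eq_abs, abs_of_nonneg (by positivity)]
      field_simp
    have hmem : sNormA A (T q) ≤ opNormA A T :=
      le_opNormA ⟨cb, hcb0, hcb⟩ (hclos q hqK) hq1
    have hTq : sNormA A (T q) = (sNormA A p)⁻¹ * sNormA A (T p) := by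
      rw [hq, map_smul, sNormA_smul hA, Complex.norm_real, Real.norm_eq_abs, abs_of_nonneg (by positivity)]
    rw [hTq] at hmem
    have h5 : sNormA A (T p) ≤ opNormA A T * sNormA A p := by
      have h6 : (sNormA A p)⁻¹ * sNormA A (T p) * sNormA A p
          ≤ opNormA A T * sNormA A p :=
        mul_le_mul_of_nonneg_right hmem (le_of_lt hppos)
      have h7 : (sNormA A p)⁻¹ * sNormA A (T p) * sNormA A p = sNormA A (T p) := by
        field_simp
      rw [h7] at h6
      exact h6
    calc sNormA A (T x) ≤ sNormA A (T p) := hTx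
      _ ≤ opNormA A T * sNormA A p := h5
      _ = opNormA A T * sNormA A x := by rw [hnx]

lemma opNormA_add_le (hA : A.IsPositive) {V W : H →L[ℂ] H}
    (hV : ABnd A V) (hW : ABnd A W) :
    opNormA A (V + W) ≤ opNormA A V + opNormA A W := by
  apply opNormA_le (add_nonneg (opNormA_nonneg A V) (opNormA_nonneg A W))
  intro x hx h1
  have hVx : sNormA A (V x) ≤ opNormA A V := le_opNormA hV hx h1
  have hWx : sNormA A (W x) ≤ opNormA A W := le_opNormA hW hx h1
  calc sNormA A ((V + W) x) = sNormA A (V x + W x) := rfl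
    _ ≤ sNormA A (V x) + sNormA A (W x) := sNormA_add_le hA _ _
    _ ≤ opNormA A V + opNormA A W := add_le_add hVx hWx

lemma opNormA_comp_le (hA : A.IsPositive) {V W : H →L[ℂ] H}
    (hV : ABnd A V) (hW : ABnd A W) :
    opNormA A (V ∘L W) ≤ opNormA A V * opNormA A W := by
  apply opNormA_le (mul_nonneg (opNormA_nonneg A V) (opNormA_nonneg A W))
  intro x hx h1
  have hWx : sNormA A (W x) ≤ opNormA A W := le_opNormA hW hx h1
  calc sNormA A ((V ∘L W) x) = sNormA A (V (W x)) := rfl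
    _ ≤ opNormA A V * sNormA A (W x) := apply_le_opNormA hA hV (W x)
    _ ≤ opNormA A V * opNormA A W :=
        mul_le_mul_of_nonneg_left hWx (opNormA_nonneg A V)

lemma opNormA_eq_partner (hA : A.IsPositive) {T S : H →L[ℂ] H} (hp : AdjPair A T S) :
    opNormA A T = opNormA A S := by
  have main : ∀ (V W : H →L[ℂ] H), AdjPair A V W → opNormA A V ≤ opNormA A W := by
    intro V W hq
    apply opNormA_le (opNormA_nonneg A W)
    intro x hx h1
    have e1 : sNormA A (V x) ^ 2 = (sInnerA A x (W (V x))).re := by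
      rw [sq_sNormA hA, hq.sInner hA x (V x)]
    have e2 : (sInnerA A x (W (V x))).re ≤ sNormA A x * sNormA A (W (V x)) :=
      le_trans (Complex.re_le_norm _) (cs hA _ _)
    have e3 : sNormA A (W (V x)) ≤ opNormA A W * sNormA A (V x) :=
      apply_le_opNormA hA ((hq.symm hA).abnd hA) (V x)
    have e4 : sNormA A (V x) ^ 2 ≤ opNormA A W * sNormA A (V x) := by
      rw [h1] at e2
      nlinarith [e1]
    by_cases h0 : sNormA A (V x) = 0
    · rw [h0]; exact opNormA_nonneg A W
    · have hpos : 0 < sNormA A (V x) := lt_of_le_of_ne (sNormA_nonneg A _) (Ne.symm h0)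
      nlinarith [e4]
  exact le_antisymm (main T S hp) (main S T (hp.symm hA))

lemma opNormA_le_sqrt_comp (hA : A.IsPositive) {T S : H →L[ℂ] H} (hp : AdjPair A T S) :
    opNormA A S ≤ Real.sqrt (opNormA A (T ∘L S)) := by
  have hTS : AdjPair A (T ∘L S) (T ∘L S) := hp.comp (hp.symm hA)
  apply opNormA_le (Real.sqrt_nonneg _)
  intro x hx h1
  have e1 : sNormA A (S x) ^ 2 = (sInnerA A x ((T ∘L S) x)).re := by
    rw [sq_sNormA hA, (hp.symm hA).sInner hA x (S x)]
    rfl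
  have e2 : (sInnerA A x ((T ∘L S) x)).re ≤ sNormA A x * sNormA A ((T ∘L S) x) :=
    le_trans (Complex.re_le_norm _) (cs hA _ _)
  have e3 : sNormA A ((T ∘L S) x) ≤ opNormA A (T ∘L S) :=
    le_opNormA (hTS.abnd hA) hx h1
  have e4 : sNormA A (S x) ^ 2 ≤ opNormA A (T ∘L S) := by
    rw [h1] at e2
    nlinarith [e1]
  calc sNormA A (S x) = Real.sqrt (sNormA A (S x) ^ 2) :=
        (Real.sqrt_sq (sNormA_nonneg A _)).symm
    _ ≤ Real.sqrt (opNormA A (T ∘L S)) := Real.sqrt_le_sqrt e4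

-- wA facts
lemma wA_nonneg (A V : H →L[ℂ] H) : 0 ≤ wA A V := by
  apply Real.sSup_nonneg
  rintro r ⟨x, h1, rfl⟩
  exact norm_nonneg _

lemma wA_bddAbove (hA : A.IsPositive) {V : H →L[ℂ] H} (hb : ABnd A V) :
    BddAbove {r | ∃ x, sNormA A x = 1 ∧ r = ‖sInnerA A (V x) x‖} := by
  obtain ⟨c, hc, hcb⟩ := hb
  refine ⟨c, ?_⟩
  rintro r ⟨x, h1, rfl⟩
  calc ‖sInnerA A (V x) x‖ ≤ sNormA A (V x) * sNormA A x := cs hA _ _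
    _ ≤ (c * sNormA A x) * sNormA A x :=
        mul_le_mul_of_nonneg_right (hcb x) (sNormA_nonneg A x)
    _ = c := by rw [h1]; ring

lemma le_wA (hA : A.IsPositive) {V : H →L[ℂ] H} (hb : ABnd A V) {x : H}
    (h1 : sNormA A x = 1) :
    ‖sInnerA A (V x) x‖ ≤ wA A V :=
  le_csSup (wA_bddAbove hA hb) ⟨x, h1, rfl⟩

lemma wA_le {V : H →L[ℂ] H} {c : ℝ} (hc : 0 ≤ c)
    (h : ∀ x, sNormA A x = 1 → ‖sInnerA A (V x) x‖ ≤ c) :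
    wA A V ≤ c := by
  apply Real.sSup_le _ hc
  rintro r ⟨x, h1, rfl⟩
  exact h x h1

lemma abs_le_wA_mul (hA : A.IsPositive) {V : H →L[ℂ] H} (hb : ABnd A V) (x : H) :
    ‖sInnerA A (V x) x‖ ≤ wA A V * sNormA A x ^ 2 := by
  by_cases h0 : sNormA A x = 0
  · have h1 : ‖sInnerA A (V x) x‖ ≤ sNormA A (V x) * sNormA A x := cs hA _ _
    rw [h0, mul_zero] at h1
    have h2 := norm_nonneg (sInnerA A (V x) x)
    rw [h0]
    calc ‖sInnerA A (V x) x‖ ≤ 0 := h1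
      _ ≤ wA A V * 0 ^ 2 := by simp
  · have hpos : 0 < sNormA A x := lt_of_le_of_ne (sNormA_nonneg A x) (Ne.symm h0)
    set x' : H := (((sNormA A x)⁻¹ : ℝ) : ℂ) • x with hx'
    have h1 : sNormA A x' = 1 := by
      rw [hx', sNormA_smul hA, Complex.norm_real, Real.norm_eq_abs, abs_of_nonneg (by positivity)]
      field_simp
    have h2 := le_wA hA hb h1
    have h3 : sInnerA A (V x') x' = ((((sNormA A x)⁻¹ : ℝ) : ℂ) * (((sNormA A x)⁻¹ : ℝ) : ℂ))
        * sInnerA A (V x) x := by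
      rw [hx', map_smul, sInner_smul_left, sInner_smul_right, Complex.conj_ofReal]
      ring
    rw [h3, norm_mul, norm_mul, Complex.norm_real, Real.norm_eq_abs] at h2
    rw [abs_of_nonneg (le_of_lt (inv_pos.mpr hpos))] at h2
    have h6 := mul_le_mul_of_nonneg_left h2 (sq_nonneg (sNormA A x))
    have h7 : sNormA A x ^ 2 * ((sNormA A x)⁻¹ * (sNormA A x)⁻¹
        * ‖sInnerA A (V x) x‖) = ‖sInnerA A (V x) x‖ := by
      field_simp
    rw [h7] at h6
    linarith [h6]

lemma sInner_sub_left (A : H →L[ℂ] H) (u v w : H) :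
    sInnerA A (u - v) w = sInnerA A u w - sInnerA A v w := by
  unfold sInnerA; rw [map_sub, inner_sub_left]

lemma sInner_sub_right (A : H →L[ℂ] H) (u v w : H) :
    sInnerA A u (v - w) = sInnerA A u v - sInnerA A u w := by
  unfold sInnerA; rw [inner_sub_right]

lemma normsq_sub (hA : A.IsPositive) (u v : H) :
    sNormA A (u - v) ^ 2 = sNormA A u ^ 2 - 2 * (sInnerA A u v).re + sNormA A v ^ 2 := by
  have h : u - v = u + (-1 : ℂ) • v := by rw [neg_one_smul]; abel
  rw [h, normsq_add hA, sNormA_smul hA, sInner_smul_right]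
  have habs : ‖(-1 : ℂ)‖ = 1 := by simp
  have hre : ((-1 : ℂ) * sInnerA A u v).re = -((sInnerA A u v).re) := by simp
  rw [habs, one_mul, hre]
  ring

lemma parallelogramA (hA : A.IsPositive) (u v : H) :
    sNormA A (u + v) ^ 2 + sNormA A (u - v) ^ 2
      = 2 * sNormA A u ^ 2 + 2 * sNormA A v ^ 2 := by
  rw [normsq_add hA, normsq_sub hA]
  ring

lemma re_polar (hA : A.IsPositive) {C : H →L[ℂ] H} (hp : AdjPair A C C) (u v : H) :
    4 * (sInnerA A (C u) v).re
      = (sInnerA A (C (u + v)) (u + v)).re - (sInnerA A (C (u - v)) (u - v)).re := by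
  have hvu : (sInnerA A (C v) u).re = (sInnerA A (C u) v).re := by
    have h1 : sInnerA A (C v) u = (starRingEnd ℂ) (sInnerA A (C u) v) := by
      rw [hp.sInner hA u v, sInner_conj hA]
    rw [h1, Complex.conj_re]
  have h1 : sInnerA A (C (u + v)) (u + v)
      = sInnerA A (C u) u + sInnerA A (C u) v + sInnerA A (C v) u + sInnerA A (C v) v := by
    rw [map_add]
    simp only [sInner_add_left, sInner_add_right]
    ring
  have h2 : sInnerA A (C (u - v)) (u - v)
      = sInnerA A (C u) u - sInnerA A (C u) v - sInnerA A (C v) u + sInnerA A (C v) v := by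
    rw [map_sub]
    simp only [sInner_sub_left, sInner_sub_right]
    ring
  rw [h1, h2]
  simp only [Complex.add_re, Complex.sub_re]
  rw [hvu]
  ring

lemma opNormA_le_wA (hA : A.IsPositive) {C : H →L[ℂ] H} (hp : AdjPair A C C) :
    opNormA A C ≤ wA A C := by
  have hb : ABnd A C := hp.abnd hA
  apply opNormA_le (wA_nonneg A C)
  intro p hpc h1
  by_cases h0 : sNormA A (C p) = 0
  · rw [h0]
    exact wA_nonneg A C
  · have hpos : 0 < sNormA A (C p) := lt_of_le_of_ne (sNormA_nonneg A _) (Ne.symm h0)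
    set y : H := (((sNormA A (C p))⁻¹ : ℝ) : ℂ) • (C p) with hy
    have hy1 : sNormA A y = 1 := by
      rw [hy, sNormA_smul hA, Complex.norm_real, Real.norm_eq_abs, abs_of_nonneg (le_of_lt (inv_pos.mpr hpos))]
      field_simp
    have hre : (sInnerA A (C p) y).re = sNormA A (C p) := by
      rw [hy, sInner_smul_right]
      have h3 : ((((sNormA A (C p))⁻¹ : ℝ) : ℂ) * sInnerA A (C p) (C p)).re
          = (sNormA A (C p))⁻¹ * (sInnerA A (C p) (C p)).re := Complex.re_ofReal_mul _ _
      rw [h3, ← sq_sNormA hA]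
      field_simp
    have hpolar := re_polar hA hp p y
    have hb1 : (sInnerA A (C (p + y)) (p + y)).re ≤ wA A C * sNormA A (p + y) ^ 2 :=
      le_trans (Complex.re_le_norm _) (abs_le_wA_mul hA hb (p + y))
    have hb2 : -(wA A C * sNormA A (p - y) ^ 2) ≤ (sInnerA A (C (p - y)) (p - y)).re := by
      have habs := abs_le_wA_mul hA hb (p - y)
      have h5 : -((sInnerA A (C (p - y)) (p - y)).re)
          ≤ ‖sInnerA A (C (p - y)) (p - y)‖ := by
        have h6 := Complex.re_le_norm (-(sInnerA A (C (p - y)) (p - y)))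
        simpa using h6
      linarith
    have h4 : 4 * sNormA A (C p)
        ≤ wA A C * (sNormA A (p + y) ^ 2 + sNormA A (p - y) ^ 2) := by
      rw [← hre]
      nlinarith [hpolar, hb1, hb2]
    have hpar := parallelogramA hA p y
    rw [hpar, h1, hy1] at h4
    nlinarith [h4]

lemma ABnd.addb (hA : A.IsPositive) {V W : H →L[ℂ] H} (hV : ABnd A V) (hW : ABnd A W) :
    ABnd A (V + W) := by
  obtain ⟨cV, hcV, hV⟩ := hV
  obtain ⟨cW, hcW, hW⟩ := hW
  refine ⟨cV + cW, by positivity, fun x => ?_⟩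
  calc sNormA A ((V + W) x) = sNormA A (V x + W x) := rfl
    _ ≤ sNormA A (V x) + sNormA A (W x) := sNormA_add_le hA _ _
    _ ≤ cV * sNormA A x + cW * sNormA A x := add_le_add (hV x) (hW x)
    _ = (cV + cW) * sNormA A x := by ring

end Stmt13P

set_option maxHeartbeats 1000000 in
open Stmt13P in
theorem stmt13 {H : Type*} [NormedAddCommGroup H] [InnerProductSpace ℂ H] [CompleteSpace H]
    (A : H →L[ℂ] H) (hA : A.IsPositive)
    (T₁ T₂ T₁s T₂s : H →L[ℂ] H) (hT₁ : memBA A T₁) (hT₂ : memBA A T₂)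
    (hT₁s : IsSharpA A T₁ T₁s) (hT₂s : IsSharpA A T₂ T₂s) :
    wA A (T₁ ∘L T₂) ≤
      (1 / 4) * Real.sqrt (opNormA A (T₁s ∘L T₁ + T₂ ∘L T₂s) ^ 2 +
        4 * wA A (T₂ ∘L T₁) ^ 2 +
        2 * wA A ((T₂ ∘L T₁) ∘L (T₁s ∘L T₁ + T₂ ∘L T₂s) +
          (T₁s ∘L T₁ + T₂ ∘L T₂s) ∘L (T₂ ∘L T₁))) := by
  classical
  have p1 : AdjPair A T₁ T₁s := hT₁s.1
  have p2 : AdjPair A T₂ T₂s := hT₂s.1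
  have p1' : AdjPair A T₁s T₁ := p1.symm hA
  have p2' : AdjPair A T₂s T₂ := p2.symm hA
  set N : H →L[ℂ] H := T₁s ∘L T₁ + T₂ ∘L T₂s with hNdef
  set YX : H →L[ℂ] H := T₂ ∘L T₁ with hYXdef
  set SXY : H →L[ℂ] H := T₁s ∘L T₂s with hSXYdef
  set K : H →L[ℂ] H := YX ∘L N + N ∘L YX with hKdef
  have pN : AdjPair A N N := (p1'.comp p1).add (p2.comp p2')
  have pYX : AdjPair A YX SXY := p2.comp p1
  have pSXY : AdjPair A SXY YX := pYX.symm hA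
  have pK : AdjPair A K (N ∘L SXY + SXY ∘L N) := (pYX.comp pN).add (pN.comp pYX)
  have bYX : ABnd A YX := pYX.abnd hA
  have bK : ABnd A K := pK.abnd hA
  have bN : ABnd A N := pN.abnd hA
  have hwYX : 0 ≤ wA A YX := wA_nonneg A YX
  have hwK : 0 ≤ wA A K := wA_nonneg A K
  have hnN : 0 ≤ opNormA A N := opNormA_nonneg A N
  set S : ℝ := opNormA A N ^ 2 + 4 * wA A YX ^ 2 + 2 * wA A K with hSdef
  have hS0 : 0 ≤ S := by positivity
  apply wA_le (by positivity)
  intro x hx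
  set c : ℂ := sInnerA A ((T₁ ∘L T₂) x) x with hcdef
  by_cases h0 : c = 0
  · rw [h0, norm_zero]
    positivity
  set a : ℂ := (‖c‖ : ℂ) / c with hadef
  have hac : a * c = (‖c‖ : ℂ) := div_mul_cancel₀ _ h0
  have ha1 : ‖a‖ = 1 := by
    rw [hadef, norm_div, Complex.norm_real, Real.norm_eq_abs, abs_of_nonneg (norm_nonneg c)]
    have hcne : ‖c‖ ≠ 0 := by simpa using h0
    field_simp
  have hna1 : ‖-a‖ = 1 := by
    rw [show -a = (-1 : ℂ) * a by ring, norm_mul, ha1]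
    simp
  set Ea : H →L[ℂ] H := T₂ + a • T₁s with hEadef
  set Fa : H →L[ℂ] H := T₂s + (starRingEnd ℂ) a • T₁ with hFadef
  have pE : AdjPair A Ea Fa := p2.add (p1'.smulp a)
  set C : H →L[ℂ] H := (starRingEnd ℂ) a • YX + a • SXY with hCdef
  have pC : AdjPair A C C := by
    have h := (pYX.smulp ((starRingEnd ℂ) a)).add (pSXY.smulp a)
    have e : (starRingEnd ℂ) ((starRingEnd ℂ) a) • SXY + (starRingEnd ℂ) a • YX
        = (starRingEnd ℂ) a • YX + a • SXY := by
      rw [Complex.conj_conj]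
      abel
    rw [e] at h
    exact h
  set M : H →L[ℂ] H := N + C with hMdef
  have pM : AdjPair A M M := pN.add pC
  have bC : ABnd A C := pC.abnd hA
  have haa : a * (starRingEnd ℂ) a = 1 := by
    rw [Complex.mul_conj, Complex.normSq_eq_norm_sq, ha1]
    norm_num
  have hEF : Ea ∘L Fa = M := by
    rw [hMdef, hNdef, hCdef, hEadef, hFadef, hYXdef, hSXYdef]
    rw [ContinuousLinearMap.comp_add, ContinuousLinearMap.add_comp,
      ContinuousLinearMap.add_comp, ContinuousLinearMap.comp_smul,
      ContinuousLinearMap.comp_smul, ContinuousLinearMap.smul_comp,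
      ContinuousLinearMap.smul_comp, smul_smul, mul_comm ((starRingEnd ℂ) a) a, haa, one_smul]
    abel
  have hcross : sInnerA A (T₂ x) (T₁s x) = c := by
    rw [hcdef]
    exact (p1.sInner hA (T₂ x) x).symm
  have hDge : 2 * ‖c‖ ≤ sNormA A (T₂ x) ^ 2 + sNormA A (T₁s x) ^ 2 := by
    have h6 := normsq_add_smul hA (T₂ x) (T₁s x) (-a) hna1
    rw [hcross] at h6
    have h7 : ((-a) * c).re = -(‖c‖) := by
      rw [show (-a) * c = -(a * c) by ring, hac]
      simp
    rw [h7] at h6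
    have h8 := sq_nonneg (sNormA A (T₂ x + (-a) • T₁s x))
    rw [h6] at h8
    linarith
  have h4c : 4 * ‖c‖ ≤ sNormA A (Ea x) ^ 2 := by
    have h6 := normsq_add_smul hA (T₂ x) (T₁s x) a ha1
    rw [hcross] at h6
    have h7 : (a * c).re = ‖c‖ := by
      rw [hac]
      simp
    rw [h7] at h6
    have hEax : Ea x = T₂ x + a • T₁s x := rfl
    rw [hEax, h6]
    linarith
  have h5 : sNormA A (Ea x) ^ 2 ≤ opNormA A Ea ^ 2 := by
    have h8 := apply_le_opNormA hA (pE.abnd hA) x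
    rw [hx, mul_one] at h8
    exact pow_le_pow_left₀ (sNormA_nonneg A _) h8 2
  have h6' : opNormA A Ea ^ 2 ≤ opNormA A M := by
    have h9 : opNormA A Ea = opNormA A Fa := opNormA_eq_partner hA pE
    have h10 : opNormA A Fa ≤ Real.sqrt (opNormA A (Ea ∘L Fa)) := opNormA_le_sqrt_comp hA pE
    rw [hEF] at h10
    calc opNormA A Ea ^ 2 = opNormA A Fa ^ 2 := by rw [h9]
      _ ≤ Real.sqrt (opNormA A M) ^ 2 := pow_le_pow_left₀ (opNormA_nonneg A _) h10 2
      _ = opNormA A M := Real.sq_sqrt (opNormA_nonneg A _)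
  have h7c : 4 * ‖c‖ ≤ opNormA A M := le_trans h4c (le_trans h5 h6')
  have h8' : opNormA A M ^ 2 ≤ opNormA A (M ∘L M) := by
    have h10 := opNormA_le_sqrt_comp hA pM
    calc opNormA A M ^ 2 ≤ Real.sqrt (opNormA A (M ∘L M)) ^ 2 :=
          pow_le_pow_left₀ (opNormA_nonneg A _) h10 2
      _ = opNormA A (M ∘L M) := Real.sq_sqrt (opNormA_nonneg A _)
  have hMM : M ∘L M = (N ∘L N + (N ∘L C + C ∘L N)) + C ∘L C := by
    rw [hMdef]
    simp only [ContinuousLinearMap.comp_add, ContinuousLinearMap.add_comp]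
    abel
  have pNC : AdjPair A (N ∘L C + C ∘L N) (N ∘L C + C ∘L N) := by
    have h := (pN.comp pC).add (pC.comp pN)
    rwa [add_comm (C ∘L N) (N ∘L C)] at h
  have bNN : ABnd A (N ∘L N) := ((pN.comp pN)).abnd hA
  have bCC : ABnd A (C ∘L C) := ((pC.comp pC)).abnd hA
  have bNC : ABnd A (N ∘L C + C ∘L N) := pNC.abnd hA
  have h9' : opNormA A (M ∘L M)
      ≤ opNormA A (N ∘L N) + opNormA A (N ∘L C + C ∘L N) + opNormA A (C ∘L C) := by
    rw [hMM]
    calc opNormA A ((N ∘L N + (N ∘L C + C ∘L N)) + C ∘L C)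
        ≤ opNormA A (N ∘L N + (N ∘L C + C ∘L N)) + opNormA A (C ∘L C) :=
          opNormA_add_le hA (ABnd.addb hA bNN bNC) bCC
      _ ≤ opNormA A (N ∘L N) + opNormA A (N ∘L C + C ∘L N) + opNormA A (C ∘L C) := by
          have := opNormA_add_le hA bNN bNC
          linarith
  have h10' : opNormA A (N ∘L N) ≤ opNormA A N ^ 2 := by
    rw [sq]
    exact opNormA_comp_le hA bN bN
  have hwC : wA A C ≤ 2 * wA A YX := by
    apply wA_le (by positivity)
    intro z hz
    have hCz : C z = (starRingEnd ℂ) a • YX z + a • SXY z := rfl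
    have he : sInnerA A (C z) z
        = a * sInnerA A (YX z) z + (starRingEnd ℂ) a * sInnerA A (SXY z) z := by
      rw [hCz, sInner_add_left, sInner_smul_left, sInner_smul_left, Complex.conj_conj]
    rw [he]
    calc ‖a * sInnerA A (YX z) z + (starRingEnd ℂ) a * sInnerA A (SXY z) z‖
        ≤ ‖a * sInnerA A (YX z) z‖
          + ‖(starRingEnd ℂ) a * sInnerA A (SXY z) z‖ := norm_add_le _ _
      _ = ‖sInnerA A (YX z) z‖ + ‖sInnerA A (SXY z) z‖ := by
          rw [norm_mul, norm_mul, ha1, Complex.norm_conj, ha1, one_mul, one_mul]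
      _ = 2 * ‖sInnerA A (YX z) z‖ := by
          rw [abs_partner hA pYX z]
          ring
      _ ≤ 2 * wA A YX := by
          have := le_wA hA bYX hz
          linarith
  have hnC : opNormA A C ≤ 2 * wA A YX := le_trans (opNormA_le_wA hA pC) hwC
  have h11' : opNormA A (C ∘L C) ≤ (2 * wA A YX) ^ 2 := by
    calc opNormA A (C ∘L C) ≤ opNormA A C * opNormA A C := opNormA_comp_le hA bC bC
      _ ≤ (2 * wA A YX) * (2 * wA A YX) :=
          mul_le_mul hnC hnC (opNormA_nonneg A C) (by positivity)
      _ = (2 * wA A YX) ^ 2 := (sq _).symm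
  have hop : N ∘L C + C ∘L N = (starRingEnd ℂ) a • K + a • (N ∘L SXY + SXY ∘L N) := by
    rw [hCdef, hKdef]
    simp only [ContinuousLinearMap.comp_add, ContinuousLinearMap.add_comp,
      ContinuousLinearMap.comp_smul, ContinuousLinearMap.smul_comp, smul_add]
    abel
  have h12' : opNormA A (N ∘L C + C ∘L N) ≤ 2 * wA A K := by
    have hstep := opNormA_le_wA hA pNC
    have hw : wA A (N ∘L C + C ∘L N) ≤ 2 * wA A K := by
      apply wA_le (by positivity)
      intro z hz
      have hz1 : (N ∘L C + C ∘L N) z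
          = (starRingEnd ℂ) a • (K z) + a • ((N ∘L SXY + SXY ∘L N) z) := by
        rw [hop]
        rfl
      have he : sInnerA A ((N ∘L C + C ∘L N) z) z
          = a * sInnerA A (K z) z
            + (starRingEnd ℂ) a * sInnerA A ((N ∘L SXY + SXY ∘L N) z) z := by
        rw [hz1, sInner_add_left, sInner_smul_left, sInner_smul_left, Complex.conj_conj]
      rw [he]
      calc ‖a * sInnerA A (K z) z
            + (starRingEnd ℂ) a * sInnerA A ((N ∘L SXY + SXY ∘L N) z) z‖
          ≤ ‖a * sInnerA A (K z) z‖
            + ‖(starRingEnd ℂ) a * sInnerA A ((N ∘L SXY + SXY ∘L N) z) z‖ :=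
            norm_add_le _ _
        _ = ‖sInnerA A (K z) z‖
            + ‖sInnerA A ((N ∘L SXY + SXY ∘L N) z) z‖ := by
            rw [norm_mul, norm_mul, ha1, Complex.norm_conj, ha1, one_mul, one_mul]
        _ = 2 * ‖sInnerA A (K z) z‖ := by
            rw [abs_partner hA pK z]
            ring
        _ ≤ 2 * wA A K := by
            have := le_wA hA bK hz
            linarith
    linarith
  have h13 : (4 * ‖c‖) ^ 2 ≤ S := by
    have e1 : (4 * ‖c‖) ^ 2 ≤ opNormA A M ^ 2 :=
      pow_le_pow_left₀ (by positivity) h7c 2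
    calc (4 * ‖c‖) ^ 2 ≤ opNormA A M ^ 2 := e1
      _ ≤ opNormA A (M ∘L M) := h8'
      _ ≤ opNormA A (N ∘L N) + opNormA A (N ∘L C + C ∘L N) + opNormA A (C ∘L C) := h9'
      _ ≤ opNormA A N ^ 2 + 2 * wA A K + (2 * wA A YX) ^ 2 := by linarith
      _ = S := by rw [hSdef]; ring
  have h14 : 4 * ‖c‖ ≤ Real.sqrt S :=
    (Real.le_sqrt (by positivity) hS0).mpr h13
  linarith
end
end

section
/- Let T₁, T₂ ∈ B_A(H), set P = T₁^{#_A}T₁ + T₂T₂^{#_A}, and define m_A(T₂T₁) = inf over θ ∈ ℝ and x ∈ H with ‖x‖_A = 1 of ‖Re_A(e^{iθ}T₂T₁)x‖_A, where Re_A(S) = (S + S^{#_A})/2. Then w_𝔸([[O, T₁],[T₂, O]])⁴ ≥ (1/16)‖P‖_A² + (1/8)c_A(P T₂T₁ + T₂T₁ P) + (1/4)m_A(T₂T₁)². -/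
noncomputable section

open ContinuousLinearMap

namespace S14

variable {E : Type*} [NormedAddCommGroup E] [InnerProductSpace ℂ E]

section generic
variable (A : E →L[ℂ] E)

abbrev qA (x : E) : ℝ := (inner ℂ (A x) x : ℂ).re

variable (hsym : ∀ x y : E, (inner ℂ (A x) y : ℂ) = inner ℂ x (A y))
  (hpos : ∀ x : E, 0 ≤ qA A x)

include hsym in
lemma conjB (x y : E) : (starRingEnd ℂ) (inner ℂ (A x) y) = inner ℂ (A y) x := by
  rw [inner_conj_symm, hsym]

def coreOf : PreInnerProductSpace.Core ℂ E where
  inner := fun u v => inner ℂ (A u) v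
  conj_inner_symm := fun u v => conjB A hsym v u
  re_inner_nonneg := hpos
  add_left := fun u v w => by simp [inner_add_left]
  smul_left := fun u v r => by simp [inner_smul_left, mul_comm]

include hsym hpos in
lemma csA (x y : E) : ‖(inner ℂ (A x) y : ℂ)‖ ^ 2 ≤ qA A x * qA A y := by
  have h := @InnerProductSpace.Core.inner_mul_inner_self_le ℂ E _ _ _ (coreOf A hsym hpos) x y
  have h' : ‖(inner ℂ (A x) y : ℂ)‖ * ‖(inner ℂ (A y) x : ℂ)‖ ≤ qA A x * qA A y := h
  have h2 : ‖(inner ℂ (A y) x : ℂ)‖ = ‖(inner ℂ (A x) y : ℂ)‖ := by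
    rw [← conjB A hsym x y]; exact RCLike.norm_conj _
  calc ‖(inner ℂ (A x) y : ℂ)‖ ^ 2 = ‖(inner ℂ (A x) y : ℂ)‖ * ‖(inner ℂ (A y) x : ℂ)‖ := by
        rw [h2]; ring
    _ ≤ qA A x * qA A y := h'

lemma qA_smul_real (c : ℝ) (x : E) : qA A ((c : ℂ) • x) = c ^ 2 * qA A x := by
  simp only [qA, map_smul, inner_smul_left, inner_smul_right, Complex.conj_ofReal]
  rw [← mul_assoc, ← Complex.ofReal_mul, Complex.re_ofReal_mul]
  ring

include hsym in
lemma qA_add (x y : E) :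
    qA A (x + y) = qA A x + 2 * (inner ℂ (A x) y : ℂ).re + qA A y := by
  simp only [qA, map_add, inner_add_left, inner_add_right]
  have : (inner ℂ (A y) x : ℂ).re = (inner ℂ (A x) y : ℂ).re := by
    rw [← conjB A hsym x y, Complex.conj_re]
  simp [Complex.add_re, this]; ring

include hsym in
lemma qA_sub (x y : E) :
    qA A (x - y) = qA A x - 2 * (inner ℂ (A x) y : ℂ).re + qA A y := by
  have := qA_add A hsym x (-y)
  simpa [inner_neg_right, qA, sub_eq_add_neg] using this

include hsym in
lemma qA_parallelogram (x y : E) :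
    qA A (x + y) + qA A (x - y) = 2 * qA A x + 2 * qA A y := by
  rw [qA_add A hsym, qA_sub A hsym]; ring

include hsym in
lemma qA_add_null (x n : E) (hn : A n = 0) : qA A (x + n) = qA A x := by
  rw [qA_add A hsym]
  have h1 : (inner ℂ (A x) n : ℂ) = 0 := by
    rw [← conjB A hsym n x, hn]; simp
  simp [h1, qA, hn]

lemma sNormA_eq_one_iff (x : E) : sNormA A x = 1 ↔ qA A x = 1 := by
  rw [sNormA, Real.sqrt_eq_one]; rfl

/- ### numerical radius machinery -/
variable (T Ts : E →L[ℂ] E)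
  (hm1 : ∀ v w : E, (inner ℂ (A (Ts v)) w : ℂ) = inner ℂ (A v) (T w))
  (hm2 : ∀ v w : E, (inner ℂ (A (T v)) w : ℂ) = inner ℂ (A v) (Ts w))

include hm1 hm2 in
lemma hmS : ∀ v w : E, (inner ℂ (A ((Ts ∘L T) v)) w : ℂ) = inner ℂ (A v) ((Ts ∘L T) w) := by
  intro v w
  rw [comp_apply, comp_apply, hm1, hm2]

include hm1 hm2 in
lemma hmSpow : ∀ (m : ℕ) (v w : E),
    (inner ℂ (A (((Ts ∘L T) ^ m) v)) w : ℂ) = inner ℂ (A v) (((Ts ∘L T) ^ m) w) := by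
  intro m
  induction m with
  | zero => intro v w; simp
  | succ k ih =>
    intro v w
    have h1 : ((Ts ∘L T) ^ (k+1)) v = ((Ts ∘L T) ^ k) ((Ts ∘L T) v) := by
      rw [pow_succ]; rfl
    have h2 : ((Ts ∘L T) ^ (k+1)) w = (Ts ∘L T) (((Ts ∘L T) ^ k) w) := by
      rw [pow_succ']; rfl
    rw [h1, ih, hmS A T Ts hm1 hm2, h2]

include hsym hpos hm1 hm2 in
lemma qA_pow_sq_le (m : ℕ) (z : E) :
    qA A (((Ts ∘L T) ^ m) z) ^ 2 ≤ qA A (((Ts ∘L T) ^ (2 * m)) z) * qA A z := by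
  set S := Ts ∘L T
  have key : (inner ℂ (A ((S ^ m) z)) ((S ^ m) z) : ℂ) = inner ℂ (A z) ((S ^ (2*m)) z) := by
    rw [hmSpow A T Ts hm1 hm2 m]
    congr 1
    rw [two_mul, pow_add]; rfl
  have hnorm : ‖(inner ℂ (A z) ((S ^ (2*m)) z) : ℂ)‖ = ‖(inner ℂ (A ((S ^ (2*m)) z)) z : ℂ)‖ := by
    rw [← conjB A hsym ((S ^ (2*m)) z) z, RCLike.norm_conj]
  have h1 : qA A ((S ^ m) z) ^ 2 ≤ ‖(inner ℂ (A ((S ^ (2*m)) z)) z : ℂ)‖ ^ 2 := by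
    rw [← hnorm]
    have : |(inner ℂ (A z) ((S ^ (2*m)) z) : ℂ).re| ≤ ‖(inner ℂ (A z) ((S ^ (2*m)) z) : ℂ)‖ :=
      Complex.abs_re_le_norm _
    calc qA A ((S ^ m) z) ^ 2 = ((inner ℂ (A z) ((S ^ (2*m)) z) : ℂ).re) ^ 2 := by
          rw [qA, key]
      _ = |(inner ℂ (A z) ((S ^ (2*m)) z) : ℂ).re| ^ 2 := by rw [sq_abs]
      _ ≤ ‖(inner ℂ (A z) ((S ^ (2*m)) z) : ℂ)‖ ^ 2 := by
          exact pow_le_pow_left₀ (abs_nonneg _) this 2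
  exact h1.trans (csA A hsym hpos _ z)

include hsym hpos hm1 hm2 in
lemma unit_bound (z : E) (hz : qA A z = 1) :
    ‖(inner ℂ (A (T z)) z : ℂ)‖ ≤ Real.sqrt (max ‖Ts ∘L T‖ 1) := by
  set S := Ts ∘L T
  set M : ℝ := max ‖S‖ 1 with hM
  have hM1 : (1:ℝ) ≤ M := le_max_right _ _
  have hM0 : (0:ℝ) < M := lt_of_lt_of_le one_pos hM1
  set a : ℝ := ‖(inner ℂ (A (T z)) z : ℂ)‖ with ha
  have ha0 : 0 ≤ a := norm_nonneg _
  -- a² ≤ q(Tz)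
  have h1 : a ^ 2 ≤ qA A (T z) := by
    have := csA A hsym hpos (T z) z
    rwa [hz, mul_one] at this
  -- q(Tz)² ≤ q(S z)
  have h2 : qA A (T z) ^ 2 ≤ qA A (S z) := by
    have key : (inner ℂ (A (T z)) (T z) : ℂ) = inner ℂ (A z) (S z) := by
      rw [hm2]; rfl
    have hnorm : ‖(inner ℂ (A z) (S z) : ℂ)‖ = ‖(inner ℂ (A (S z)) z : ℂ)‖ := by
      rw [← conjB A hsym (S z) z, RCLike.norm_conj]
    have hcs : ‖(inner ℂ (A (S z)) z : ℂ)‖ ^ 2 ≤ qA A (S z) * qA A z := csA A hsym hpos _ z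
    rw [hz, mul_one] at hcs
    calc qA A (T z) ^ 2 = ((inner ℂ (A z) (S z) : ℂ).re) ^ 2 := by rw [qA, key]
      _ = |(inner ℂ (A z) (S z) : ℂ).re| ^ 2 := by rw [sq_abs]
      _ ≤ ‖(inner ℂ (A z) (S z) : ℂ)‖ ^ 2 :=
          pow_le_pow_left₀ (abs_nonneg _) (Complex.abs_re_le_norm _) 2
      _ = ‖(inner ℂ (A (S z)) z : ℂ)‖ ^ 2 := by rw [hnorm]
      _ ≤ qA A (S z) := hcs
  -- iterate
  have hq0 : ∀ v : E, qA A v ≤ ‖A‖ * ‖z‖^2 * M ^ (0:ℕ) → True := fun _ _ => trivial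
  have hqbound : ∀ k : ℕ, qA A ((S ^ (2^k)) z) ≤ (‖A‖ * ‖z‖^2) * M ^ (2^(k+1)) := by
    intro k
    have hb1 : qA A ((S ^ (2^k)) z) ≤ ‖A‖ * ‖(S ^ (2^k)) z‖^2 := by
      have := norm_inner_le_norm (𝕜 := ℂ) (A ((S ^ (2^k)) z)) ((S ^ (2^k)) z)
      have h3 : (inner ℂ (A ((S ^ (2^k)) z)) ((S ^ (2^k)) z) : ℂ).re
          ≤ ‖(inner ℂ (A ((S ^ (2^k)) z)) ((S ^ (2^k)) z) : ℂ)‖ := Complex.re_le_norm _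
      have h4 : ‖A ((S ^ (2^k)) z)‖ ≤ ‖A‖ * ‖(S ^ (2^k)) z‖ := A.le_opNorm _
      calc qA A ((S ^ (2^k)) z) ≤ ‖A ((S ^ (2^k)) z)‖ * ‖(S ^ (2^k)) z‖ := h3.trans this
        _ ≤ (‖A‖ * ‖(S ^ (2^k)) z‖) * ‖(S ^ (2^k)) z‖ :=
            mul_le_mul_of_nonneg_right h4 (norm_nonneg _)
        _ = ‖A‖ * ‖(S ^ (2^k)) z‖^2 := by ring
    have hb2 : ‖(S ^ (2^k)) z‖ ≤ M ^ (2^k) * ‖z‖ := by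
      have hp : ‖S ^ (2^k)‖ ≤ ‖S‖ ^ (2^k) := norm_pow_le' S (pow_pos two_pos _)
      have hp2 : ‖S‖ ^ (2^k) ≤ M ^ (2^k) := pow_le_pow_left₀ (norm_nonneg _) (le_max_left _ _) _
      calc ‖(S ^ (2^k)) z‖ ≤ ‖S ^ (2^k)‖ * ‖z‖ := le_opNorm _ _
        _ ≤ M ^ (2^k) * ‖z‖ := mul_le_mul_of_nonneg_right (hp.trans hp2) (norm_nonneg _)
    calc qA A ((S ^ (2^k)) z) ≤ ‖A‖ * ‖(S ^ (2^k)) z‖^2 := hb1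
      _ ≤ ‖A‖ * (M ^ (2^k) * ‖z‖)^2 := by
          apply mul_le_mul_of_nonneg_left _ (norm_nonneg A)
          exact pow_le_pow_left₀ (norm_nonneg _) hb2 2
      _ = (‖A‖ * ‖z‖^2) * M ^ (2^(k+1)) := by
          rw [mul_pow, ← pow_mul, show 2^k * 2 = 2^(k+1) from by rw [pow_succ]]
          ring
  have hiter : ∀ k : ℕ, a ^ (2 ^ (k+2)) ≤ qA A ((S ^ (2^k)) z) := by
    intro k
    induction k with
    | zero =>
      have : a ^ (2^2) = (a^2)^2 := by ring
      rw [this]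
      have h5 : (a^2)^2 ≤ qA A (T z) ^ 2 := pow_le_pow_left₀ (sq_nonneg a) h1 2
      refine h5.trans ?_
      simpa using h2
    | succ k ih =>
      have he : a ^ (2 ^ (k+3)) = (a ^ (2^(k+2)))^2 := by
        rw [← pow_mul, pow_succ]
      rw [he]
      have h5 : (a ^ (2^(k+2)))^2 ≤ qA A ((S ^ (2^k)) z) ^ 2 :=
        pow_le_pow_left₀ (pow_nonneg ha0 _) ih 2
      refine h5.trans ?_
      have := qA_pow_sq_le A hsym hpos T Ts hm1 hm2 (2^k) z
      rw [hz, mul_one] at this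
      have h6 : (2 * 2^k) = 2^(k+1) := by rw [pow_succ]; ring
      rwa [h6] at this
  -- conclude a² ≤ M
  have hfin : a ^ 2 ≤ M := by
    by_contra hcon
    push_neg at hcon
    have hr1 : 1 < a^2 / M := (one_lt_div hM0).2 hcon
    obtain ⟨n, hn⟩ := pow_unbounded_of_one_lt (‖A‖ * ‖z‖^2) hr1
    have hkey : (a^2/M) ^ (2^(n+1)) ≤ ‖A‖ * ‖z‖^2 := by
      have h7 : a ^ (2^(n+2)) ≤ (‖A‖ * ‖z‖^2) * M ^ (2^(n+1)) :=
        (hiter n).trans (hqbound n)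
      have h8 : a ^ (2^(n+2)) = (a^2) ^ (2^(n+1)) := by
        rw [← pow_mul, ← pow_succ']
      rw [div_pow, div_le_iff₀ (pow_pos hM0 _)]
      rw [← h8]; exact h7
    have h9 : (a^2/M) ^ n ≤ (a^2/M) ^ (2^(n+1)) := by
      apply pow_le_pow_right₀ (le_of_lt hr1)
      calc n ≤ 2^n := Nat.le_of_lt Nat.lt_two_pow_self
        _ ≤ 2^(n+1) := Nat.pow_le_pow_right (by norm_num) (Nat.le_succ n)
    exact absurd hn (not_lt.2 (h9.trans hkey))
  calc a = Real.sqrt (a^2) := by rw [Real.sqrt_sq ha0]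
    _ ≤ Real.sqrt M := Real.sqrt_le_sqrt hfin

lemma wA_nonneg : 0 ≤ wA A T := by
  apply Real.sSup_nonneg
  rintro r ⟨x, hx, rfl⟩
  positivity

include hsym hpos hm1 hm2 in
lemma wA_bddAbove :
    BddAbove {r | ∃ x, sNormA A x = 1 ∧ r = ‖sInnerA A (T x) x‖} := by
  refine ⟨Real.sqrt (max ‖Ts ∘L T‖ 1), ?_⟩
  rintro r ⟨x, hx, rfl⟩
  rw [sNormA_eq_one_iff] at hx
  have := unit_bound A hsym hpos T Ts hm1 hm2 x hx
  exact this

include hsym hpos hm1 hm2 in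
lemma unit_le_wA (z : E) (hz : qA A z = 1) :
    ‖(inner ℂ (A (T z)) z : ℂ)‖ ≤ wA A T := by
  have hmem : ‖(inner ℂ (A (T z)) z : ℂ)‖ ∈
      {r | ∃ x, sNormA A x = 1 ∧ r = ‖sInnerA A (T x) x‖} := by
    refine ⟨z, ?_, ?_⟩
    · rw [sNormA_eq_one_iff]; exact hz
    · rfl
  exact le_csSup (wA_bddAbove A hsym hpos T Ts hm1 hm2) hmem

include hsym hpos hm1 hm2 in
lemma scaled_le_wA (z : E) :
    ‖(inner ℂ (A (T z)) z : ℂ)‖ ≤ wA A T * qA A z := by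
  rcases eq_or_lt_of_le (hpos z) with h0 | h0
  · have hcs := csA A hsym hpos (T z) z
    rw [← h0, mul_zero] at hcs
    have : ‖(inner ℂ (A (T z)) z : ℂ)‖ = 0 := by
      nlinarith [norm_nonneg (inner ℂ (A (T z)) z : ℂ), sq_nonneg ‖(inner ℂ (A (T z)) z : ℂ)‖]
    rw [this, ← h0, mul_zero]
  · set t := Real.sqrt (qA A z) with ht
    have ht0 : 0 < t := Real.sqrt_pos.2 h0
    have htq : t^2 = qA A z := Real.sq_sqrt (le_of_lt h0)
    set z' := ((t⁻¹ : ℝ) : ℂ) • z with hz'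
    have hqz' : qA A z' = 1 := by
      rw [hz', qA_smul_real, ← htq]
      field_simp
    have hval : (inner ℂ (A (T z')) z' : ℂ) = ((t⁻¹ : ℝ) : ℂ)^2 * inner ℂ (A (T z)) z := by
      rw [hz', map_smul, map_smul, inner_smul_left, inner_smul_right, Complex.conj_ofReal]
      ring
    have := unit_le_wA A hsym hpos T Ts hm1 hm2 z' hqz'
    rw [hval] at this
    have hnval : ‖((t⁻¹ : ℝ) : ℂ)^2 * (inner ℂ (A (T z)) z : ℂ)‖
        = (t⁻¹)^2 * ‖(inner ℂ (A (T z)) z : ℂ)‖ := by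
      rw [norm_mul, norm_pow, Complex.norm_real, Real.norm_eq_abs,
        abs_of_pos (inv_pos.2 ht0)]
    rw [hnval] at this
    have h2 : ‖(inner ℂ (A (T z)) z : ℂ)‖ ≤ wA A T * t^2 := by
      rw [← mul_le_mul_iff_right₀ (pow_pos (inv_pos.2 ht0) 2)]
      calc (t⁻¹)^2 * ‖(inner ℂ (A (T z)) z : ℂ)‖ ≤ wA A T := this
        _ = (t⁻¹)^2 * (wA A T * t^2) := by field_simp
    rwa [htq] at h2

/- ### the operator H_θ -/
section Htheta
variable (e : ℂ) (he : ‖e‖ = 1)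

/-- `H = Re_A(e T)` as a plain function. -/
def Hv (v : E) : E := (2⁻¹ : ℂ) • (e • T v + (starRingEnd ℂ) e • Ts v)

lemma Hv_add (v w : E) : Hv T Ts e (v + w) = Hv T Ts e v + Hv T Ts e w := by
  simp [Hv, smul_add]; module

lemma Hv_smul (c : ℂ) (v : E) : Hv T Ts e (c • v) = c • Hv T Ts e v := by
  simp [Hv, smul_add, smul_comm c]

include hm1 hm2 in
lemma Hv_selfadj (v w : E) :
    (inner ℂ (A (Hv T Ts e v)) w : ℂ) = inner ℂ (A v) (Hv T Ts e w) := by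
  simp only [Hv, map_smul, map_add, inner_smul_left, inner_smul_right, inner_add_left,
    inner_add_right, hm1, hm2]
  simp only [Complex.conj_conj, map_inv₀, map_ofNat]
  ring

include hsym hpos hm1 hm2 he in
lemma Hv_quad_le (z : E) :
    ‖(inner ℂ (A (Hv T Ts e z)) z : ℂ)‖ ≤ wA A T * qA A z := by
  set b : ℂ := inner ℂ (A (T z)) z with hb
  have hTs : (inner ℂ (A (Ts z)) z : ℂ) = (starRingEnd ℂ) b := by
    rw [hm1, ← conjB A hsym (T z) z]
  have hval : (inner ℂ (A (Hv T Ts e z)) z : ℂ)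
      = (2⁻¹ : ℂ) * ((starRingEnd ℂ) e * b + e * (starRingEnd ℂ) b) := by
    simp only [Hv, map_smul, map_add, inner_smul_left, inner_add_left, hTs]
    simp only [Complex.conj_conj, map_inv₀, map_ofNat]
    try ring
  rw [hval]
  have h1 : ‖(2⁻¹ : ℂ) * ((starRingEnd ℂ) e * b + e * (starRingEnd ℂ) b)‖
      ≤ 2⁻¹ * (‖b‖ + ‖b‖) := by
    rw [norm_mul]
    have : ‖(starRingEnd ℂ) e * b + e * (starRingEnd ℂ) b‖ ≤ ‖b‖ + ‖b‖ := by
      refine (norm_add_le _ _).trans ?_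
      simp [norm_mul, RCLike.norm_conj, he]
    calc ‖(2⁻¹ : ℂ)‖ * ‖(starRingEnd ℂ) e * b + e * (starRingEnd ℂ) b‖
        ≤ ‖(2⁻¹ : ℂ)‖ * (‖b‖ + ‖b‖) := mul_le_mul_of_nonneg_left this (norm_nonneg _)
      _ = 2⁻¹ * (‖b‖ + ‖b‖) := by norm_num
  refine h1.trans ?_
  have h2 := scaled_le_wA A hsym hpos T Ts hm1 hm2 z
  rw [← hb] at h2
  linarith

include hsym hpos hm1 hm2 he in
lemma Hv_polar (z y : E) :
    |(inner ℂ (A (Hv T Ts e z)) y : ℂ).re| ≤ wA A T / 2 * (qA A z + qA A y) := by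
  set W := wA A T with hW
  set b : ℂ := inner ℂ (A (Hv T Ts e z)) y with hb
  have hconj : (inner ℂ (A (Hv T Ts e y)) z : ℂ) = (starRingEnd ℂ) b := by
    rw [Hv_selfadj A T Ts hm1 hm2, ← conjB A hsym (Hv T Ts e z) y]
  have hid : (inner ℂ (A (Hv T Ts e (z+y))) (z+y) : ℂ)
      - inner ℂ (A (Hv T Ts e (z-y))) (z-y) = 2 * b + 2 * (starRingEnd ℂ) b := by
    rw [Hv_add T Ts e, show z - y = z + (-y) from by abel, Hv_add T Ts e,
      show Hv T Ts e (-y) = -(Hv T Ts e y) from by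
        have := Hv_smul T Ts e (-1 : ℂ) y; simpa using this]
    simp only [map_add, map_neg, inner_add_left, inner_add_right, inner_neg_left,
      inner_neg_right, hconj, ← hb]
    ring
  have hre : ((2:ℂ) * b + 2 * (starRingEnd ℂ) b).re = 4 * b.re := by
    simp [Complex.add_re, Complex.mul_re]
    ring
  have h41 : |4 * b.re| ≤ ‖(inner ℂ (A (Hv T Ts e (z+y))) (z+y) : ℂ)‖
      + ‖(inner ℂ (A (Hv T Ts e (z-y))) (z-y) : ℂ)‖ := by
    rw [← hre]
    calc |((2:ℂ) * b + 2 * (starRingEnd ℂ) b).re|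
        ≤ ‖(2:ℂ) * b + 2 * (starRingEnd ℂ) b‖ := Complex.abs_re_le_norm _
      _ = ‖(inner ℂ (A (Hv T Ts e (z+y))) (z+y) : ℂ)
          - inner ℂ (A (Hv T Ts e (z-y))) (z-y)‖ := by rw [hid]
      _ ≤ _ := norm_sub_le _ _
  have h42 : ‖(inner ℂ (A (Hv T Ts e (z+y))) (z+y) : ℂ)‖
      + ‖(inner ℂ (A (Hv T Ts e (z-y))) (z-y) : ℂ)‖ ≤ W * (qA A (z+y) + qA A (z-y)) := by
    have e1 := Hv_quad_le A hsym hpos T Ts hm1 hm2 e he (z+y)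
    have e2 := Hv_quad_le A hsym hpos T Ts hm1 hm2 e he (z-y)
    rw [← hW] at e1 e2
    linarith
  have h43 : W * (qA A (z+y) + qA A (z-y)) = W * (2 * qA A z + 2 * qA A y) := by
    rw [qA_parallelogram A hsym]
  have := (h41.trans h42)
  rw [h43] at this
  have habs : |4 * b.re| = 4 * |b.re| := by
    rw [abs_mul]; norm_num
  rw [habs] at this
  linarith [abs_nonneg b.re]

include hsym hpos hm1 hm2 he in
lemma Hv_lip (z : E) :
    Real.sqrt (qA A (Hv T Ts e z)) ≤ wA A T * Real.sqrt (qA A z) := by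
  set W := wA A T with hW
  have hW0 : 0 ≤ W := wA_nonneg A T
  set y := Hv T Ts e z with hy
  set P := qA A z with hP
  set Q := qA A y with hQ
  have hP0 : 0 ≤ P := hpos z
  have hQ0 : 0 ≤ Q := hpos y
  have hQre : (inner ℂ (A y) y : ℂ).re = Q := rfl
  have key : ∀ t : ℝ, 0 < t → Q ≤ W / 2 * (t^2 * P + (t⁻¹)^2 * Q) := by
    intro t ht
    have h1 := Hv_polar A hsym hpos T Ts hm1 hm2 e he (((t : ℝ) : ℂ) • z) (((t⁻¹ : ℝ) : ℂ) • y)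
    have hval : (inner ℂ (A (Hv T Ts e (((t : ℝ) : ℂ) • z))) (((t⁻¹ : ℝ) : ℂ) • y) : ℂ)
        = ((t * t⁻¹ : ℝ) : ℂ) * inner ℂ (A y) y := by
      rw [Hv_smul T Ts e, map_smul, inner_smul_left, inner_smul_right, Complex.conj_ofReal, ← hy]
      push_cast
      ring
    rw [hval, mul_inv_cancel₀ (ne_of_gt ht)] at h1
    simp only [Complex.ofReal_one, one_mul] at h1
    rw [qA_smul_real, qA_smul_real, hQre] at h1
    rw [← hP, ← hQ] at h1
    calc Q ≤ |Q| := le_abs_self _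
      _ ≤ W / 2 * (t ^ 2 * P + (t⁻¹)^2 * Q) := h1
  rcases eq_or_lt_of_le hQ0 with hQz | hQpos
  · rw [← hQz]
    simp [Real.sqrt_zero]
    positivity
  rcases eq_or_lt_of_le hP0 with hPz | hPpos
  · exfalso
    have hWp : (0:ℝ) < W + 1 := by linarith
    have h1 := key (Real.sqrt (W + 1)) (Real.sqrt_pos.2 hWp)
    rw [← hPz] at h1
    have hsq : (Real.sqrt (W+1))^2 = W + 1 := Real.sq_sqrt (le_of_lt hWp)
    have hinv : ((Real.sqrt (W+1))⁻¹)^2 = (W+1)⁻¹ := by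
      rw [inv_pow, hsq]
    rw [hsq, hinv] at h1
    have h2 : Q * (W+1) ≤ (W / 2 * ((W+1) * 0 + (W+1)⁻¹ * Q)) * (W+1) :=
      mul_le_mul_of_nonneg_right h1 (le_of_lt hWp)
    have h3 : (W / 2 * ((W+1) * 0 + (W+1)⁻¹ * Q)) * (W+1) = W / 2 * Q := by
      field_simp
      ring
    rw [h3] at h2
    nlinarith
  · -- both positive
    set sP := Real.sqrt P with hsP
    set sQ := Real.sqrt Q with hsQ
    have hsPp : 0 < sP := Real.sqrt_pos.2 hPpos
    have hsQp : 0 < sQ := Real.sqrt_pos.2 hQpos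
    set t := Real.sqrt (sQ / sP) with hts
    have htp : 0 < t := Real.sqrt_pos.2 (div_pos hsQp hsPp)
    have ht2 : t^2 = sQ / sP := Real.sq_sqrt (le_of_lt (div_pos hsQp hsPp))
    have hti2 : (t⁻¹)^2 = sP / sQ := by
      rw [inv_pow, ht2, inv_div]
    have h1 := key t htp
    rw [ht2, hti2] at h1
    have hPsq : P = sP * sP := (Real.mul_self_sqrt hP0).symm
    have hQsq : Q = sQ * sQ := (Real.mul_self_sqrt hQ0).symm
    have h2 : sQ / sP * P + sP / sQ * Q = 2 * (sP * sQ) := by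
      rw [hPsq, hQsq]
      field_simp
      ring
    rw [h2] at h1
    -- Q ≤ W/2 * (2 sP sQ) = W sP sQ
    have h3 : sQ * sQ ≤ (W * sP) * sQ := by
      rw [← hQsq]
      calc Q ≤ W / 2 * (2 * (sP * sQ)) := h1
        _ = (W * sP) * sQ := by ring
    exact le_of_mul_le_mul_right h3 hsQp

include hsym hpos hm1 hm2 he in
lemma main_bound (x : E) (hx : qA A x = 1) :
    qA A (Hv T Ts e (Hv T Ts e x)) ≤ wA A T ^ 4 := by
  set W := wA A T with hW
  have hW0 : 0 ≤ W := wA_nonneg A T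
  have h1 := Hv_lip A hsym hpos T Ts hm1 hm2 e he (Hv T Ts e x)
  have h2 := Hv_lip A hsym hpos T Ts hm1 hm2 e he x
  rw [hx, Real.sqrt_one, mul_one] at h2
  have h3 : Real.sqrt (qA A (Hv T Ts e (Hv T Ts e x))) ≤ W * W := by
    refine h1.trans ?_
    exact mul_le_mul_of_nonneg_left h2 hW0
  have h4 : qA A (Hv T Ts e (Hv T Ts e x)) ≤ (W * W)^2 := by
    have := Real.sqrt_le_sqrt (le_of_eq (rfl :
      qA A (Hv T Ts e (Hv T Ts e x)) = qA A (Hv T Ts e (Hv T Ts e x))))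
    nlinarith [Real.sq_sqrt (hpos (Hv T Ts e (Hv T Ts e x))),
      Real.sqrt_nonneg (qA A (Hv T Ts e (Hv T Ts e x)))]
  calc qA A (Hv T Ts e (Hv T Ts e x)) ≤ (W * W)^2 := h4
    _ = W ^ 4 := by ring

end Htheta

end generic
section moveLemmas
variable {E' : Type*} [NormedAddCommGroup E'] [InnerProductSpace ℂ E'] [CompleteSpace E']

lemma move_sharp (A T S : E' →L[ℂ] E') (h : A ∘L S = adjoint T ∘L A) (a b : E') :
    (inner ℂ (A (S a)) b : ℂ) = inner ℂ (A a) (T b) := by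
  have h1 : A (S a) = adjoint T (A a) := by
    have := congrArg (fun f => f a) h
    simpa using this
  rw [h1, adjoint_inner_left]

lemma move_sharp_rev (A T S : E' →L[ℂ] E') (hA : IsSelfAdjoint A)
    (h : A ∘L S = adjoint T ∘L A) (a b : E') :
    (inner ℂ (A (T a)) b : ℂ) = inner ℂ (A a) (S b) := by
  have h2 : adjoint S ∘L A = A ∘L T := by
    have h3 := congrArg adjoint h
    rw [adjoint_comp, adjoint_comp, adjoint_adjoint, hA.adjoint_eq] at h3
    exact h3
  have h4 : A (T a) = adjoint S (A a) := by
    have := congrArg (fun f => f a) h2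
    simpa using this.symm
  rw [h4, adjoint_inner_left]

end moveLemmas

end S14

theorem stmt14 {H : Type*} [NormedAddCommGroup H] [InnerProductSpace ℂ H] [CompleteSpace H]
    (A : H →L[ℂ] H) (hA : A.IsPositive)
    (T₁ T₂ T₁s T₂s Ss : H →L[ℂ] H) (hT₁ : memBA A T₁) (hT₂ : memBA A T₂)
    (hT₁s : IsSharpA A T₁ T₁s) (hT₂s : IsSharpA A T₂ T₂s)
    (hSs : IsSharpA A (T₂ ∘L T₁) Ss) :
    (1 / 16) * opNormA A (T₁s ∘L T₁ + T₂ ∘L T₂s) ^ 2 +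
        (1 / 8) * cA A ((T₁s ∘L T₁ + T₂ ∘L T₂s) ∘L (T₂ ∘L T₁) +
          (T₂ ∘L T₁) ∘L (T₁s ∘L T₁ + T₂ ∘L T₂s)) +
        (1 / 4) * (sInf {r | ∃ θ : ℝ, ∃ x : H, sNormA A x = 1 ∧
          r = sNormA A (((2 : ℂ)⁻¹ • (Complex.exp ((θ : ℂ) * Complex.I) • (T₂ ∘L T₁) +
            (starRingEnd ℂ) (Complex.exp ((θ : ℂ) * Complex.I)) • Ss)) x)}) ^ 2 ≤
      wA (blk2 A 0 0 A) (blk2 0 T₁ T₂ 0) ^ 4 := by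
  classical
  by_cases hA0 : A = (0 : H →L[ℂ] H)
  · -- degenerate case: A = 0
    subst hA0
    have hnorm : ∀ x : H, sNormA (0 : H →L[ℂ] H) x = 0 := by
      intro x; simp [sNormA, sInnerA]
    have hnormK : ∀ x : WithLp 2 (H × H), sNormA (blk2 (0 : H →L[ℂ] H) 0 0 0) x = 0 := by
      intro x
      have h0 : (blk2 (0 : H →L[ℂ] H) 0 0 0) x = 0 := by
        have h1 : ((blk2 (0 : H →L[ℂ] H) 0 0 0) x).fst = 0 := by simp [blk2]
        have h2 : ((blk2 (0 : H →L[ℂ] H) 0 0 0) x).snd = 0 := by simp [blk2]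
        have := (WithLp.equiv 2 (H × H)).injective (a₁ := (blk2 (0 : H →L[ℂ] H) 0 0 0) x)
          (a₂ := 0) (Prod.ext (by simpa using h1) (by simpa using h2))
        exact this
      simp [sNormA, sInnerA, h0]
    have e1 : opNormA (0 : H →L[ℂ] H) (T₁s ∘L T₁ + T₂ ∘L T₂s) = 0 := by
      rw [opNormA]
      convert Real.sSup_empty
      rw [Set.eq_empty_iff_forall_notMem]
      rintro r ⟨x, hx, h1, h2⟩
      rw [hnorm x] at h1; norm_num at h1
    have e2 : cA (0 : H →L[ℂ] H) ((T₁s ∘L T₁ + T₂ ∘L T₂s) ∘L (T₂ ∘L T₁) +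
        (T₂ ∘L T₁) ∘L (T₁s ∘L T₁ + T₂ ∘L T₂s)) = 0 := by
      rw [cA]
      convert Real.sInf_empty
      rw [Set.eq_empty_iff_forall_notMem]
      rintro r ⟨x, h1, h2⟩
      rw [hnorm x] at h1; norm_num at h1
    have e3 : sInf {r | ∃ θ : ℝ, ∃ x : H, sNormA (0 : H →L[ℂ] H) x = 1 ∧
        r = sNormA (0 : H →L[ℂ] H) (((2 : ℂ)⁻¹ • (Complex.exp ((θ : ℂ) * Complex.I) • (T₂ ∘L T₁) +
          (starRingEnd ℂ) (Complex.exp ((θ : ℂ) * Complex.I)) • Ss)) x)} = 0 := by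
      convert Real.sInf_empty
      rw [Set.eq_empty_iff_forall_notMem]
      rintro r ⟨θ, x, h1, h2⟩
      rw [hnorm x] at h1; norm_num at h1
    have e4 : wA (blk2 (0 : H →L[ℂ] H) 0 0 0) (blk2 0 T₁ T₂ 0) = 0 := by
      rw [wA]
      convert Real.sSup_empty
      rw [Set.eq_empty_iff_forall_notMem]
      rintro r ⟨x, h1, h2⟩
      rw [hnormK x] at h1; norm_num at h1
    rw [e1, e2, e3, e4]
    norm_num
  · -- main case
    set Pop := T₁s ∘L T₁ + T₂ ∘L T₂s with hPop
    set Sop := T₂ ∘L T₁ with hSop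
    have hAsa : IsSelfAdjoint A := hA.isSelfAdjoint
    have hsymH : ∀ x y : H, (inner ℂ (A x) y : ℂ) = inner ℂ x (A y) := by
      intro x y
      conv_lhs => rw [← hAsa.adjoint_eq]
      rw [adjoint_inner_left]
    have hposH : ∀ x : H, 0 ≤ S14.qA A x := by
      intro x
      exact hA.re_inner_nonneg_left x
    have m1 := S14.move_sharp A T₁ T₁s hT₁s.1
    have m1r := S14.move_sharp_rev A T₁ T₁s hAsa hT₁s.1
    have m2 := S14.move_sharp A T₂ T₂s hT₂s.1
    have m2r := S14.move_sharp_rev A T₂ T₂s hAsa hT₂s.1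
    have mS := S14.move_sharp A (T₂ ∘L T₁) Ss hSs.1
    have mP : ∀ a b : H, (inner ℂ (A (Pop a)) b : ℂ) = inner ℂ (A a) (Pop b) := by
      intro a b
      simp only [hPop, add_apply, comp_apply, map_add, inner_add_left, inner_add_right]
      rw [m1 (T₁ a) b, m1r a (T₁ b), m2r (T₂s a) b, m2 a (T₂s b)]
    -- K level
    set 𝔸 := blk2 A 0 0 A with h𝔸
    set 𝕋 := blk2 (0 : H →L[ℂ] H) T₁ T₂ 0 with h𝕋
    set 𝕋s := blk2 (0 : H →L[ℂ] H) T₂s T₁s 0 with h𝕋s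
    have hAfst : ∀ v : WithLp 2 (H × H), (𝔸 v).fst = A v.fst := by
      intro v; simp [h𝔸, blk2]
    have hAsnd : ∀ v : WithLp 2 (H × H), (𝔸 v).snd = A v.snd := by
      intro v; simp [h𝔸, blk2]
    have hTfst : ∀ v : WithLp 2 (H × H), (𝕋 v).fst = T₁ v.snd := by
      intro v; simp [h𝕋, blk2]
    have hTsnd : ∀ v : WithLp 2 (H × H), (𝕋 v).snd = T₂ v.fst := by
      intro v; simp [h𝕋, blk2]
    have hTsfst : ∀ v : WithLp 2 (H × H), (𝕋s v).fst = T₂s v.snd := by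
      intro v; simp [h𝕋s, blk2]
    have hTssnd : ∀ v : WithLp 2 (H × H), (𝕋s v).snd = T₁s v.fst := by
      intro v; simp [h𝕋s, blk2]
    have hsymK : ∀ v w : WithLp 2 (H × H), (inner ℂ (𝔸 v) w : ℂ) = inner ℂ v (𝔸 w) := by
      intro v w
      rw [WithLp.prod_inner_apply, WithLp.prod_inner_apply]; simp only [WithLp.ofLp_fst, WithLp.ofLp_snd]; rw [hAfst, hAsnd, hAfst, hAsnd,
        hsymH, hsymH v.snd w.snd]
    have hposK : ∀ v : WithLp 2 (H × H), 0 ≤ S14.qA 𝔸 v := by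
      intro v
      show 0 ≤ (inner ℂ (𝔸 v) v : ℂ).re
      rw [WithLp.prod_inner_apply]; simp only [WithLp.ofLp_fst, WithLp.ofLp_snd]; rw [hAfst, hAsnd, Complex.add_re]
      exact add_nonneg (hposH _) (hposH _)
    have hm1K : ∀ v w : WithLp 2 (H × H), (inner ℂ (𝔸 (𝕋s v)) w : ℂ) = inner ℂ (𝔸 v) (𝕋 w) := by
      intro v w
      rw [WithLp.prod_inner_apply, WithLp.prod_inner_apply]; simp only [WithLp.ofLp_fst, WithLp.ofLp_snd]; rw [hAfst, hAsnd, hAfst, hAsnd,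
        hTsfst, hTssnd, hTfst, hTsnd, m2, m1]
      ring
    have hm2K : ∀ v w : WithLp 2 (H × H), (inner ℂ (𝔸 (𝕋 v)) w : ℂ) = inner ℂ (𝔸 v) (𝕋s w) := by
      intro v w
      rw [WithLp.prod_inner_apply, WithLp.prod_inner_apply]; simp only [WithLp.ofLp_fst, WithLp.ofLp_snd]; rw [hAfst, hAsnd, hAfst, hAsnd,
        hTfst, hTsnd, hTsfst, hTssnd, m1r, m2r]
      ring
    -- a unit vector exists
    have hexu : ∃ u : H, S14.qA A u = 1 := by
      have hAne : ∃ x : H, (inner ℂ (A x) x : ℂ) ≠ 0 := by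
        by_contra hall
        push_neg at hall
        apply hA0
        have hz := (inner_map_self_eq_zero (A : H →ₗ[ℂ] H)).1 (fun x => hall x)
        ext x
        have := congrArg (fun f => f x) hz
        simpa using this
      obtain ⟨x, hx⟩ := hAne
      have him : (inner ℂ (A x) x : ℂ).im = 0 := by
        have h1 : (starRingEnd ℂ) (inner ℂ (A x) x : ℂ) = inner ℂ (A x) x := S14.conjB A hsymH x x
        have := Complex.conj_eq_iff_im.1 h1
        exact this
      have hre : (inner ℂ (A x) x : ℂ).re ≠ 0 := by
        intro h0
        apply hx
        exact Complex.ext h0 him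
      have hcpos : 0 < S14.qA A x := lt_of_le_of_ne (hposH x) (Ne.symm hre)
      refine ⟨((Real.sqrt (S14.qA A x))⁻¹ : ℝ) • x, ?_⟩
      have := S14.qA_smul_real A ((Real.sqrt (S14.qA A x))⁻¹ : ℝ) x
      rw [Complex.coe_smul] at this
      rw [this, inv_pow, Real.sq_sqrt (le_of_lt hcpos)]
      field_simp
    -- the master inequality for an arbitrary unit vector
    set mset : Set ℝ := {r | ∃ θ : ℝ, ∃ x : H, sNormA A x = 1 ∧
          r = sNormA A (((2 : ℂ)⁻¹ • (Complex.exp ((θ : ℂ) * Complex.I) • Sop +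
            (starRingEnd ℂ) (Complex.exp ((θ : ℂ) * Complex.I)) • Ss)) x)} with hmset
    have hmset_nonneg : ∀ r ∈ mset, 0 ≤ r := by
      rintro r ⟨θ, x, hx1, rfl⟩
      exact Real.sqrt_nonneg _
    have hmset_bdd : BddBelow mset := ⟨0, hmset_nonneg⟩
    have hcset_nonneg : ∀ r ∈ {r | ∃ x, sNormA A x = 1 ∧
        r = ‖(sInnerA A ((Pop ∘L Sop + Sop ∘L Pop) x) x)‖}, 0 ≤ r := by
      rintro r ⟨x, hx1, rfl⟩
      exact norm_nonneg _
    have master : ∀ u : H, S14.qA A u = 1 →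
        (1/16) * S14.qA A (Pop u) + (1/8) * cA A (Pop ∘L Sop + Sop ∘L Pop) +
          (1/4) * (sInf mset)^2 ≤ wA 𝔸 𝕋 ^ 4 := by
      intro u hu
      set cval : ℂ := sInnerA A ((Pop ∘L Sop + Sop ∘L Pop) u) u with hcval
      set θ' : ℝ := Complex.arg cval with hθ'
      set ζ : ℂ := Complex.exp ((θ' : ℂ) * Complex.I) with hζ
      set e : ℂ := Complex.exp (((θ'/2 : ℝ) : ℂ) * Complex.I) with he_def
      have habs_e : ‖e‖ = 1 := by
        rw [he_def]; exact Complex.norm_exp_ofReal_mul_I _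
      have hnorm_e : ‖e‖ = 1 := by exact habs_e
      have hee : e * e = ζ := by
        rw [he_def, hζ, ← Complex.exp_add]
        congr 1
        push_cast
        ring
      have hce : (starRingEnd ℂ) e * e = 1 := by
        rw [mul_comm, Complex.mul_conj]
        simp [Complex.normSq_eq_norm_sq, habs_e]
      have hec : e * (starRingEnd ℂ) e = 1 := by rw [mul_comm]; exact hce
      have hcc : (starRingEnd ℂ) e * (starRingEnd ℂ) e = (starRingEnd ℂ) ζ := by
        rw [← map_mul, hee]
      -- the vector (0, u) in the product space
      set x : WithLp 2 (H × H) := (WithLp.equiv 2 (H × H)).symm (0, u) with hx_def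
      have hxfst : x.fst = 0 := by rw [hx_def]; rfl
      have hxsnd : x.snd = u := by rw [hx_def]; rfl
      have hqx : S14.qA 𝔸 x = 1 := by
        show (inner ℂ (𝔸 x) x : ℂ).re = 1
        rw [WithLp.prod_inner_apply]; simp only [WithLp.ofLp_fst, WithLp.ofLp_snd]; rw [hAfst, hAsnd, hxfst, hxsnd]
        simpa using hu
      have mainb := S14.main_bound 𝔸 hsymK hposK 𝕋 𝕋s hm1K hm2K e hnorm_e x hqx
      -- compute the components of Hv (Hv x)
      set k1 : H := (2⁻¹ : ℂ) • (e • T₁ u + (starRingEnd ℂ) e • T₂s u) with hk1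
      have hHfst : (S14.Hv 𝕋 𝕋s e x).fst = k1 := by
        rw [S14.Hv, WithLp.smul_fst, WithLp.add_fst, WithLp.smul_fst, WithLp.smul_fst,
          hTfst, hTsfst, hxsnd, hk1]
      have hHsnd : (S14.Hv 𝕋 𝕋s e x).snd = 0 := by
        rw [S14.Hv, WithLp.smul_snd, WithLp.add_snd, WithLp.smul_snd, WithLp.smul_snd,
          hTsnd, hTssnd, hxfst]
        simp
      have hHHfst : (S14.Hv 𝕋 𝕋s e (S14.Hv 𝕋 𝕋s e x)).fst = 0 := by
        rw [S14.Hv, WithLp.smul_fst, WithLp.add_fst, WithLp.smul_fst, WithLp.smul_fst,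
          hTfst, hTsfst, hHsnd]
        simp
      set bigvec : H := (2⁻¹ : ℂ) • (e • T₂ k1 + (starRingEnd ℂ) e • T₁s k1) with hbigvec
      have hHHsnd : (S14.Hv 𝕋 𝕋s e (S14.Hv 𝕋 𝕋s e x)).snd = bigvec := by
        rw [S14.Hv, WithLp.smul_snd, WithLp.add_snd, WithLp.smul_snd, WithLp.smul_snd,
          hTsnd, hTssnd, hHfst, hbigvec]
      have hqKHH : S14.qA 𝔸 (S14.Hv 𝕋 𝕋s e (S14.Hv 𝕋 𝕋s e x)) = S14.qA A bigvec := by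
        show (inner ℂ (𝔸 _) _ : ℂ).re = _
        rw [WithLp.prod_inner_apply]; simp only [WithLp.ofLp_fst, WithLp.ofLp_snd]; rw [hAfst, hAsnd, hHHfst, hHHsnd, Complex.add_re]
        simp [S14.qA]
      -- H-level decomposition
      set hvec : H := ((2 : ℂ)⁻¹ • (ζ • Sop + (starRingEnd ℂ) ζ • Ss)) u with hhvec
      have hhvec' : hvec = (2 : ℂ)⁻¹ • (ζ • Sop u + (starRingEnd ℂ) ζ • Ss u) := by
        rw [hhvec]; simp [smul_apply, add_apply]
      set mainvec : H := ((4⁻¹ : ℝ) : ℂ) • Pop u + ((2⁻¹ : ℝ) : ℂ) • hvec with hmainvec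
      set nullvec : H := ((4 : ℂ)⁻¹ * (starRingEnd ℂ) ζ) • ((T₁s ∘L T₂s) u - Ss u) with hnullvec
      have hsplit : bigvec = mainvec + nullvec := by
        rw [hbigvec, hmainvec, hnullvec, hhvec', hk1]
        simp only [map_smul, map_add, smul_add, smul_smul, hPop, hSop, add_apply,
          comp_apply, sub_eq_add_neg]
        match_scalars <;> push_cast <;>
          first
            | linear_combination (4⁻¹ : ℂ) * hee
            | linear_combination (4⁻¹ : ℂ) * hec
            | linear_combination (4⁻¹ : ℂ) * hce
            | linear_combination (4⁻¹ : ℂ) * hcc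
            | ring
      have hnull : A nullvec = 0 := by
        have hcomp : A ∘L (T₁s ∘L T₂s) = A ∘L Ss := by
          rw [hSs.1, ← comp_assoc, hT₁s.1, comp_assoc, hT₂s.1, adjoint_comp, comp_assoc]
        have h1 : A ((T₁s ∘L T₂s) u) = A (Ss u) := by
          have := congrArg (fun f => f u) hcomp
          simpa using this
        rw [hnullvec, map_smul, map_sub, h1, sub_self, smul_zero]
      have hqbig : S14.qA A bigvec = S14.qA A mainvec := by
        rw [hsplit]
        exact S14.qA_add_null A hsymH mainvec nullvec hnull
      -- expansion of mainvec
      have hmainq : S14.qA A mainvec = (1/16) * S14.qA A (Pop u)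
          + (1/4) * (inner ℂ (A (Pop u)) hvec : ℂ).re + (1/4) * S14.qA A hvec := by
        rw [hmainvec, S14.qA_add A hsymH, S14.qA_smul_real, S14.qA_smul_real]
        have hc : (inner ℂ (A (((4⁻¹ : ℝ) : ℂ) • Pop u)) (((2⁻¹ : ℝ) : ℂ) • hvec) : ℂ)
            = (((4⁻¹ * 2⁻¹ : ℝ)) : ℂ) * inner ℂ (A (Pop u)) hvec := by
          rw [map_smul, inner_smul_left, inner_smul_right, Complex.conj_ofReal]
          try push_cast
          try ring
        rw [hc, Complex.re_ofReal_mul]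
        ring
      -- the cross term
      have hcvals : cval = inner ℂ (A (Pop (Sop u))) u + inner ℂ (A (Sop (Pop u))) u := by
        rw [hcval, sInnerA]
        simp [add_apply, comp_apply, map_add, inner_add_left]
      have hcross : (inner ℂ (A (Pop u)) hvec : ℂ).re = 2⁻¹ * (ζ * (starRingEnd ℂ) cval).re := by
        have hX : (inner ℂ (A (Pop u)) hvec : ℂ)
            = (2 : ℂ)⁻¹ * (ζ * inner ℂ (A (Pop u)) (Sop u)
              + (starRingEnd ℂ) ζ * inner ℂ (A (Pop u)) (Ss u)) := by
          rw [hhvec']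
          rw [inner_smul_right, inner_add_right, inner_smul_right, inner_smul_right]
          try ring
        have h1 : (inner ℂ (A (Pop u)) (Sop u) : ℂ)
            = (starRingEnd ℂ) (inner ℂ (A (Pop (Sop u))) u : ℂ) := by
          rw [mP u (Sop u), S14.conjB A hsymH (Pop (Sop u)) u]
        have h2 : ((starRingEnd ℂ) ζ * inner ℂ (A (Pop u)) (Ss u) : ℂ).re
            = (ζ * (starRingEnd ℂ) (inner ℂ (A (Sop (Pop u))) u : ℂ)).re := by
          have hX2 : (inner ℂ (A (Pop u)) (Ss u) : ℂ)
              = (starRingEnd ℂ) (inner ℂ (A u) (Sop (Pop u)) : ℂ) := by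
            rw [← S14.conjB A hsymH (Ss u) (Pop u), mS u (Pop u), hSop]
          have hc2 : (starRingEnd ℂ) (inner ℂ (A (Sop (Pop u))) u : ℂ)
              = inner ℂ (A u) (Sop (Pop u)) := S14.conjB A hsymH (Sop (Pop u)) u
          rw [hX2, hc2, ← map_mul, Complex.conj_re]
        rw [hX, hcvals]
        have e1 : ((2:ℂ)⁻¹ : ℂ) = ((2⁻¹ : ℝ) : ℂ) := by norm_num
        rw [e1, Complex.re_ofReal_mul, Complex.add_re, h1, h2, map_add]
        simp only [mul_add, Complex.add_re]
        try ring
      -- ζ * conj cval = |cval|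
      have hzeta : ζ * (starRingEnd ℂ) cval = ((‖cval‖ : ℝ) : ℂ) := by
        have habs := Complex.norm_mul_exp_arg_mul_I cval
        have hconj : (starRingEnd ℂ) cval
            = ((‖cval‖ : ℝ) : ℂ) * Complex.exp (-((θ' : ℂ) * Complex.I)) := by
          conv_lhs => rw [← habs]
          rw [map_mul]
          congr 1
          · simp
          · rw [← Complex.exp_conj]
            congr 1
            rw [hθ']
            simp [Complex.conj_I]
            try ring
        rw [hconj, hζ]
        calc Complex.exp ((θ' : ℂ) * Complex.I) *
              (((‖cval‖ : ℝ) : ℂ) * Complex.exp (-((θ' : ℂ) * Complex.I)))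
            = ((‖cval‖ : ℝ) : ℂ) * (Complex.exp ((θ' : ℂ) * Complex.I) *
              Complex.exp (-((θ' : ℂ) * Complex.I))) := by ring
          _ = ((‖cval‖ : ℝ) : ℂ) := by
              rw [← Complex.exp_add, add_neg_cancel, Complex.exp_zero, mul_one]
      have hre_zeta : (ζ * (starRingEnd ℂ) cval).re = ‖cval‖ := by
        rw [hzeta, Complex.ofReal_re]
      have hWineq : 1/16 * S14.qA A (Pop u) + 1/8 * ‖cval‖
          + 1/4 * S14.qA A hvec ≤ wA 𝔸 𝕋 ^ 4 := by
        have hcomb := mainb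
        rw [hqKHH, hqbig, hmainq, hcross, hre_zeta] at hcomb
        linarith
      have hcAle : cA A (Pop ∘L Sop + Sop ∘L Pop) ≤ ‖cval‖ := by
        apply csInf_le ⟨0, fun r hr => hcset_nonneg r hr⟩
        exact ⟨u, (S14.sNormA_eq_one_iff A u).2 hu, rfl⟩
      have hm0 : 0 ≤ sInf mset := Real.sInf_nonneg hmset_nonneg
      have hmle : sInf mset ≤ Real.sqrt (S14.qA A hvec) := by
        apply csInf_le hmset_bdd
        refine ⟨θ', u, (S14.sNormA_eq_one_iff A u).2 hu, ?_⟩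
        rw [hhvec, hζ]
        rfl
      have hmsq : (sInf mset)^2 ≤ S14.qA A hvec := by
        have h1 : (sInf mset)^2 ≤ (Real.sqrt (S14.qA A hvec))^2 := pow_le_pow_left₀ hm0 hmle 2
        rwa [Real.sq_sqrt (hposH hvec)] at h1
      linarith
    obtain ⟨u₀, hu₀⟩ := hexu
    set W := wA 𝔸 𝕋 with hW
    set cterm := cA A (Pop ∘L Sop + Sop ∘L Pop) with hcterm
    set mterm := sInf mset with hmterm
    have hD0 : 0 ≤ W^4 - (1/8) * cterm - (1/4) * mterm^2 := by
      have h1 := master u₀ hu₀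
      have h2 := hposH (Pop u₀)
      linarith
    set D : ℝ := 16 * (W^4 - (1/8) * cterm - (1/4) * mterm^2) with hD
    have hDnn : 0 ≤ D := by rw [hD]; linarith
    have hsup : opNormA A Pop ≤ Real.sqrt D := by
      rw [opNormA]
      apply Real.sSup_le _ (Real.sqrt_nonneg _)
      rintro r ⟨x, hxcl, hx1, rfl⟩
      have hqx := (S14.sNormA_eq_one_iff A x).1 hx1
      have hm := master x hqx
      have hle : S14.qA A (Pop x) ≤ D := by rw [hD]; linarith
      calc sNormA A (Pop x) = Real.sqrt (S14.qA A (Pop x)) := rfl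
        _ ≤ Real.sqrt D := Real.sqrt_le_sqrt hle
    have hop_nonneg : 0 ≤ opNormA A Pop := by
      rw [opNormA]
      apply Real.sSup_nonneg
      rintro r ⟨x, hxcl, hx1, rfl⟩
      exact Real.sqrt_nonneg _
    have hsq : opNormA A Pop ^ 2 ≤ D := by
      have := pow_le_pow_left₀ hop_nonneg hsup 2
      rwa [Real.sq_sqrt hDnn] at this
    rw [hD] at hsq
    linarith
end
end

section
/- Let n ≥ 1 and let T = (T_{ij})_{1≤i,j≤n} be an n×n operator matrix with all entries T_{ij} ∈ B_A(H), acting on the direct sum of n copies of H. Then w_𝔸(diag(T₁₁, T₂₂, …, T_{nn})) ≤ w_𝔸(T), where diag(T₁₁, …, T_{nn}) is the n×n diagonal operator matrix with the diagonal entries of T. -/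
noncomputable section

open ContinuousLinearMap

/-- The `n × n` operator matrix acting blockwise on the Hilbert direct sum of `n` copies of `H`. -/
def blkn {H : Type*} [NormedAddCommGroup H] [InnerProductSpace ℂ H] (n : ℕ)
    (T : Fin n → Fin n → (H →L[ℂ] H)) :
    PiLp 2 (fun _ : Fin n => H) →L[ℂ] PiLp 2 (fun _ : Fin n => H) :=
  ((PiLp.continuousLinearEquiv 2 ℂ (fun _ : Fin n => H)).symm :
      (Fin n → H) →L[ℂ] PiLp 2 (fun _ : Fin n => H)) ∘L
    (ContinuousLinearMap.pi fun i => ∑ j, (T i j) ∘L ContinuousLinearMap.proj j) ∘L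
    ((PiLp.continuousLinearEquiv 2 ℂ (fun _ : Fin n => H)) :
      PiLp 2 (fun _ : Fin n => H) →L[ℂ] (Fin n → H))

/-- The `n × n` diagonal operator matrix `diag (D 0, …, D (n-1))`. -/
def diagn {H : Type*} [NormedAddCommGroup H] [InnerProductSpace ℂ H] (n : ℕ)
    (D : Fin n → (H →L[ℂ] H)) :
    PiLp 2 (fun _ : Fin n => H) →L[ℂ] PiLp 2 (fun _ : Fin n => H) :=
  blkn n (fun i j => if i = j then D i else 0)

section AuxLemmas

variable {E : Type*} [NormedAddCommGroup E] [InnerProductSpace ℂ E]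

lemma sNormA_nonneg (A : E →L[ℂ] E) (x : E) : 0 ≤ sNormA A x := Real.sqrt_nonneg _

lemma sNormA_sq [CompleteSpace E] (A : E →L[ℂ] E) (hA : A.IsPositive) (x : E) :
    sNormA A x ^ 2 = (sInnerA A x x).re := by
  rw [sNormA, Real.sq_sqrt]
  exact hA.re_inner_nonneg_left x

lemma acs [CompleteSpace E] (A : E →L[ℂ] E) (hA : A.IsPositive) (x y : E) :
    ‖(inner ℂ (A x) y : ℂ)‖ ≤ sNormA A x * sNormA A y := by
  letI c : PreInnerProductSpace.Core ℂ E :=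
  { inner := fun u v => inner ℂ (A u) v
    conj_inner_symm := fun u v => by
      rw [inner_conj_symm, ← ContinuousLinearMap.adjoint_inner_left,
        hA.isSelfAdjoint.adjoint_eq]
    re_inner_nonneg := fun u => hA.re_inner_nonneg_left u
    add_left := fun u v w => by simp [inner_add_left]
    smul_left := fun u v r => by simp [inner_smul_left, mul_comm] }
  have h := @InnerProductSpace.Core.inner_mul_inner_self_le ℂ E _ _ _ c x y
  have h' : ‖(inner ℂ (A x) y : ℂ)‖ * ‖(inner ℂ (A y) x : ℂ)‖ ≤
      (inner ℂ (A x) x : ℂ).re * (inner ℂ (A y) y : ℂ).re := h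
  have hsymm : ‖(inner ℂ (A y) x : ℂ)‖ = ‖(inner ℂ (A x) y : ℂ)‖ := by
    rw [← inner_conj_symm, ← ContinuousLinearMap.adjoint_inner_left,
      hA.isSelfAdjoint.adjoint_eq, RCLike.norm_conj]
  rw [hsymm] at h'
  have h2 : ‖(inner ℂ (A x) y : ℂ)‖ ^ 2 ≤ (sNormA A x * sNormA A y) ^ 2 := by
    rw [mul_pow, sNormA_sq A hA, sNormA_sq A hA]
    simpa [sq, sInnerA] using h'
  exact (pow_le_pow_iff_left₀ (norm_nonneg _)
    (mul_nonneg (sNormA_nonneg A x) (sNormA_nonneg A y)) (by norm_num)).mp h2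

lemma exists_sharp [CompleteSpace E] (A T : E →L[ℂ] E) (hT : memBA A T) :
    ∃ L : E →L[ℂ] E, A ∘L L = (adjoint T) ∘L A := by
  classical
  set K : Submodule ℂ E := (LinearMap.ker (A : E →ₗ[ℂ] E))ᗮ with hK
  have hKclosed : IsClosed (K : Set E) := Submodule.isClosed_orthogonal _
  have huniq : ∀ x : E, ∃! y : E, y ∈ K ∧ A y = adjoint T (A x) := by
    intro x
    obtain ⟨y₀, hy₀⟩ := hT ⟨x, rfl⟩
    obtain ⟨k, hk, p, hp, hy₀eq⟩ := (LinearMap.ker (A : E →ₗ[ℂ] E)).exists_add_mem_mem_orthogonal y₀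
    refine ⟨p, ⟨hp, ?_⟩, ?_⟩
    · have : A y₀ = A k + A p := by rw [hy₀eq, map_add]
      rw [(show A k = 0 from LinearMap.mem_ker.mp hk), zero_add] at this
      rw [← this, hy₀]; rfl
    · rintro y ⟨hyK, hyA⟩
      have hker : y - p ∈ LinearMap.ker (A : E →ₗ[ℂ] E) := by
        rw [LinearMap.mem_ker, ContinuousLinearMap.coe_coe, map_sub, hyA]
        have : A p = adjoint T (A x) := by
          have h1 : A y₀ = A k + A p := by rw [hy₀eq, map_add]
          rw [(show A k = 0 from LinearMap.mem_ker.mp hk), zero_add] at h1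
          rw [← h1, hy₀]; rfl
        rw [this, sub_self]
      have horth : y - p ∈ K := Submodule.sub_mem _ hyK hp
      have : y - p = 0 := by
        have := horth (y - p) hker
        exact inner_self_eq_zero.mp this
      rw [sub_eq_zero] at this; exact this
  choose f hf using huniq
  have hfK : ∀ x, f x ∈ K := fun x => (hf x).1.1
  have hfA : ∀ x, A (f x) = adjoint T (A x) := fun x => (hf x).1.2
  have hfuniq : ∀ x y, y ∈ K → A y = adjoint T (A x) → y = f x := fun x y h1 h2 =>
    (hf x).2 y ⟨h1, h2⟩
  have hadd : ∀ x y, f (x + y) = f x + f y := by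
    intro x y
    refine ((hfuniq (x + y) (f x + f y) (K.add_mem (hfK x) (hfK y)) ?_)).symm
    rw [map_add, hfA, hfA, map_add, map_add]
  have hsmul : ∀ (c : ℂ) (x : E), f (c • x) = c • f x := by
    intro c x
    refine ((hfuniq (c • x) (c • f x) (K.smul_mem c (hfK x)) ?_)).symm
    rw [map_smul, hfA, map_smul, map_smul]
  let L₀ : E →ₗ[ℂ] E := { toFun := f, map_add' := hadd, map_smul' := hsmul }
  have hcont : Continuous L₀ := by
    apply L₀.continuous_of_seq_closed_graph
    intro u x y hu hfu
    have hyK : y ∈ K := hKclosed.mem_of_tendsto hfu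
      (Filter.Eventually.of_forall fun n => hfK (u n))
    have h1 : Filter.Tendsto (fun n => A (L₀ (u n))) Filter.atTop (nhds (A y)) :=
      (A.continuous.tendsto y).comp hfu
    have h2 : Filter.Tendsto (fun n => A (L₀ (u n))) Filter.atTop
        (nhds (adjoint T (A x))) := by
      have : (fun n => A (L₀ (u n))) = fun n => (adjoint T) (A (u n)) := by
        funext n; exact hfA (u n)
      rw [this]
      exact (((adjoint T).continuous.comp A.continuous).tendsto x).comp hu
    have hAy : A y = adjoint T (A x) := tendsto_nhds_unique h1 h2
    exact hfuniq x y hyK hAy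
  refine ⟨⟨L₀, hcont⟩, ?_⟩
  ext x
  exact hfA x

lemma sNormA_le_norm [CompleteSpace E] (A : E →L[ℂ] E) (hA : A.IsPositive) (x : E) :
    sNormA A x ≤ Real.sqrt ‖A‖ * ‖x‖ := by
  rw [sNormA]
  have h1 : (sInnerA A x x).re ≤ ‖A‖ * ‖x‖ ^ 2 := by
    have : (sInnerA A x x).re ≤ ‖(sInnerA A x x)‖ := Complex.re_le_norm _
    refine this.trans ?_
    calc ‖(inner ℂ (A x) x : ℂ)‖ ≤ ‖A x‖ * ‖x‖ := norm_inner_le_norm _ _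
      _ ≤ ‖A‖ * ‖x‖ * ‖x‖ := by
          have := A.le_opNorm x
          exact mul_le_mul_of_nonneg_right this (norm_nonneg x)
      _ = ‖A‖ * ‖x‖ ^ 2 := by ring
  refine (Real.sqrt_le_sqrt h1).trans ?_
  rw [Real.sqrt_mul (norm_nonneg A), Real.sqrt_sq (norm_nonneg x)]

lemma snormA_bound [CompleteSpace E] (A : E →L[ℂ] E) (hA : A.IsPositive)
    (T : E →L[ℂ] E) (hT : memBA A T) :
    ∃ M : ℝ, 0 ≤ M ∧ ∀ x, sNormA A (T x) ≤ M * sNormA A x := by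
  obtain ⟨L, hL⟩ := exists_sharp A T hT
  have hL' : adjoint L ∘L A = A ∘L T := by
    have h := congrArg adjoint hL
    rwa [adjoint_comp, adjoint_comp, adjoint_adjoint, hA.isSelfAdjoint.adjoint_eq] at h
  set M : ℝ := max (max ‖T‖ ‖L‖) 1 with hM
  have hM1 : (1:ℝ) ≤ M := le_max_right _ _
  have hM0 : (0:ℝ) < M := lt_of_lt_of_le one_pos hM1
  have hTM : ‖T‖ ≤ M := le_trans (le_max_left _ _) (le_max_left _ _)
  have hLM : ‖L‖ ≤ M := le_trans (le_max_right _ _) (le_max_left _ _)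
  refine ⟨M, hM0.le, fun x => ?_⟩
  let v : ℕ → E := fun k => Nat.rec x (fun k w => if Even k then T w else L w) k
  have hv0 : v 0 = x := rfl
  have hvsucc : ∀ k, v (k + 1) = if Even k then T (v k) else L (v k) := fun k => rfl
  set a : ℕ → ℝ := fun k => sNormA A (v k) with ha
  have ha0 : ∀ k, 0 ≤ a k := fun k => sNormA_nonneg A _
  have hgrow : ∀ k, ‖v k‖ ≤ M ^ k * ‖x‖ := by
    intro k
    induction k with
    | zero => simp [hv0]
    | succ k ih =>
      rw [hvsucc k]
      have hstep : ∀ (S : E →L[ℂ] E), ‖S‖ ≤ M → ‖S (v k)‖ ≤ M ^ (k+1) * ‖x‖ := by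
        intro S hS
        calc ‖S (v k)‖ ≤ ‖S‖ * ‖v k‖ := S.le_opNorm _
          _ ≤ M * (M ^ k * ‖x‖) := by
              apply mul_le_mul hS ih (norm_nonneg _) hM0.le
          _ = M ^ (k+1) * ‖x‖ := by ring
      split
      · exact hstep T hTM
      · exact hstep L hLM
  have hagrow : ∀ k, a k ≤ Real.sqrt ‖A‖ * ‖x‖ * M ^ k := by
    intro k
    calc a k ≤ Real.sqrt ‖A‖ * ‖v k‖ := sNormA_le_norm A hA _
      _ ≤ Real.sqrt ‖A‖ * (M ^ k * ‖x‖) :=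
          mul_le_mul_of_nonneg_left (hgrow k) (Real.sqrt_nonneg _)
      _ = Real.sqrt ‖A‖ * ‖x‖ * M ^ k := by ring
  have hrec : ∀ k, a (k + 1) ^ 2 ≤ a k * a (k + 2) := by
    intro k
    have key : (sInnerA A (v (k+1)) (v (k+1))).re ≤ a k * a (k + 2) := by
      have hswap : (sInnerA A (v (k+1)) (v (k+1))) = inner ℂ (A (v k)) (v (k+2)) := by
        by_cases hk : Even k
        · have h1 : v (k+1) = T (v k) := by rw [hvsucc k, if_pos hk]
          have h2 : v (k+2) = L (v (k+1)) := by
            rw [hvsucc (k+1), if_neg (by simp [Nat.even_add_one, hk])]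
          rw [sInnerA, h1, h2]
          have : A (T (v k)) = adjoint L (A (v k)) := by
            have := congrFun (congrArg DFunLike.coe hL') (v k)
            exact (this).symm
          rw [this, ContinuousLinearMap.adjoint_inner_left, h1]
        · have h1 : v (k+1) = L (v k) := by rw [hvsucc k, if_neg hk]
          have h2 : v (k+2) = T (v (k+1)) := by
            rw [hvsucc (k+1), if_pos (by simp [Nat.even_add_one, hk])]
          rw [sInnerA, h1, h2]
          have : A (L (v k)) = adjoint T (A (v k)) := by
            have := congrFun (congrArg DFunLike.coe hL) (v k)
            exact this
          rw [this, ContinuousLinearMap.adjoint_inner_left, h1]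
      calc (sInnerA A (v (k+1)) (v (k+1))).re
          = (inner ℂ (A (v k)) (v (k+2)) : ℂ).re := by rw [hswap]
        _ ≤ ‖(inner ℂ (A (v k)) (v (k+2)) : ℂ)‖ := Complex.re_le_norm _
        _ ≤ sNormA A (v k) * sNormA A (v (k+2)) := acs A hA _ _
    calc a (k+1) ^ 2 = (sInnerA A (v (k+1)) (v (k+1))).re := sNormA_sq A hA _
      _ ≤ a k * a (k + 2) := key
  have hchain : ∀ k, a 1 * a k ≤ a 0 * a (k + 1) := by
    intro k
    induction k with
    | zero => rw [mul_comm]; norm_num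
    | succ k ih =>
      by_cases hk : a k = 0
      · have : a (k+1) = 0 := by
          have h := hrec k
          rw [hk, zero_mul] at h
          have := pow_eq_zero_iff (n := 2) (by norm_num) |>.mp (le_antisymm h (sq_nonneg _))
          exact this
        rw [this, mul_zero]
        exact mul_nonneg (ha0 0) (ha0 (k+2))
      · have hkpos : 0 < a k := lt_of_le_of_ne (ha0 k) (Ne.symm hk)
        have h1 : a 1 * a (k+1) * a k ≤ a 0 * a (k+2) * a k := by
          calc a 1 * a (k+1) * a k = (a 1 * a k) * a (k+1) := by ring
            _ ≤ (a 0 * a (k+1)) * a (k+1) :=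
                mul_le_mul_of_nonneg_right ih (ha0 (k+1))
            _ = a 0 * a (k+1) ^ 2 := by ring
            _ ≤ a 0 * (a k * a (k+2)) := mul_le_mul_of_nonneg_left (hrec k) (ha0 0)
            _ = a 0 * a (k+2) * a k := by ring
        exact le_of_mul_le_mul_right h1 hkpos
  have hpow : ∀ k, a 1 ^ (k + 1) ≤ a 0 ^ k * a (k + 1) := by
    intro k
    induction k with
    | zero => simp
    | succ k ih =>
      calc a 1 ^ (k+2) = a 1 ^ (k+1) * a 1 := by ring
        _ ≤ (a 0 ^ k * a (k+1)) * a 1 := mul_le_mul_of_nonneg_right ih (ha0 1)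
        _ = a 0 ^ k * (a 1 * a (k+1)) := by ring
        _ ≤ a 0 ^ k * (a 0 * a (k+2)) :=
            mul_le_mul_of_nonneg_left (hchain (k+1)) (pow_nonneg (ha0 0) k)
        _ = a 0 ^ (k+1) * a (k+2) := by ring
  show a 1 ≤ M * a 0
  by_cases h0 : a 0 = 0
  · have h := hrec 0
    rw [h0, zero_mul] at h
    have : a 1 = 0 := pow_eq_zero_iff (n := 2) (by norm_num) |>.mp
      (le_antisymm h (sq_nonneg _))
    rw [this, h0, mul_zero]
  · have h0pos : 0 < a 0 := lt_of_le_of_ne (ha0 0) (Ne.symm h0)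
    by_contra hcon
    push_neg at hcon
    set q : ℝ := a 1 / (M * a 0) with hq
    have hq1 : 1 < q := by
      rw [hq, lt_div_iff₀ (mul_pos hM0 h0pos)]
      linarith
    set C : ℝ := Real.sqrt ‖A‖ * ‖x‖ with hC
    have hqbound : ∀ k : ℕ, q ^ (k + 1) * a 0 ≤ C := by
      intro k
      have ha1 : a 1 = q * (M * a 0) := by
        rw [hq, div_mul_cancel₀]
        exact (mul_pos hM0 h0pos).ne'
      have h1 : a 1 ^ (k+1) ≤ a 0 ^ k * (C * M ^ (k+1)) :=
        (hpow k).trans (mul_le_mul_of_nonneg_left (hagrow (k+1)) (pow_nonneg (ha0 0) k))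
      rw [ha1, mul_pow, mul_pow] at h1
      have hpos : 0 < M ^ (k+1) * a 0 ^ k := by positivity
      have h2 : (q ^ (k+1) * a 0) * (M ^ (k+1) * a 0 ^ k) ≤ C * (M ^ (k+1) * a 0 ^ k) := by
        calc (q ^ (k+1) * a 0) * (M ^ (k+1) * a 0 ^ k)
            = q ^ (k+1) * (M ^ (k+1) * a 0 ^ (k+1)) := by ring
          _ ≤ a 0 ^ k * (C * M ^ (k+1)) := h1
          _ = C * (M ^ (k+1) * a 0 ^ k) := by ring
      exact le_of_mul_le_mul_right h2 hpos
    obtain ⟨k, hk⟩ := pow_unbounded_of_one_lt (C / a 0) hq1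
    have := hqbound k
    have hk' : C / a 0 < q ^ (k+1) := lt_of_lt_of_le hk
      (pow_le_pow_right₀ hq1.le (Nat.le_succ k))
    rw [div_lt_iff₀ h0pos] at hk'
    linarith

end AuxLemmas

section MatrixAux

variable {H : Type*} [NormedAddCommGroup H] [InnerProductSpace ℂ H]

lemma blkn_apply (n : ℕ) (T : Fin n → Fin n → (H →L[ℂ] H))
    (x : PiLp 2 (fun _ : Fin n => H)) (i : Fin n) :
    blkn n T x i = ∑ j, T i j (x j) := by
  simp [blkn, ContinuousLinearMap.proj, ContinuousLinearMap.sum_apply]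

lemma diagn_apply (n : ℕ) (D : Fin n → (H →L[ℂ] H))
    (x : PiLp 2 (fun _ : Fin n => H)) (i : Fin n) :
    diagn n D x i = D i (x i) := by
  rw [diagn, blkn_apply]
  rw [Finset.sum_eq_single i]
  · simp
  · intro j _ hj
    simp [Ne.symm hj]
  · simp

lemma sInnerA_diag (n : ℕ) (A : H →L[ℂ] H) (u v : PiLp 2 (fun _ : Fin n => H)) :
    sInnerA (diagn n fun _ => A) u v = ∑ i, (inner ℂ (A (u i)) (v i) : ℂ) := by
  rw [sInnerA, PiLp.inner_apply]
  refine Finset.sum_congr rfl fun i _ => ?_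
  rw [diagn_apply]

lemma sg_mul_sum (n : ℕ) (i j : Fin n) :
    ∑ ε : Fin n → Bool, ((if ε i then (1:ℝ) else -1) * (if ε j then (1:ℝ) else -1))
      = if i = j then (2:ℝ)^n else 0 := by
  classical
  by_cases hij : i = j
  · subst hij
    rw [if_pos rfl]
    have h1 : ∀ ε : Fin n → Bool,
        ((if ε i then (1:ℝ) else -1) * (if ε i then (1:ℝ) else -1)) = 1 := by
      intro ε; by_cases h : ε i <;> simp [h]
    rw [Finset.sum_congr rfl (fun ε _ => h1 ε), Finset.sum_const, Finset.card_univ]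
    simp [Fintype.card_fun]
  · rw [if_neg hij]
    apply Finset.sum_ninvolution (fun ε => Function.update ε i (!(ε i)))
    · intro ε
      have hji : j ≠ i := fun h => hij h.symm
      rw [Function.update_of_ne hji, Function.update_self]
      by_cases h : ε i <;> by_cases h2 : ε j <;> simp [h, h2]
    · intro ε _
      intro h
      have := congrFun h i
      rw [Function.update_self] at this
      simp at this
    · intro ε; exact Finset.mem_univ _
    · intro ε
      funext m
      by_cases hm : m = i
      · subst hm
        simp [Function.update_self]
      · simp [Function.update_of_ne hm]

end MatrixAux

theorem stmt17 {H : Type*} [NormedAddCommGroup H] [InnerProductSpace ℂ H] [CompleteSpace H]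
    (A : H →L[ℂ] H) (hA : A.IsPositive)
    (n : ℕ) (hn : 1 ≤ n) (T : Fin n → Fin n → (H →L[ℂ] H))
    (hT : ∀ i j, memBA A (T i j)) :
    wA (diagn n fun _ => A) (diagn n fun i => T i i) ≤ wA (diagn n fun _ => A) (blkn n T) := by
  classical
  choose M hM0 hM using fun i j : Fin n => snormA_bound A hA (T i j) (hT i j)
  set 𝔸 : PiLp 2 (fun _ : Fin n => H) →L[ℂ] PiLp 2 (fun _ : Fin n => H) :=
    diagn n fun _ => A with h𝔸
  -- basic facts about unit vectors
  have hunit : ∀ y : PiLp 2 (fun _ : Fin n => H), sNormA 𝔸 y = 1 →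
      (∑ i, (inner ℂ (A (y i)) (y i) : ℂ).re = 1 ∧ ∀ i, sNormA A (y i) ≤ 1) := by
    intro y hy
    have hre : (sInnerA 𝔸 y y).re = 1 := Real.sqrt_eq_one.mp hy
    rw [sInnerA_diag, Complex.re_sum] at hre
    refine ⟨hre, fun i => ?_⟩
    have hterm : ∀ i : Fin n, 0 ≤ (inner ℂ (A (y i)) (y i) : ℂ).re := fun i =>
      hA.re_inner_nonneg_left (y i)
    have hile : (inner ℂ (A (y i)) (y i) : ℂ).re ≤ 1 := by
      rw [← hre]
      exact Finset.single_le_sum (fun j _ => hterm j) (Finset.mem_univ i)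
    rw [sNormA]
    calc Real.sqrt (sInnerA A (y i) (y i)).re ≤ Real.sqrt 1 := Real.sqrt_le_sqrt hile
      _ = 1 := Real.sqrt_one
  -- the wA set of the full matrix is bounded above
  set S2 : Set ℝ := {r | ∃ x, sNormA 𝔸 x = 1 ∧ r = ‖sInnerA 𝔸 (blkn n T x) x‖}
    with hS2
  have hbdd : BddAbove S2 := by
    refine ⟨∑ i, ∑ j, M i j, ?_⟩
    rintro r ⟨y, hy, rfl⟩
    obtain ⟨hre, hle⟩ := hunit y hy
    have hval : sInnerA 𝔸 (blkn n T y) y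
        = ∑ i, ∑ j, (inner ℂ (A (T i j (y j))) (y i) : ℂ) := by
      rw [sInnerA_diag]
      refine Finset.sum_congr rfl fun i _ => ?_
      rw [blkn_apply, map_sum, sum_inner]
    rw [hval]
    calc ‖∑ i, ∑ j, (inner ℂ (A (T i j (y j))) (y i) : ℂ)‖
        ≤ ∑ i, ∑ j, ‖(inner ℂ (A (T i j (y j))) (y i) : ℂ)‖ := by
          refine (norm_sum_le _ _).trans (Finset.sum_le_sum fun i _ => norm_sum_le _ _)
      _ ≤ ∑ i, ∑ j, M i j := by
          refine Finset.sum_le_sum fun i _ => Finset.sum_le_sum fun j _ => ?_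
          calc ‖(inner ℂ (A (T i j (y j))) (y i) : ℂ)‖
              ≤ sNormA A (T i j (y j)) * sNormA A (y i) := acs A hA _ _
            _ ≤ (M i j * sNormA A (y j)) * 1 :=
                mul_le_mul (hM i j (y j)) (hle i) (sNormA_nonneg A _)
                  (mul_nonneg (hM0 i j) (sNormA_nonneg A _))
            _ ≤ (M i j * 1) * 1 := by
                have := mul_le_mul_of_nonneg_left (hle j) (hM0 i j)
                nlinarith [sNormA_nonneg A (y j)]
            _ = M i j := by ring
  have hW0 : 0 ≤ wA 𝔸 (blkn n T) := by
    apply Real.sSup_nonneg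
    rintro r ⟨y, hy, rfl⟩
    exact norm_nonneg _
  apply Real.sSup_le _ hW0
  rintro r ⟨x, hx, rfl⟩
  obtain ⟨hre, hle⟩ := hunit x hx
  set a : Fin n → Fin n → ℂ := fun i j => inner ℂ (A (T i j (x j))) (x i) with haij
  -- the value for the diagonal matrix
  have hdiagval : sInnerA 𝔸 (diagn n (fun i => T i i) x) x = ∑ i, a i i := by
    rw [sInnerA_diag]
    refine Finset.sum_congr rfl fun i _ => ?_
    rw [diagn_apply]
  -- signed vectors
  set sg : (Fin n → Bool) → Fin n → ℝ := fun ε i => if ε i then 1 else -1 with hsg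
  set xε : (Fin n → Bool) → PiLp 2 (fun _ : Fin n => H) :=
    fun ε => WithLp.toLp 2 (fun i => ((sg ε i : ℝ) : ℂ) • x i) with hxε
  have hsgsq : ∀ ε i, ((sg ε i : ℝ) : ℂ) * ((sg ε i : ℝ) : ℂ) = 1 := by
    intro ε i
    by_cases h : ε i <;> simp [hsg, h]
  have hxεnorm : ∀ ε, sNormA 𝔸 (xε ε) = 1 := by
    intro ε
    have : (sInnerA 𝔸 (xε ε) (xε ε)).re = 1 := by
      rw [sInnerA_diag]
      have : ∀ i : Fin n, (inner ℂ (A (xε ε i)) (xε ε i) : ℂ)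
          = inner ℂ (A (x i)) (x i) := by
        intro i
        show (inner ℂ (A (((sg ε i : ℝ) : ℂ) • x i)) (((sg ε i : ℝ) : ℂ) • x i) : ℂ) = _
        rw [map_smul, inner_smul_left, inner_smul_right]
        rw [Complex.conj_ofReal, ← mul_assoc, hsgsq, one_mul]
      rw [Finset.sum_congr rfl fun i _ => this i, Complex.re_sum, hre]
    rw [sNormA, this, Real.sqrt_one]
  have hxεval : ∀ ε, sInnerA 𝔸 (blkn n T (xε ε)) (xε ε)
      = ∑ i, ∑ j, (((sg ε i : ℝ) : ℂ) * ((sg ε j : ℝ) : ℂ)) * a i j := by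
    intro ε
    rw [sInnerA_diag]
    refine Finset.sum_congr rfl fun i _ => ?_
    rw [blkn_apply]
    have : ∀ j : Fin n, T i j (xε ε j) = ((sg ε j : ℝ) : ℂ) • T i j (x j) := by
      intro j
      show T i j (((sg ε j : ℝ) : ℂ) • x j) = _
      rw [map_smul]
    rw [Finset.sum_congr rfl fun j _ => this j, map_sum, sum_inner]
    show  ∑ j, (inner ℂ (A (((sg ε j : ℝ) : ℂ) • T i j (x j))) (((sg ε i : ℝ) : ℂ) • x i) : ℂ) = _
    refine Finset.sum_congr rfl fun j _ => ?_
    rw [map_smul, inner_smul_left, inner_smul_right, Complex.conj_ofReal]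
    ring
  have hterm_le : ∀ ε, ‖sInnerA 𝔸 (blkn n T (xε ε)) (xε ε)‖
      ≤ wA 𝔸 (blkn n T) := by
    intro ε
    exact le_csSup hbdd ⟨xε ε, hxεnorm ε, rfl⟩
  -- averaging identity
  have havg : ∑ ε : Fin n → Bool, (∑ i, ∑ j,
      (((sg ε i : ℝ) : ℂ) * ((sg ε j : ℝ) : ℂ)) * a i j) = (2^n : ℂ) * ∑ i, a i i := by
    rw [Finset.sum_comm]
    have h1 : ∀ i : Fin n, ∑ ε : Fin n → Bool, ∑ j,
        (((sg ε i : ℝ) : ℂ) * ((sg ε j : ℝ) : ℂ)) * a i j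
        = ∑ j, ((∑ ε : Fin n → Bool, sg ε i * sg ε j : ℝ) : ℂ) * a i j := by
      intro i
      rw [Finset.sum_comm]
      refine Finset.sum_congr rfl fun j _ => ?_
      rw [← Finset.sum_mul]
      congr 1
      push_cast
      rfl
    rw [Finset.sum_congr rfl fun i _ => h1 i]
    have h2 : ∀ i j : Fin n, ((∑ ε : Fin n → Bool, sg ε i * sg ε j : ℝ) : ℂ)
        = if i = j then (2:ℂ)^n else 0 := by
      intro i j
      rw [hsg]
      rw [sg_mul_sum n i j]
      split <;> push_cast <;> simp
    rw [Finset.sum_congr rfl fun i _ => Finset.sum_congr rfl fun j _ => by rw [h2 i j]]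
    rw [Finset.mul_sum]
    refine Finset.sum_congr rfl fun i _ => ?_
    rw [Finset.sum_eq_single i]
    · rw [if_pos rfl]
    · intro j _ hj
      rw [if_neg (Ne.symm hj), zero_mul]
    · intro h; exact absurd (Finset.mem_univ i) h
  -- conclude
  rw [hdiagval]
  have hcard : (Finset.univ : Finset (Fin n → Bool)).card = 2^n := by
    rw [Finset.card_univ]
    simp [Fintype.card_fun]
  have hfinal : (2:ℝ)^n * ‖∑ i, a i i‖ ≤ (2:ℝ)^n * wA 𝔸 (blkn n T) := by
    calc (2:ℝ)^n * ‖∑ i, a i i‖ = ‖(2^n : ℂ) * ∑ i, a i i‖ := by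
          rw [norm_mul]
          norm_num
      _ = ‖∑ ε : Fin n → Bool, (∑ i, ∑ j,
            (((sg ε i : ℝ) : ℂ) * ((sg ε j : ℝ) : ℂ)) * a i j)‖ := by rw [havg]
      _ ≤ ∑ ε : Fin n → Bool, ‖∑ i, ∑ j,
            (((sg ε i : ℝ) : ℂ) * ((sg ε j : ℝ) : ℂ)) * a i j‖ := norm_sum_le _ _
      _ ≤ ∑ _ε : Fin n → Bool, wA 𝔸 (blkn n T) := by
          refine Finset.sum_le_sum fun ε _ => ?_
          have := hterm_le ε
          rw [hxεval ε] at this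
          exact this
      _ = (2:ℝ)^n * wA 𝔸 (blkn n T) := by
          rw [Finset.sum_const, hcard, nsmul_eq_mul]
          push_cast
          ring
  have h2n : (0:ℝ) < 2^n := by positivity
  exact le_of_mul_le_mul_left hfinal h2n
end
end
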